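/- arXiv:1804.06146 — 9 statements merged into one kernel-verified Lean document; each statement's English description precedes it below -/
import Mathlib

section
/- Let d ≥ 1, let γ = (γ_1,…,γ_d) be a vector of positive real numbers, and let B ⊆ ℕ^d be a finite nonempty set whose complement ℕ^d \ B is an ideal of ℕ^d (i.e., closed under addition of arbitrary elements of ℕ^d). Then mean(B·γ) ≤ (d/(d+1))·max(B·γ), where mean(B·γ) := (1/#B)·Σ_{b∈B} b·γ and max(B·γ) := max_{b∈B} b·γ. -/
/-- The weight of `m ∈ ℕ^d` with respect to the weight vector `γ`. -/
noncomputable def weight (d : ℕ) (γ : Fin d → ℝ) (m : Fin d → ℕ) : ℝ :=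
  ∑ i, (m i : ℝ) * γ i

lemma weight_update (d : ℕ) (γ : Fin d → ℝ) (b : Fin d → ℕ) (i : Fin d) (k : ℕ) :
    weight d γ (Function.update b i k) = weight d γ b + ((k : ℝ) - (b i : ℝ)) * γ i := by
  unfold weight
  have h : ∀ j : Fin d, ((Function.update b i k j : ℕ) : ℝ) * γ j
      = (b j : ℝ) * γ j + (if j = i then ((k : ℝ) - (b i : ℝ)) * γ i else 0) := by
    intro j
    by_cases hj : j = i
    · subst hj; simp [Function.update_self]; ring
    · simp [Function.update_of_ne hj, hj]
  simp_rw [h, Finset.sum_add_distrib]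
  rw [Finset.sum_ite_eq' Finset.univ i]
  simp

/-- Zhai's Lemma: if `B ⊆ ℕ^d` is finite, nonempty, and its complement is an
`ℕ^d`-ideal, then `mean(B·γ) ≤ d/(d+1) · max(B·γ)`. -/
theorem stmt_0 (d : ℕ) (hd : 1 ≤ d) (γ : Fin d → ℝ) (hγ : ∀ i, 0 < γ i)
    (B : Set (Fin d → ℕ)) (hB : B.Finite) (hBne : B.Nonempty)
    (hIdeal : ∀ x ∉ B, ∀ y : Fin d → ℕ, x + y ∉ B) :
    (B.ncard : ℝ)⁻¹ * ∑ b ∈ hB.toFinset, weight d γ b ≤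
      (d / (d + 1)) * sSup (weight d γ '' B) := by
  classical
  -- B is downward closed
  have hdown : ∀ a b : Fin d → ℕ, (∀ j, a j ≤ b j) → b ∈ B → a ∈ B := by
    intro a b hab hbB
    by_contra haB
    have h := hIdeal a haB (b - a)
    rw [show a + (b - a) = b from funext fun j => Nat.add_sub_cancel' (hab j)] at h
    exact h hbB
  set F := hB.toFinset with hF
  have hFmem : ∀ x : Fin d → ℕ, x ∈ F ↔ x ∈ B := fun x => hB.mem_toFinset
  set M := sSup (weight d γ '' B) with hMdef
  have hbdd : BddAbove (weight d γ '' B) := (hB.image _).bddAbove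
  have hM : ∀ b ∈ B, weight d γ b ≤ M := fun b hb => le_csSup hbdd ⟨b, hb, rfl⟩
  set S := ∑ b ∈ F, weight d γ b with hS
  have hcard : (B.ncard : ℝ) = (F.card : ℝ) := by
    rw [Set.ncard_eq_toFinset_card B hB]
  have hn : 0 < (B.ncard : ℝ) := by
    have := (Set.ncard_pos hB).mpr hBne
    exact_mod_cast this
  -- key inequality per coordinate
  have key : ∀ i : Fin d, ∑ b ∈ F, ((b i : ℝ) * γ i) ≤ (B.ncard : ℝ) * M - S := by
    intro i
    set K : (Fin d → ℕ) → Set ℕ := fun b => {k | Function.update b i k ∈ B} with hK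
    have hKfin : ∀ b, (K b).Finite := by
      intro b
      have : K b = (fun k => Function.update b i k) ⁻¹' B := rfl
      rw [this]
      apply Set.Finite.preimage _ hB
      intro k₁ _ k₂ _ h
      have := congrFun h i
      simpa using this
    have hKmem : ∀ b ∈ B, b i ∈ K b := by
      intro b hb
      simp only [hK, Set.mem_setOf_eq, Function.update_eq_self]
      exact hb
    set t : (Fin d → ℕ) → ℕ := fun b => sSup (K b) with ht
    have htmem : ∀ b ∈ B, t b ∈ K b := fun b hb =>
      Nat.sSup_mem ⟨b i, hKmem b hb⟩ ((hKfin b).bddAbove)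
    have hle : ∀ b ∈ B, b i ≤ t b := fun b hb =>
      le_csSup ((hKfin b).bddAbove) (hKmem b hb)
    set σ : (Fin d → ℕ) → (Fin d → ℕ) := fun b => Function.update b i (t b - b i) with hσ
    have hKσ : ∀ b, K (σ b) = K b := by
      intro b
      ext k
      simp [hK, hσ, Function.update_idem]
    have htσ : ∀ b, t (σ b) = t b := by
      intro b
      simp only [ht]
      rw [hKσ]
    have hσB : ∀ b ∈ B, σ b ∈ B := by
      intro b hb
      refine hdown _ (Function.update b i (t b)) ?_ (htmem b hb)
      intro j
      by_cases hj : j = i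
      · subst hj
        simp only [hσ, Function.update_self]
        omega
      · simp [hσ, Function.update_of_ne hj]
    have hσσ : ∀ b ∈ B, σ (σ b) = b := by
      intro b hb
      simp only [hσ]
      rw [htσ b]
      rw [Function.update_idem, Function.update_self]
      rw [Nat.sub_sub_self (hle b hb), Function.update_eq_self]
    have hwσ : ∀ b ∈ B, (b i : ℝ) * γ i ≤ M - weight d γ (σ b) := by
      intro b hb
      have h1 : weight d γ (Function.update b i (t b)) ≤ M := hM _ (htmem b hb)
      rw [weight_update] at h1
      have h2 : weight d γ (σ b)
          = weight d γ b + (((t b - b i : ℕ) : ℝ) - (b i : ℝ)) * γ i := weight_update d γ b i _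
      have h3 : ((t b - b i : ℕ) : ℝ) = (t b : ℝ) - (b i : ℝ) := by
        exact_mod_cast Nat.cast_sub (hle b hb)
      rw [h2, h3]
      nlinarith [h1]
    have hsum : ∑ b ∈ F, weight d γ (σ b) = S := by
      rw [hS]
      refine Finset.sum_nbij' (i := σ) (j := σ) ?_ ?_ ?_ ?_ ?_
      · intro a ha; exact (hFmem _).2 (hσB a ((hFmem a).1 ha))
      · intro a ha; exact (hFmem _).2 (hσB a ((hFmem a).1 ha))
      · intro a ha; exact hσσ a ((hFmem a).1 ha)
      · intro a ha; exact hσσ a ((hFmem a).1 ha)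
      · intro a ha; rfl
    calc ∑ b ∈ F, ((b i : ℝ) * γ i)
        ≤ ∑ b ∈ F, (M - weight d γ (σ b)) :=
          Finset.sum_le_sum fun b hb => hwσ b ((hFmem b).1 hb)
      _ = (F.card : ℝ) * M - S := by
          rw [Finset.sum_sub_distrib, hsum, Finset.sum_const, nsmul_eq_mul]
      _ = (B.ncard : ℝ) * M - S := by rw [hcard]
  -- sum over coordinates
  have htot : S ≤ (d : ℝ) * ((B.ncard : ℝ) * M - S) := by
    have hSsum : S = ∑ i : Fin d, ∑ b ∈ F, ((b i : ℝ) * γ i) := by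
      rw [hS]
      unfold weight
      rw [Finset.sum_comm]
    conv_lhs => rw [hSsum]
    calc ∑ i : Fin d, ∑ b ∈ F, ((b i : ℝ) * γ i)
        ≤ ∑ _i : Fin d, ((B.ncard : ℝ) * M - S) := Finset.sum_le_sum fun i _ => key i
      _ = (d : ℝ) * ((B.ncard : ℝ) * M - S) := by
          rw [Finset.sum_const, Finset.card_univ, Fintype.card_fin, nsmul_eq_mul]
  -- conclude
  have hd1 : (0 : ℝ) < (d : ℝ) + 1 := by positivity
  rw [inv_mul_le_iff₀ hn]
  rw [div_mul_eq_mul_div, mul_div_assoc']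
  rw [le_div_iff₀ hd1]
  nlinarith [htot, hn]
end

section
/- Let d ≥ 1 and let γ = (γ_1,…,γ_d) be a vector of positive real numbers. For every integer n > 0, h(n,γ) < ((n+1)/n)·(d/(d+1)). -/
/-- `h_j = #{m ∈ ℕ^d | j ≤ m·γ < j+1}`. -/
noncomputable def hcount (d : ℕ) (γ : Fin d → ℝ) (j : ℕ) : ℕ :=
  Set.ncard {m : Fin d → ℕ | (j : ℝ) ≤ weight d γ m ∧ weight d γ m < j + 1}

/-- `h(n,γ) = (Σ_{j=0}^n j·h_j) / (n·Σ_{j=0}^n h_j)`. -/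
noncomputable def hratio (d : ℕ) (γ : Fin d → ℝ) (n : ℕ) : ℝ :=
  (∑ j ∈ Finset.range (n + 1), (j : ℝ) * hcount d γ j) /
    (n * ∑ j ∈ Finset.range (n + 1), (hcount d γ j : ℝ))

namespace Stmt2Aux

variable {d : ℕ} {γ : Fin d → ℝ}

lemma weight_nonneg (hγ : ∀ i, 0 < γ i) (m : Fin d → ℕ) : 0 ≤ weight d γ m :=
  Finset.sum_nonneg fun i _ => mul_nonneg (Nat.cast_nonneg _) (hγ i).le

lemma weight_zero : weight d γ (fun _ => 0) = 0 := by
  simp [weight]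

lemma single_le_weight (hγ : ∀ i, 0 < γ i) (m : Fin d → ℕ) (i : Fin d) :
    (m i : ℝ) * γ i ≤ weight d γ m :=
  Finset.single_le_sum (f := fun j => (m j : ℝ) * γ j)
    (fun j _ => mul_nonneg (Nat.cast_nonneg _) (hγ j).le) (Finset.mem_univ i)

lemma weight_update (m : Fin d → ℕ) (i : Fin d) (k : ℕ) :
    weight d γ (Function.update m i k) = weight d γ m - (m i : ℝ) * γ i + (k : ℝ) * γ i := by
  have hfun : (fun j => ((Function.update m i k j : ℕ) : ℝ) * γ j)
      = Function.update (fun j => (m j : ℝ) * γ j) i ((k : ℝ) * γ i) := by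
    funext j
    rcases eq_or_ne j i with rfl | h
    · simp
    · simp [Function.update_of_ne h]
  unfold weight
  calc ∑ j, ((Function.update m i k j : ℕ) : ℝ) * γ j
      = ∑ j, Function.update (fun j => (m j : ℝ) * γ j) i ((k : ℝ) * γ i) j := by rw [hfun]
    _ = (k : ℝ) * γ i + ∑ j ∈ Finset.univ \ {i}, (m j : ℝ) * γ j :=
        Finset.sum_update_of_mem (Finset.mem_univ i) _ _
    _ = (∑ j, (m j : ℝ) * γ j) - (m i : ℝ) * γ i + (k : ℝ) * γ i := by
        rw [Finset.sum_eq_sum_sdiff_singleton_add (Finset.mem_univ i)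
          (fun j => (m j : ℝ) * γ j)]
        ring

lemma finite_D (hγ : ∀ i, 0 < γ i) (T : ℝ) :
    {m : Fin d → ℕ | weight d γ m < T}.Finite := by
  apply Set.Finite.subset (Set.Finite.pi (t := fun _ : Fin d => Set.Iio ⌈T / γ _⌉₊)
    (fun i => Set.finite_Iio _))
  intro m hm
  intro i _
  simp only [Set.mem_Iio]
  rw [Nat.lt_ceil, lt_div_iff₀ (hγ i)]
  exact lt_of_le_of_lt (single_le_weight hγ m i) hm

lemma coord_lt (hγ : ∀ i, 0 < γ i) {T : ℝ} (hT : 0 < T)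
    (D : Finset (Fin d → ℕ)) (hD : ∀ m, m ∈ D ↔ weight d γ m < T) (i : Fin d) :
    ∑ m ∈ D, (m i : ℝ) * γ i < ∑ m ∈ D, (T - weight d γ m) := by
  classical
  set Z := D.filter (fun m => m i = 0) with hZ
  have hmap : ∀ m ∈ D, Function.update m i 0 ∈ Z := by
    intro m hm
    have hw : weight d γ (Function.update m i 0) = weight d γ m - (m i : ℝ) * γ i := by
      rw [weight_update]; push_cast; ring
    refine Finset.mem_filter.2 ⟨(hD _).2 ?_, Function.update_self _ _ _⟩
    rw [hw]
    have := mul_nonneg (Nat.cast_nonneg (m i) : (0:ℝ) ≤ m i) (hγ i).le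
    have := (hD m).1 hm
    linarith
  rw [← Finset.sum_fiberwise_of_maps_to hmap (fun m => (m i : ℝ) * γ i),
      ← Finset.sum_fiberwise_of_maps_to hmap (fun m => T - weight d γ m)]
  apply Finset.sum_lt_sum_of_nonempty
  · refine ⟨fun _ => 0, Finset.mem_filter.2 ⟨(hD _).2 ?_, rfl⟩⟩
    rw [weight_zero]; exact hT
  intro m' hm'
  obtain ⟨hm'D, hm'i⟩ := Finset.mem_filter.1 hm'
  have hwm' : weight d γ m' < T := (hD _).1 hm'D
  set c := ⌈(T - weight d γ m') / γ i⌉₊ with hc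
  have hwk : ∀ k : ℕ, weight d γ (Function.update m' i k)
      = weight d γ m' + (k : ℝ) * γ i := by
    intro k
    rw [weight_update, hm'i]
    push_cast; ring
  have hfiber : ∀ f : (Fin d → ℕ) → ℝ,
      ∑ m ∈ D.filter (fun m => Function.update m i 0 = m'), f m
        = ∑ k ∈ Finset.range c, f (Function.update m' i k) := by
    intro f
    have hback : ∀ m ∈ D.filter (fun m => Function.update m i 0 = m'),
        Function.update m' i (m i) = m := by
      intro m hm
      obtain ⟨_, hup⟩ := Finset.mem_filter.1 hm
      funext j
      rcases eq_or_ne j i with rfl | h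
      · simp
      · rw [Function.update_of_ne h, ← hup, Function.update_of_ne h]
    apply Finset.sum_nbij' (fun m => m i) (fun k => Function.update m' i k)
    · intro m hm
      obtain ⟨hmD, _⟩ := Finset.mem_filter.1 hm
      have : weight d γ m = weight d γ m' + (m i : ℝ) * γ i := by
        rw [← hwk (m i), hback m hm]
      rw [Finset.mem_range, hc, Nat.lt_ceil, lt_div_iff₀ (hγ i)]
      have := (hD m).1 hmD
      linarith
    · intro k hk
      rw [Finset.mem_range, hc, Nat.lt_ceil, lt_div_iff₀ (hγ i)] at hk
      refine Finset.mem_filter.2 ⟨(hD _).2 ?_, ?_⟩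
      · rw [hwk]; linarith
      · funext j
        rcases eq_or_ne j i with rfl | h
        · simp [hm'i]
        · rw [Function.update_of_ne h, Function.update_of_ne h]
    · exact hback
    · intro k _; simp
    · intro m hm; rw [← hback m hm]; simp
  rw [hfiber (fun m => (m i : ℝ) * γ i), hfiber (fun m => T - weight d γ m)]
  have hc1 : 1 ≤ c := Nat.ceil_pos.2 (div_pos (by linarith) (hγ i))
  have hgauss : (∑ k ∈ Finset.range c, (k : ℝ)) * 2 = (c : ℝ) * ((c : ℝ) - 1) := by
    have h := Finset.sum_range_id_mul_two c
    have : (((∑ k ∈ Finset.range c, k) * 2 : ℕ) : ℝ) = ((c * (c - 1) : ℕ) : ℝ) := by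
      exact_mod_cast congrArg Nat.cast h
    push_cast [Nat.cast_sub hc1] at this
    convert this using 2
  have hcb : ((c : ℝ) - 1) * γ i < T - weight d γ m' := by
    have h1 : c - 1 < c := Nat.sub_lt hc1 one_pos
    have h2 : ((c - 1 : ℕ) : ℝ) < (T - weight d γ m') / γ i := Nat.lt_ceil.1 h1
    rw [Nat.cast_sub hc1] at h2
    rw [← lt_div_iff₀ (hγ i)]
    exact_mod_cast h2
  have hsimp : ∀ k ∈ Finset.range c,
      ((Function.update m' i k) i : ℝ) * γ i = (k : ℝ) * γ i := by
    intro k _; simp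
  rw [Finset.sum_congr rfl hsimp]
  have hrhs : ∀ k ∈ Finset.range c,
      T - weight d γ (Function.update m' i k) = (T - weight d γ m') - (k : ℝ) * γ i := by
    intro k _; rw [hwk]; ring
  rw [Finset.sum_congr rfl hrhs, Finset.sum_sub_distrib, Finset.sum_const,
    Finset.card_range, ← Finset.sum_mul, nsmul_eq_mul]
  set S := ∑ k ∈ Finset.range c, (k : ℝ)
  have hcpos : (0 : ℝ) < c := by exact_mod_cast hc1
  nlinarith [mul_lt_mul_of_pos_left hcb hcpos, mul_pos hcpos (hγ i)]

lemma key (hd : 1 ≤ d) (hγ : ∀ i, 0 < γ i) {T : ℝ} (hT : 0 < T)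
    (D : Finset (Fin d → ℕ)) (hD : ∀ m, m ∈ D ↔ weight d γ m < T) :
    ((d : ℝ) + 1) * ∑ m ∈ D, weight d γ m < d * T * D.card := by
  have hne : (Finset.univ : Finset (Fin d)).Nonempty := ⟨⟨0, hd⟩, Finset.mem_univ _⟩
  have hlt : ∑ i : Fin d, ∑ m ∈ D, (m i : ℝ) * γ i
      < ∑ _i : Fin d, ∑ m ∈ D, (T - weight d γ m) :=
    Finset.sum_lt_sum_of_nonempty hne (fun i _ => coord_lt hγ hT D hD i)
  have hswap : ∑ i : Fin d, ∑ m ∈ D, (m i : ℝ) * γ i = ∑ m ∈ D, weight d γ m := by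
    rw [Finset.sum_comm]; rfl
  have hconst : ∑ _i : Fin d, ∑ m ∈ D, (T - weight d γ m)
      = (d : ℝ) * (T * D.card - ∑ m ∈ D, weight d γ m) := by
    rw [Finset.sum_const, Finset.card_univ, Fintype.card_fin, nsmul_eq_mul,
      Finset.sum_sub_distrib, Finset.sum_const, nsmul_eq_mul]
    ring
  rw [hswap, hconst] at hlt
  nlinarith [hlt]

end Stmt2Aux

theorem stmt_2 (d : ℕ) (hd : 1 ≤ d) (γ : Fin d → ℝ) (hγ : ∀ i, 0 < γ i)
    (n : ℕ) (hn : 0 < n) :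
    hratio d γ n < ((n + 1) / n) * (d / (d + 1)) := by
  classical
  open Stmt2Aux in
  have hT : (0 : ℝ) < (n : ℝ) + 1 := by positivity
  set T : ℝ := (n : ℝ) + 1 with hTdef
  set D : Finset (Fin d → ℕ) := (finite_D hγ T).toFinset with hDdef
  have hD : ∀ m, m ∈ D ↔ weight d γ m < T := by
    intro m; rw [hDdef, Set.Finite.mem_toFinset]; rfl
  have h0D : (fun _ : Fin d => 0) ∈ D := by
    rw [hD, weight_zero]; exact hT
  have hcard : 0 < D.card := Finset.card_pos.2 ⟨_, h0D⟩
  have hmapsto : ∀ m ∈ D, ⌊weight d γ m⌋₊ ∈ Finset.range (n + 1) := by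
    intro m hm
    rw [Finset.mem_range, Nat.floor_lt (weight_nonneg hγ m)]
    push_cast
    exact (hD m).1 hm
  have hcount_eq : ∀ j ≤ n,
      hcount d γ j = (D.filter (fun m => ⌊weight d γ m⌋₊ = j)).card := by
    intro j hj
    unfold hcount
    rw [show {m : Fin d → ℕ | (j : ℝ) ≤ weight d γ m ∧ weight d γ m < j + 1}
        = ↑(D.filter (fun m => ⌊weight d γ m⌋₊ = j)) from ?_, Set.ncard_coe_finset]
    ext m
    simp only [Set.mem_setOf_eq, Finset.coe_filter, hD m]
    constructor
    · rintro ⟨h1, h2⟩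
      have hw0 : (0 : ℝ) ≤ weight d γ m := le_trans (by positivity) h1
      refine ⟨?_, (Nat.floor_eq_iff hw0).2 ⟨h1, h2⟩⟩
      have : (j : ℝ) + 1 ≤ (n : ℝ) + 1 := by
        have : (j : ℝ) ≤ n := by exact_mod_cast hj
        linarith
      rw [hTdef]; linarith
    · rintro ⟨h1, h2⟩
      exact (Nat.floor_eq_iff (weight_nonneg hγ m)).1 h2
  have hB : ∑ j ∈ Finset.range (n + 1), (hcount d γ j : ℝ) = (D.card : ℝ) := by
    rw [Finset.card_eq_sum_card_fiberwise hmapsto]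
    push_cast
    apply Finset.sum_congr rfl
    intro j hj
    rw [hcount_eq j (Nat.lt_succ_iff.1 (Finset.mem_range.1 hj))]
  have hA : ∑ j ∈ Finset.range (n + 1), (j : ℝ) * hcount d γ j
      = ∑ m ∈ D, (⌊weight d γ m⌋₊ : ℝ) := by
    rw [← Finset.sum_fiberwise_of_maps_to hmapsto (fun m => (⌊weight d γ m⌋₊ : ℝ))]
    apply Finset.sum_congr rfl
    intro j hj
    rw [hcount_eq j (Nat.lt_succ_iff.1 (Finset.mem_range.1 hj))]
    rw [Finset.sum_congr rfl (fun m hm => by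
      rw [(Finset.mem_filter.1 hm).2] :
      ∀ m ∈ D.filter (fun m => ⌊weight d γ m⌋₊ = j),
        (⌊weight d γ m⌋₊ : ℝ) = (j : ℝ))]
    rw [Finset.sum_const, nsmul_eq_mul, mul_comm]
  have hfl : ∑ m ∈ D, (⌊weight d γ m⌋₊ : ℝ) ≤ ∑ m ∈ D, weight d γ m :=
    Finset.sum_le_sum (fun m _ => Nat.floor_le (weight_nonneg hγ m))
  have hkey := key hd hγ hT D hD
  unfold hratio
  rw [hA, hB]
  have hnR : (0 : ℝ) < n := by exact_mod_cast hn
  have hcR : (0 : ℝ) < (D.card : ℝ) := by exact_mod_cast hcard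
  rw [div_lt_iff₀ (by positivity)]
  have hd1 : (0 : ℝ) < (d : ℝ) + 1 := by positivity
  have heq : ((n : ℝ) + 1) / n * ((d : ℝ) / (d + 1)) * ((n : ℝ) * D.card)
      = (d : ℝ) * T * D.card / ((d : ℝ) + 1) := by
    rw [hTdef]; field_simp
  rw [heq]
  rw [lt_div_iff₀ hd1]
  calc (∑ m ∈ D, (⌊weight d γ m⌋₊ : ℝ)) * ((d : ℝ) + 1)
      ≤ (∑ m ∈ D, weight d γ m) * ((d : ℝ) + 1) := by
        apply mul_le_mul_of_nonneg_right hfl hd1.le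
    _ < (d : ℝ) * T * D.card := by linarith [hkey]
end

section
/- Let d ≥ 1 and let γ = (γ_1,…,γ_d) be a vector of positive integers. Then for every integer n > 0, h(n,γ) ≤ d/(d+1). -/
theorem stmt_3 (d : ℕ) (hd : 1 ≤ d) (γ : Fin d → ℕ) (hγ : ∀ i, 0 < γ i)
    (n : ℕ) (hn : 0 < n) :
    hratio d (fun i => (γ i : ℝ)) n ≤ d / (d + 1) := by
  classical
  set w : (Fin d → ℕ) → ℕ := fun m => ∑ i, m i * γ i with hw
  set Δ : Finset (Fin d → ℕ) :=
    (Fintype.piFinset fun _ : Fin d => Finset.range (n+1)).filter (fun m => w m ≤ n) with hΔ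
  have mem_Δ : ∀ m, m ∈ Δ ↔ w m ≤ n := by
    intro m
    simp only [hΔ, Finset.mem_filter, Fintype.mem_piFinset, Finset.mem_range]
    constructor
    · rintro ⟨-, h⟩; exact h
    · intro h
      refine ⟨fun i => ?_, h⟩
      have h1 : m i * γ i ≤ w m :=
        Finset.single_le_sum (f := fun i => m i * γ i) (fun _ _ => Nat.zero_le _)
          (Finset.mem_univ i)
      have h2 : m i ≤ m i * γ i := Nat.le_mul_of_pos_right _ (hγ i)
      omega
  -- key per-coordinate inequality
  have key : ∀ i : Fin d, (∑ m ∈ Δ, m i * γ i) ≤ ∑ m ∈ Δ, (n - w m) := by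
    intro i
    set r : (Fin d → ℕ) → ℕ := fun m => ∑ j ∈ Finset.univ.erase i, m j * γ j with hr
    have hwr : ∀ m, w m = m i * γ i + r m := by
      intro m
      exact (Finset.add_sum_erase _ (fun j => m j * γ j) (Finset.mem_univ i)).symm
    set K : (Fin d → ℕ) → ℕ := fun m => (n - r m) / γ i with hK
    set σ : (Fin d → ℕ) → (Fin d → ℕ) := fun m => Function.update m i (K m - m i) with hσ
    have hr_update : ∀ m t, r (Function.update m i t) = r m := by
      intro m t
      refine Finset.sum_congr rfl fun j hj => ?_
      rw [Function.update_of_ne (Finset.ne_of_mem_erase hj)]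
    have hK_update : ∀ m t, K (Function.update m i t) = K m := by
      intro m t; simp only [hK, hr_update]
    have hmiK : ∀ m ∈ Δ, m i ≤ K m := by
      intro m hm
      have h1 : w m ≤ n := (mem_Δ m).1 hm
      have h2 : m i * γ i ≤ n - r m := by have := hwr m; omega
      exact (Nat.le_div_iff_mul_le (hγ i)).2 h2
    have hσval : ∀ m, σ m i = K m - m i := by
      intro m; simp [hσ]
    have hwσ : ∀ m, w (σ m) = (K m - m i) * γ i + r m := by
      intro m
      rw [hwr (σ m), hσval, hσ]
      simp [hr_update]
    have hKγ : ∀ m, K m * γ i ≤ n - r m := fun m => Nat.div_mul_le_self _ _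
    have hσΔ : ∀ m ∈ Δ, σ m ∈ Δ := by
      intro m hm
      rw [mem_Δ, hwσ]
      have h1 : (K m - m i) * γ i ≤ K m * γ i := Nat.mul_le_mul_right _ (Nat.sub_le _ _)
      have h2 := hKγ m
      have h3 : r m ≤ w m := by have := hwr m; omega
      have h4 : w m ≤ n := (mem_Δ m).1 hm
      omega
    have hσσ : ∀ m ∈ Δ, σ (σ m) = m := by
      intro m hm
      funext j
      by_cases hj : j = i
      · subst hj
        rw [hσval, hK_update, hσval]
        have := hmiK m hm
        omega
      · simp only [hσ]
        rw [Function.update_of_ne hj, Function.update_of_ne hj]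
    have hsum_eq : (∑ m ∈ Δ, m i * γ i) = ∑ m ∈ Δ, (K m - m i) * γ i := by
      refine Finset.sum_nbij' (i := σ) (j := σ) hσΔ hσΔ hσσ hσσ ?_
      intro m hm
      rw [hσval, hK_update]
      have := hmiK m hm
      congr 1
      omega
    rw [hsum_eq]
    refine Finset.sum_le_sum fun m hm => ?_
    have h2 := hKγ m
    calc (K m - m i) * γ i = K m * γ i - m i * γ i := Nat.sub_mul _ _ _
      _ ≤ (n - r m) - m i * γ i := Nat.sub_le_sub_right h2 _
      _ = n - (m i * γ i + r m) := by rw [Nat.sub_sub, Nat.add_comm]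
      _ = n - w m := by rw [← hwr m]
  -- main combinatorial inequality
  set W : ℕ := ∑ m ∈ Δ, w m with hW
  set N : ℕ := Δ.card with hN
  have hwle : ∀ m ∈ Δ, w m ≤ n := fun m hm => (mem_Δ m).1 hm
  have hWS : W + (∑ m ∈ Δ, (n - w m)) = n * N := by
    rw [hW, ← Finset.sum_add_distrib]
    have : ∀ m ∈ Δ, w m + (n - w m) = n := by intro m hm; have := hwle m hm; omega
    rw [Finset.sum_congr rfl this, Finset.sum_const, hN, smul_eq_mul, mul_comm]
  have hWd : W ≤ d * (∑ m ∈ Δ, (n - w m)) := by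
    have h1 : W = ∑ i : Fin d, ∑ m ∈ Δ, m i * γ i := by
      rw [hW]
      exact Finset.sum_comm
    rw [h1]
    calc ∑ i : Fin d, ∑ m ∈ Δ, m i * γ i
        ≤ ∑ _i : Fin d, ∑ m ∈ Δ, (n - w m) := Finset.sum_le_sum fun i _ => key i
      _ = d * ∑ m ∈ Δ, (n - w m) := by
          rw [Finset.sum_const, Finset.card_univ, Fintype.card_fin, smul_eq_mul]
  have main : W * (d + 1) ≤ d * (n * N) := by nlinarith [hWS, hWd]
  -- identify hcount with fiber cardinalities
  have hcount_eq : ∀ j ∈ Finset.range (n+1),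
      hcount d (fun i => (γ i : ℝ)) j = (Δ.filter fun m => w m = j).card := by
    intro j hj
    rw [Finset.mem_range, Nat.lt_succ_iff] at hj
    have hset : {m : Fin d → ℕ | (j : ℝ) ≤ weight d (fun i => (γ i : ℝ)) m ∧
        weight d (fun i => (γ i : ℝ)) m < j + 1} = ↑(Δ.filter fun m => w m = j) := by
      ext m
      have hcast : weight d (fun i => (γ i : ℝ)) m = (w m : ℝ) := by
        rw [weight, hw]
        push_cast
        rfl
      simp only [Set.mem_setOf_eq, Finset.coe_filter, mem_Δ, hcast]
      constructor
      · rintro ⟨h1, h2⟩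
        have h1' : j ≤ w m := by exact_mod_cast h1
        have h2' : (w m : ℝ) < ((j + 1 : ℕ) : ℝ) := by push_cast; linarith
        have h2'' : w m < j + 1 := by exact_mod_cast h2'
        have : w m = j := by omega
        exact ⟨by omega, this⟩
      · rintro ⟨-, h⟩
        rw [h]
        constructor
        · exact le_refl _
        · norm_num
    rw [hcount, hset, Set.ncard_coe_finset]
  -- sums over j
  have hmapsto : ∀ m ∈ Δ, w m ∈ Finset.range (n+1) := by
    intro m hm; rw [Finset.mem_range, Nat.lt_succ_iff]; exact hwle m hm
  have hNsum : ∑ j ∈ Finset.range (n+1), (hcount d (fun i => (γ i : ℝ)) j : ℝ) = (N : ℝ) := by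
    rw [show (N : ℝ) = ((N : ℕ) : ℝ) from rfl]
    norm_cast
    rw [Finset.sum_congr rfl hcount_eq, hN]
    exact (Finset.card_eq_sum_card_fiberwise hmapsto).symm
  have hWsum : ∑ j ∈ Finset.range (n+1), (j : ℝ) * (hcount d (fun i => (γ i : ℝ)) j : ℝ)
      = (W : ℝ) := by
    have hnat : ∑ j ∈ Finset.range (n+1), j * (Δ.filter fun m => w m = j).card = W := by
      rw [hW, ← Finset.sum_fiberwise_of_maps_to hmapsto w]
      refine Finset.sum_congr rfl fun j _ => ?_
      rw [Finset.sum_congr rfl (fun m hm => (Finset.mem_filter.1 hm).2), Finset.sum_const,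
        smul_eq_mul, mul_comm]
    rw [Finset.sum_congr rfl fun j hj => by rw [hcount_eq j hj]]
    push_cast [← hnat]
    rfl
  -- conclude
  rw [hratio, hNsum, hWsum]
  have hNpos : 0 < N := by
    rw [hN]
    refine Finset.card_pos.2 ⟨fun _ => 0, ?_⟩
    rw [mem_Δ]
    simp [hw]
  have hden : (0 : ℝ) < n * N := by positivity
  rw [div_le_div_iff₀ hden (by positivity)]
  exact_mod_cast main
end

section
/- For d = 2, n = 4 and γ = (12/8, 13/8), one has h(4, γ) = 27/40, which is strictly greater than d/(d+1) = 2/3. Hence the bound h(n,γ) ≤ d/(d+1) can fail for non-integral weight vectors γ. -/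
lemma key (j : ℕ) (m : Fin 2 → ℕ) :
    ((j : ℝ) ≤ weight 2 ![12 / 8, 13 / 8] m ∧ weight 2 ![12 / 8, 13 / 8] m < j + 1) ↔
    (8 * j ≤ 12 * m 0 + 13 * m 1 ∧ 12 * m 0 + 13 * m 1 < 8 * j + 8) := by
  have hw : weight 2 ![12 / 8, 13 / 8] m = ((12 * m 0 + 13 * m 1 : ℕ) : ℝ) / 8 := by
    simp [weight, Fin.sum_univ_two]
    ring
  rw [hw, le_div_iff₀ (by norm_num : (0:ℝ) < 8), div_lt_iff₀ (by norm_num : (0:ℝ) < 8)]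
  constructor
  · rintro ⟨h1, h2⟩
    push_cast at h1 h2
    have h1' : 8 * (j : ℝ) ≤ 12 * (m 0 : ℝ) + 13 * (m 1 : ℝ) := by linarith
    have h2' : 12 * (m 0 : ℝ) + 13 * (m 1 : ℝ) < 8 * (j : ℝ) + 8 := by linarith
    exact ⟨by exact_mod_cast h1', by exact_mod_cast h2'⟩
  · rintro ⟨h1, h2⟩
    have h1' : 8 * (j : ℝ) ≤ 12 * (m 0 : ℝ) + 13 * (m 1 : ℝ) := by exact_mod_cast h1
    have h2' : 12 * (m 0 : ℝ) + 13 * (m 1 : ℝ) < 8 * (j : ℝ) + 8 := by exact_mod_cast h2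
    constructor <;> push_cast <;> linarith

lemma hcount_eq (j : ℕ) (s : Finset (Fin 2 → ℕ))
    (hs : ∀ m : Fin 2 → ℕ,
      (8 * j ≤ 12 * m 0 + 13 * m 1 ∧ 12 * m 0 + 13 * m 1 < 8 * j + 8) ↔ m ∈ s) :
    hcount 2 ![12 / 8, 13 / 8] j = s.card := by
  rw [hcount]
  have h : {m : Fin 2 → ℕ | (j : ℝ) ≤ weight 2 ![12 / 8, 13 / 8] m ∧
      weight 2 ![12 / 8, 13 / 8] m < j + 1} = ↑s := by
    ext m
    rw [Set.mem_setOf_eq, key, Finset.mem_coe]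
    exact hs m
  rw [h, Set.ncard_coe_finset]

theorem stmt_4 :
    hratio 2 ![12 / 8, 13 / 8] 4 = 27 / 40 ∧ (27 / 40 : ℝ) > 2 / (2 + 1) := by
  have h0 : hcount 2 ![12 / 8, 13 / 8] 0 = 1 := by
    rw [hcount_eq 0 {![0, 0]}]
    · decide
    · intro m
      simp only [Finset.mem_singleton, funext_iff, Fin.forall_fin_two,
        Matrix.cons_val_zero, Matrix.cons_val_one, Matrix.head_cons]
      omega
  have h1 : hcount 2 ![12 / 8, 13 / 8] 1 = 2 := by
    rw [hcount_eq 1 {![1, 0], ![0, 1]}]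
    · decide
    · intro m
      simp only [Finset.mem_insert, Finset.mem_singleton, funext_iff, Fin.forall_fin_two,
        Matrix.cons_val_zero, Matrix.cons_val_one, Matrix.head_cons]
      omega
  have h2 : hcount 2 ![12 / 8, 13 / 8] 2 = 0 := by
    rw [hcount_eq 2 ∅]
    · decide
    · intro m
      simp only [Finset.notMem_empty, iff_false, not_and, not_lt]
      intro h
      rcases h1 : m 1 with _ | _ | b <;> rcases h0 : m 0 with _ | _ | a <;> omega
  have h3 : hcount 2 ![12 / 8, 13 / 8] 3 = 3 := by
    rw [hcount_eq 3 {![2, 0], ![1, 1], ![0, 2]}]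
    · decide
    · intro m
      simp only [Finset.mem_insert, Finset.mem_singleton, funext_iff, Fin.forall_fin_two,
        Matrix.cons_val_zero, Matrix.cons_val_one, Matrix.head_cons]
      omega
  have h4 : hcount 2 ![12 / 8, 13 / 8] 4 = 4 := by
    rw [hcount_eq 4 {![3, 0], ![2, 1], ![1, 2], ![0, 3]}]
    · decide
    · intro m
      simp only [Finset.mem_insert, Finset.mem_singleton, funext_iff, Fin.forall_fin_two,
        Matrix.cons_val_zero, Matrix.cons_val_one, Matrix.head_cons]
      omega
  constructor
  · rw [hratio]
    rw [Finset.sum_range_succ, Finset.sum_range_succ, Finset.sum_range_succ,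
      Finset.sum_range_succ, Finset.sum_range_one,
      Finset.sum_range_succ, Finset.sum_range_succ, Finset.sum_range_succ,
      Finset.sum_range_succ, Finset.sum_range_one, h0, h1, h2, h3, h4]
    norm_num
  · norm_num
end

section
/- Let d ≥ 1 and let γ = (γ_1,…,γ_d) be any vector of positive real numbers. Then lim_{n→∞} h(n,γ) = d/(d+1). -/
namespace Stmt5Aux

open Filter Finset

/-- The set of lattice points of weight `< t`. -/
def Sset (d : ℕ) (γ : Fin d → ℝ) (t : ℝ) : Set (Fin d → ℕ) := {m | weight d γ m < t}

/-- The number of lattice points of weight `< t`. -/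
noncomputable def Ncnt (d : ℕ) (γ : Fin d → ℝ) (t : ℝ) : ℕ := (Sset d γ t).ncard

variable {d : ℕ} {γ : Fin d → ℝ}

theorem weight_nonneg (hγ : ∀ i, 0 < γ i) (m : Fin d → ℕ) : 0 ≤ weight d γ m := by
  exact Finset.sum_nonneg fun i _ => mul_nonneg (Nat.cast_nonneg _) (hγ i).le

theorem single_le_weight (hγ : ∀ i, 0 < γ i) (m : Fin d → ℕ) (i : Fin d) :
    (m i : ℝ) * γ i ≤ weight d γ m := by
  exact Finset.single_le_sum (fun j _ => mul_nonneg (Nat.cast_nonneg _) (hγ j).le)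
    (Finset.mem_univ i)

theorem Sfin (hγ : ∀ i, 0 < γ i) (t : ℝ) : (Sset d γ t).Finite := by
  apply Set.Finite.subset (Set.Finite.pi (fun i : Fin d => Set.finite_Iic (⌈t / γ i⌉₊)))
  intro m hm
  simp only [Set.mem_pi, Set.mem_univ, Set.mem_Iic, forall_true_left]
  intro i
  have h1 : (m i : ℝ) * γ i < t := lt_of_le_of_lt (single_le_weight hγ m i) hm
  have h2 : (m i : ℝ) ≤ t / γ i := (le_div_iff₀ (hγ i)).2 h1.le
  exact_mod_cast h2.trans (Nat.le_ceil _)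

theorem Nmono (hγ : ∀ i, 0 < γ i) {s t : ℝ} (h : s ≤ t) : Ncnt d γ s ≤ Ncnt d γ t := by
  apply Set.ncard_le_ncard _ (Sfin hγ t)
  intro m hm
  exact lt_of_lt_of_le hm h

theorem Npos (hγ : ∀ i, 0 < γ i) {t : ℝ} (ht : 0 < t) : 1 ≤ Ncnt d γ t := by
  have hne : (Sset d γ t).Nonempty := ⟨fun _ => 0, by simp [Sset, weight, ht]⟩
  exact (Set.ncard_pos (Sfin hγ t)).2 hne

/-- The partition identity `Σ_{j=0}^n h_j = N(n+1)`. -/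
theorem hsum (hγ : ∀ i, 0 < γ i) (n : ℕ) :
    ∑ j ∈ Finset.range (n + 1), hcount d γ j = Ncnt d γ (n + 1) := by
  induction n with
  | zero =>
    simp only [zero_add, Finset.range_one, Finset.sum_singleton]
    unfold hcount Ncnt Sset
    congr 1
    ext m
    simp only [Set.mem_setOf_eq, Nat.cast_zero, zero_add, Nat.cast_ofNat]
    exact ⟨fun h => by linarith [h.2], fun h => ⟨weight_nonneg hγ m, by push_cast; linarith⟩⟩
  | succ n ih =>
    rw [Finset.sum_range_succ, ih]
    have hset : Sset d γ ((n + 1 : ℕ) + 1)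
        = Sset d γ ((n : ℝ) + 1)
          ∪ {m | ((n + 1 : ℕ) : ℝ) ≤ weight d γ m ∧ weight d γ m < (n + 1 : ℕ) + 1} := by
      ext m
      simp only [Sset, Set.mem_setOf_eq, Set.mem_union]
      push_cast
      constructor
      · intro h
        rcases lt_or_ge (weight d γ m) ((n : ℝ) + 1) with h' | h'
        · exact Or.inl h'
        · exact Or.inr ⟨h', h⟩
      · rintro (h | ⟨_, h⟩)
        · linarith
        · linarith
    have hdisj : Disjoint (Sset d γ ((n : ℝ) + 1))
        {m : Fin d → ℕ | ((n + 1 : ℕ) : ℝ) ≤ weight d γ m ∧ weight d γ m < (n + 1 : ℕ) + 1} := by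
      rw [Set.disjoint_left]
      rintro m hm ⟨h1, _⟩
      rw [Sset, Set.mem_setOf_eq] at hm
      push_cast at h1
      linarith
    have hfin2 : {m : Fin d → ℕ | ((n + 1 : ℕ) : ℝ) ≤ weight d γ m
        ∧ weight d γ m < (n + 1 : ℕ) + 1}.Finite := by
      apply (Sfin hγ (((n : ℝ) + 1) + 1)).subset
      rintro m ⟨_, h⟩
      rw [Sset, Set.mem_setOf_eq]
      push_cast at h ⊢
      linarith
    show Ncnt d γ ((n : ℝ) + 1) + hcount d γ (n + 1) = Ncnt d γ (((n : ℕ) + 1 : ℕ) + 1)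
    unfold Ncnt hcount
    rw [hset, Set.ncard_union_eq hdisj (Sfin hγ _) hfin2]

/-- Submultiplicativity: `N(l·t) ≤ l^d · N(t)`. -/
theorem Nscale (hγ : ∀ i, 0 < γ i) (l t : ℕ) (hl : 1 ≤ l) :
    Ncnt d γ ((l * t : ℕ) : ℝ) ≤ l ^ d * Ncnt d γ t := by
  have hl0 : 0 < l := hl
  have hfinS : (Sset d γ (t : ℝ)).Finite := Sfin hγ t
  haveI := hfinS.to_subtype
  have hmem : ∀ m : Fin d → ℕ, m ∈ Sset d γ ((l * t : ℕ) : ℝ) →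
      (fun i => m i / l) ∈ Sset d γ (t : ℝ) := by
    intro m hm
    rw [Sset, Set.mem_setOf_eq] at hm ⊢
    have h1 : weight d γ (fun i => m i / l) ≤ weight d γ m / l := by
      rw [weight, weight, Finset.sum_div]
      apply Finset.sum_le_sum
      intro i _
      rw [mul_div_right_comm]
      exact mul_le_mul_of_nonneg_right (Nat.cast_div_le) (hγ i).le
    have h2 : weight d γ m / l < t := by
      rw [div_lt_iff₀ (by exact_mod_cast hl0 : (0:ℝ) < l)]
      push_cast at hm ⊢
      linarith [hm]
    exact lt_of_le_of_lt h1 h2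
  set f : Sset d γ ((l * t : ℕ) : ℝ) → (Sset d γ (t : ℝ)) × (Fin d → Fin l) :=
    fun m => (⟨fun i => m.1 i / l, hmem m.1 m.2⟩, fun i => ⟨m.1 i % l, Nat.mod_lt _ hl0⟩)
  have hinj : Function.Injective f := by
    rintro ⟨a, ha⟩ ⟨b, hb⟩ hab
    simp only [f, Prod.mk.injEq, Subtype.mk.injEq] at hab
    ext i
    have h1 : a i / l = b i / l := congrFun hab.1 i
    have h2 : a i % l = b i % l := congrArg Fin.val (congrFun hab.2 i)
    show a i = b i
    rw [← Nat.div_add_mod (a i) l, ← Nat.div_add_mod (b i) l, h1, h2]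
  have hcard := Nat.card_le_card_of_injective f hinj
  rw [Nat.card_prod, Nat.card_coe_set_eq, Nat.card_coe_set_eq] at hcard
  have : Nat.card (Fin d → Fin l) = l ^ d := by
    simp [Nat.card_eq_fintype_card]
  rw [this] at hcard
  calc Ncnt d γ ((l * t : ℕ) : ℝ) ≤ Ncnt d γ t * l ^ d := hcard
  _ = l ^ d * Ncnt d γ t := mul_comm _ _

/-- Upper bound for `N(t)`. -/
theorem Nupper (hγ : ∀ i, 0 < γ i) (t : ℝ) (ht : 0 < t) :
    (Ncnt d γ t : ℝ) ≤ ∏ i, (t / γ i + 1) := by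
  have hfin := Sfin hγ t
  haveI := hfin.to_subtype
  have hmem : ∀ m : Fin d → ℕ, m ∈ Sset d γ t → ∀ i, m i < ⌊t / γ i⌋₊ + 1 := by
    intro m hm i
    have h1 : (m i : ℝ) * γ i < t := lt_of_le_of_lt (single_le_weight hγ m i) hm
    have h2 : (m i : ℝ) ≤ t / γ i := (le_div_iff₀ (hγ i)).2 h1.le
    exact Nat.lt_succ_of_le (Nat.le_floor h2)
  set f : Sset d γ t → ∀ i : Fin d, Fin (⌊t / γ i⌋₊ + 1) :=
    fun m => fun i => ⟨m.1 i, hmem m.1 m.2 i⟩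
  have hinj : Function.Injective f := by
    rintro ⟨a, ha⟩ ⟨b, hb⟩ hab
    ext i
    exact congrArg Fin.val (congrFun hab i)
  have hcard := Nat.card_le_card_of_injective f hinj
  rw [Nat.card_coe_set_eq, Nat.card_pi] at hcard
  simp only [Nat.card_eq_fintype_card, Fintype.card_fin] at hcard
  calc (Ncnt d γ t : ℝ) ≤ ((∏ i, (⌊t / γ i⌋₊ + 1) : ℕ) : ℝ) := by exact_mod_cast hcard
  _ = ∏ i, ((⌊t / γ i⌋₊ : ℝ) + 1) := by push_cast; rfl
  _ ≤ ∏ i, (t / γ i + 1) := by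
      apply Finset.prod_le_prod
      · intro i _; exact add_nonneg (Nat.cast_nonneg _) zero_le_one
      · intro i _
        have : (⌊t / γ i⌋₊ : ℝ) ≤ t / γ i := Nat.floor_le (div_nonneg ht.le (hγ i).le)
        linarith

/-- Lower bound for `N(t)`. -/
theorem Nlower (hd : 1 ≤ d) (hγ : ∀ i, 0 < γ i) :
    ∃ c1 : ℝ, 0 < c1 ∧ ∀ᶠ n : ℕ in atTop, c1 * (n : ℝ) ^ d ≤ (Ncnt d γ n : ℝ) := by
  haveI : NeZero d := ⟨by omega⟩
  have hd' : (0 : ℝ) < d := by exact_mod_cast Nat.lt_of_lt_of_le Nat.zero_lt_one hd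
  set G : ℝ := ∑ i, γ i with hGdef
  have hγG : ∀ i, γ i ≤ G :=
    fun i => Finset.single_le_sum (fun j _ => (hγ j).le) (Finset.mem_univ i)
  have hc1pos : ∀ i : Fin d, (0 : ℝ) < 1 / (2 * d * γ i) :=
    fun i => one_div_pos.2 (by have := hγ i; positivity)
  refine ⟨∏ i, 1 / (2 * d * γ i), Finset.prod_pos (fun i _ => hc1pos i), ?_⟩
  have hev : ∀ᶠ n : ℕ in atTop, 2 * d * G ≤ (n : ℝ) :=
    tendsto_natCast_atTop_atTop.eventually_ge_atTop _
  filter_upwards [hev] with n hn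
  have hn0 : (0 : ℝ) < n := by
    have : (0 : ℝ) < 2 * d * G := by
      have : 0 < G := lt_of_lt_of_le (hγ ⟨0, by omega⟩) (hγG _)
      positivity
    linarith
  set K : Fin d → ℕ := fun i => ⌊(n : ℝ) / (d * γ i)⌋₊ with hKdef
  -- the injection from the box into the simplex
  have hmem : ∀ a : ∀ i, Fin (K i), (fun i => (a i : ℕ)) ∈ Sset d γ (n : ℝ) := by
    intro a
    rw [Sset, Set.mem_setOf_eq, weight]
    have h1 : ∑ i, ((a i : ℕ) : ℝ) * γ i < ∑ i, (K i : ℝ) * γ i := by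
      apply Finset.sum_lt_sum_of_nonempty Finset.univ_nonempty
      intro i _
      apply mul_lt_mul_of_pos_right _ (hγ i)
      exact_mod_cast (a i).isLt
    have h2 : ∑ i, (K i : ℝ) * γ i ≤ (n : ℝ) := by
      have hterm : ∀ i : Fin d, (K i : ℝ) * γ i ≤ (n : ℝ) / d := by
        intro i
        have hfl : (K i : ℝ) ≤ (n : ℝ) / (d * γ i) :=
          Nat.floor_le (by have := hγ i; positivity)
        calc (K i : ℝ) * γ i ≤ (n : ℝ) / (d * γ i) * γ i :=
              mul_le_mul_of_nonneg_right hfl (hγ i).le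
        _ = (n : ℝ) / d := by
            have h1 := (hγ i).ne'
            field_simp
      calc ∑ i, (K i : ℝ) * γ i ≤ ∑ _i : Fin d, (n : ℝ) / d :=
            Finset.sum_le_sum (fun i _ => hterm i)
      _ = d * ((n : ℝ) / d) := by
          rw [Finset.sum_const, Finset.card_univ, Fintype.card_fin, nsmul_eq_mul]
      _ = (n : ℝ) := by field_simp
    linarith
  set f : (∀ i, Fin (K i)) → Sset d γ (n : ℝ) := fun a => ⟨fun i => (a i : ℕ), hmem a⟩
  have hinj : Function.Injective f := by
    intro a b hab
    funext i
    exact Fin.ext (congrArg (fun g => g i) (congrArg Subtype.val hab))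
  haveI := (Sfin hγ (n : ℝ)).to_subtype
  have hcard := Nat.card_le_card_of_injective f hinj
  rw [Nat.card_coe_set_eq, Nat.card_pi] at hcard
  simp only [Nat.card_eq_fintype_card, Fintype.card_fin] at hcard
  have hKreal : ∀ i : Fin d, (n : ℝ) / (2 * d * γ i) ≤ (K i : ℝ) := by
    intro i
    have hx2 : (2 : ℝ) ≤ (n : ℝ) / (d * γ i) := by
      rw [le_div_iff₀ (by have := hγ i; positivity)]
      calc (2 : ℝ) * (d * γ i) = 2 * d * γ i := by ring
      _ ≤ 2 * d * G := by
          have := hγ i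
          have h2d : (0:ℝ) ≤ 2 * d := by positivity
          exact mul_le_mul_of_nonneg_left (hγG i) h2d
      _ ≤ (n : ℝ) := hn
    have hfl : (n : ℝ) / (d * γ i) - 1 < (K i : ℝ) := by
      have := Nat.lt_floor_add_one ((n : ℝ) / (d * γ i))
      rw [hKdef]
      simp only
      linarith
    have heq : (n : ℝ) / (2 * d * γ i) = ((n : ℝ) / (d * γ i)) / 2 := by
      rw [div_div]; ring_nf
    rw [heq]
    linarith
  calc (∏ i, 1 / (2 * d * γ i)) * (n : ℝ) ^ d
      = ∏ i, ((n : ℝ) / (2 * d * γ i)) := by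
        rw [Finset.prod_div_distrib, Finset.prod_const, Finset.card_univ, Fintype.card_fin,
          Finset.prod_div_distrib, Finset.prod_const, Finset.card_univ, Fintype.card_fin,
          one_pow]
        ring
  _ ≤ ∏ i, (K i : ℝ) := by
      apply Finset.prod_le_prod (fun i _ => by have := hγ i; positivity)
        (fun i _ => hKreal i)
  _ = ((∏ i, K i : ℕ) : ℝ) := by push_cast; rfl
  _ ≤ (Ncnt d γ n : ℝ) := by exact_mod_cast hcard

/-- The key limit: `N(n)/n^d` converges to a positive constant. -/
theorem Nlim (hd : 1 ≤ d) (hγ : ∀ i, 0 < γ i) :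
    ∃ C : ℝ, 0 < C ∧
      Tendsto (fun n : ℕ => (Ncnt d γ n : ℝ) / (n : ℝ) ^ d) atTop (nhds C) := by
  set g : ℕ → ℝ := fun n => (Ncnt d γ n : ℝ) / (n : ℝ) ^ d with hgdef
  have hg0 : ∀ n, 0 ≤ g n := fun n => by positivity
  -- g is eventually bounded above
  set c2 : ℝ := ∏ i, (1 / γ i + 1) with hc2def
  have hgc2 : ∀ n : ℕ, 1 ≤ n → g n ≤ c2 := by
    intro n hn
    have hn0 : (0 : ℝ) < n := by exact_mod_cast hn
    have h1 : (Ncnt d γ n : ℝ) ≤ ∏ i, ((n : ℝ) / γ i + 1) := Nupper hγ _ hn0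
    have h2 : ∏ i, ((n : ℝ) / γ i + 1) ≤ c2 * (n : ℝ) ^ d := by
      have ha : ∏ i, ((n : ℝ) / γ i + 1) ≤ ∏ i, ((1 / γ i + 1) * (n : ℝ)) := by
        apply Finset.prod_le_prod
        · intro i _
          have := hγ i
          positivity
        · intro i _
          have hn1 : (1 : ℝ) ≤ n := by exact_mod_cast hn
          have heq : (1 / γ i + 1) * (n : ℝ) = (n : ℝ) / γ i + n := by ring
          rw [heq]
          linarith
      have hb : ∏ i, ((1 / γ i + 1) * (n : ℝ)) = c2 * (n : ℝ) ^ d := by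
        rw [Finset.prod_mul_distrib, Finset.prod_const, Finset.card_univ, Fintype.card_fin,
          hc2def]
      rw [← hb]
      exact ha
    rw [hgdef]
    simp only
    rw [div_le_iff₀ (by positivity)]
    exact h1.trans h2
  have hbddabove : IsBoundedUnder (· ≤ ·) atTop g :=
    isBoundedUnder_of_eventually_le
      ((eventually_ge_atTop 1).mono fun n hn => hgc2 n hn)
  have hbddbelow : IsBoundedUnder (· ≥ ·) atTop g :=
    isBoundedUnder_of_eventually_ge (Eventually.of_forall hg0)
  obtain ⟨c1, hc1, hc1ev⟩ := Nlower hd hγ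
  set L : ℝ := liminf g atTop with hLdef
  have hLc1 : c1 ≤ L := by
    apply le_liminf_of_le hbddabove.isCoboundedUnder_ge
    filter_upwards [hc1ev, eventually_ge_atTop 1] with n hn hn1
    have hn0 : (0 : ℝ) < (n : ℝ) ^ d := by
      have : (0:ℝ) < n := by exact_mod_cast hn1
      positivity
    rw [hgdef]
    simp only
    rw [le_div_iff₀ hn0]
    exact hn
  have hL0 : 0 < L := lt_of_lt_of_le hc1 hLc1
  -- key step : limsup g ≤ L
  have hkey : limsup g atTop ≤ L := by
    apply le_of_forall_pos_le_add
    intro ε hε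
    -- choose M
    have htend : Tendsto (fun M : ℕ => (L + ε / 2) * (1 + 1 / (M : ℝ)) ^ d) atTop
        (nhds ((L + ε / 2) * (1 + 0) ^ d)) := by
      apply Tendsto.const_mul
      exact (Tendsto.const_add _ tendsto_one_div_atTop_nhds_zero_nat).pow d
    have hlt : (L + ε / 2) * ((1 : ℝ) + 0) ^ d < L + ε := by
      simp only [add_zero, one_pow, mul_one]
      linarith
    obtain ⟨M, hM, hM1⟩ := ((htend.eventually_le_const hlt).and
      (eventually_ge_atTop 1)).exists
    -- choose t0
    have hfreq : ∃ᶠ n in atTop, g n < L + ε / 2 :=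
      frequently_lt_of_liminf_lt hbddabove.isCoboundedUnder_ge (by rw [← hLdef]; linarith)
    obtain ⟨t0, hgt0, ht01⟩ := (hfreq.and_eventually (eventually_ge_atTop 1)).exists
    have ht0pos : 0 < t0 := ht01
    -- the eventual bound
    have hev : ∀ᶠ s : ℕ in atTop, g s ≤ L + ε := by
      filter_upwards [eventually_ge_atTop ((M + 1) * t0)] with s hs
      set l : ℕ := s / t0 with hldef
      have hlM : M + 1 ≤ l := (Nat.le_div_iff_mul_le ht0pos).2 hs
      have hl1 : 1 ≤ l := le_trans (by omega) hlM
      have hdm := Nat.div_add_mod s t0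
      rw [← hldef] at hdm
      have hmod := Nat.mod_lt s ht0pos
      have hits : s < (l + 1) * t0 := by
        rw [show (l + 1) * t0 = t0 * l + t0 by ring, ← hdm]
        exact Nat.add_lt_add_left hmod _
      have hlts : l * t0 ≤ s := by
        rw [hldef]
        exact Nat.div_mul_le_self s t0
      have hspos : 0 < s :=
        lt_of_lt_of_le (Nat.mul_pos (by omega) ht0pos) hs
      -- N s ≤ (l+1)^d * N t0
      have h1 : Ncnt d γ s ≤ (l + 1) ^ d * Ncnt d γ t0 := by
        calc Ncnt d γ s ≤ Ncnt d γ (((l + 1) * t0 : ℕ) : ℝ) :=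
              Nmono hγ (by exact_mod_cast hits.le)
        _ ≤ (l + 1) ^ d * Ncnt d γ t0 := Nscale hγ (l + 1) t0 (by omega)
      have hl0 : (0 : ℝ) < l := by exact_mod_cast hl1
      have ht0r : (0 : ℝ) < t0 := by exact_mod_cast ht0pos
      have hsr : (0 : ℝ) < s := by exact_mod_cast hspos
      have step1 : g s ≤ ((l : ℝ) + 1) ^ d * (Ncnt d γ t0 : ℝ) / ((l : ℝ) * t0) ^ d := by
        apply div_le_div₀ (by positivity) _ (by positivity) _
        · calc (Ncnt d γ s : ℝ) ≤ ((((l + 1) ^ d * Ncnt d γ t0 : ℕ)) : ℝ) := by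
                exact_mod_cast h1
          _ = ((l : ℝ) + 1) ^ d * (Ncnt d γ t0 : ℝ) := by push_cast; ring
        · calc ((l : ℝ) * t0) ^ d = (((l * t0 : ℕ)) : ℝ) ^ d := by push_cast; ring
          _ ≤ ((s : ℕ) : ℝ) ^ d := by
              apply pow_le_pow_left₀ (by positivity)
              exact_mod_cast hlts
      have step2 : ((l : ℝ) + 1) ^ d * (Ncnt d γ t0 : ℝ) / ((l : ℝ) * t0) ^ d
          = (((l : ℝ) + 1) / l) ^ d * g t0 := by
        rw [hgdef]
        simp only
        rw [mul_pow, div_pow, mul_div_mul_comm]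
      have step3 : (((l : ℝ) + 1) / l) ^ d ≤ (1 + 1 / (M : ℝ)) ^ d := by
        apply pow_le_pow_left₀ (by positivity)
        rw [add_div, div_self hl0.ne']
        have hMl : (M : ℝ) ≤ l := by exact_mod_cast le_trans (by omega) hlM
        have hM0 : (0 : ℝ) < M := by exact_mod_cast hM1
        have : 1 / (l : ℝ) ≤ 1 / M := by
          apply one_div_le_one_div_of_le hM0 hMl
        linarith
      calc g s ≤ (((l : ℝ) + 1) / l) ^ d * g t0 := by rw [← step2]; exact step1
      _ ≤ (1 + 1 / (M : ℝ)) ^ d * (L + ε / 2) := by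
          apply mul_le_mul step3 hgt0.le (hg0 t0) (by positivity)
      _ = (L + ε / 2) * (1 + 1 / (M : ℝ)) ^ d := mul_comm _ _
      _ ≤ L + ε := hM
    exact limsup_le_of_le hbddbelow.isCoboundedUnder_le hev
  exact ⟨L, hL0, tendsto_of_le_liminf_of_limsup_le (le_refl L) hkey hbddabove hbddbelow⟩

/-- Abel-summation identity in `ℕ`. -/
theorem abel_identity (hγ : ∀ i, 0 < γ i) (n : ℕ) :
    ∑ j ∈ Finset.range (n + 1), j * hcount d γ j
      + ∑ k ∈ Finset.range n, Ncnt d γ (k + 1) = n * Ncnt d γ (n + 1) := by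
  have step1 : ∑ j ∈ Finset.range (n + 1), j * hcount d γ j
      = ∑ k ∈ Finset.range n, ∑ j ∈ Finset.Ico (k + 1) (n + 1), hcount d γ j := by
    have h1 : ∀ j ∈ Finset.range (n + 1), j * hcount d γ j
        = ∑ k ∈ Finset.range n, if k < j then hcount d γ j else 0 := by
      intro j hj
      rw [Finset.mem_range] at hj
      rw [← Finset.sum_filter]
      have hfil : (Finset.range n).filter (fun k => k < j) = Finset.range j := by
        ext k
        simp only [Finset.mem_filter, Finset.mem_range]
        omega
      rw [hfil, Finset.sum_const, Finset.card_range, smul_eq_mul]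
    rw [Finset.sum_congr rfl h1, Finset.sum_comm]
    apply Finset.sum_congr rfl
    intro k hk
    rw [← Finset.sum_filter]
    congr 1
    ext j
    simp only [Finset.mem_filter, Finset.mem_range, Finset.mem_Ico]
    omega
  rw [step1, ← Finset.sum_add_distrib]
  have h2 : ∀ k ∈ Finset.range n,
      (∑ j ∈ Finset.Ico (k + 1) (n + 1), hcount d γ j) + Ncnt d γ (k + 1)
        = Ncnt d γ (n + 1) := by
    intro k hk
    rw [Finset.mem_range] at hk
    rw [← hsum hγ k, ← hsum hγ n, Finset.range_eq_Ico, add_comm, Finset.range_eq_Ico]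
    exact Finset.sum_Ico_consecutive (fun j => hcount d γ j) (Nat.zero_le _) (by omega : k + 1 ≤ n + 1)
  rw [Finset.sum_congr rfl h2, Finset.sum_const, Finset.card_range, smul_eq_mul]

/-- Telescoping bound for power sums. -/
theorem sum_pow_tendsto (d : ℕ) :
    Tendsto (fun n : ℕ => (∑ k ∈ Finset.range n, ((k : ℝ) + 1) ^ d) / (n : ℝ) ^ (d + 1))
      atTop (nhds (1 / (d + 1))) := by
  have hd1 : (0 : ℝ) < (d : ℝ) + 1 := by positivity
  -- the elementary inequality
  have key : ∀ a : ℝ, 0 ≤ a →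
      ((d : ℝ) + 1) * a ^ d ≤ (a + 1) ^ (d + 1) - a ^ (d + 1)
        ∧ (a + 1) ^ (d + 1) - a ^ (d + 1) ≤ ((d : ℝ) + 1) * (a + 1) ^ d := by
    intro a ha
    have hgs := geom_sum₂_mul (a + 1) a (d + 1)
    have hsimp : (a + 1) - a = 1 := by ring
    rw [hsimp, mul_one] at hgs
    have ha1 : (0 : ℝ) ≤ a + 1 := by linarith
    constructor
    · rw [← hgs]
      have : ∀ i ∈ Finset.range (d + 1), a ^ d ≤ (a + 1) ^ i * a ^ (d + 1 - 1 - i) := by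
        intro i hi
        rw [Finset.mem_range] at hi
        have hie : i + (d + 1 - 1 - i) = d := by omega
        calc a ^ d = a ^ i * a ^ (d + 1 - 1 - i) := by rw [← pow_add, hie]
        _ ≤ (a + 1) ^ i * a ^ (d + 1 - 1 - i) :=
            mul_le_mul_of_nonneg_right (pow_le_pow_left₀ ha (by linarith) i) (by positivity)
      calc ((d : ℝ) + 1) * a ^ d = ∑ _i ∈ Finset.range (d + 1), a ^ d := by
            rw [Finset.sum_const, Finset.card_range, nsmul_eq_mul]
            push_cast
            ring
      _ ≤ ∑ i ∈ Finset.range (d + 1), (a + 1) ^ i * a ^ (d + 1 - 1 - i) :=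
          Finset.sum_le_sum this
    · rw [← hgs]
      have : ∀ i ∈ Finset.range (d + 1), (a + 1) ^ i * a ^ (d + 1 - 1 - i) ≤ (a + 1) ^ d := by
        intro i hi
        rw [Finset.mem_range] at hi
        have hie : i + (d + 1 - 1 - i) = d := by omega
        calc (a + 1) ^ i * a ^ (d + 1 - 1 - i)
            ≤ (a + 1) ^ i * (a + 1) ^ (d + 1 - 1 - i) :=
              mul_le_mul_of_nonneg_left (pow_le_pow_left₀ ha (by linarith) _) (by positivity)
        _ = (a + 1) ^ d := by rw [← pow_add, hie]
      calc ∑ i ∈ Finset.range (d + 1), (a + 1) ^ i * a ^ (d + 1 - 1 - i)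
          ≤ ∑ _i ∈ Finset.range (d + 1), (a + 1) ^ d := Finset.sum_le_sum this
      _ = ((d : ℝ) + 1) * (a + 1) ^ d := by
          rw [Finset.sum_const, Finset.card_range, nsmul_eq_mul]
          push_cast
          ring
  set S : ℕ → ℝ := fun n => ∑ k ∈ Finset.range n, ((k : ℝ) + 1) ^ d with hSdef
  have lowerB : ∀ n : ℕ, (n : ℝ) ^ (d + 1) ≤ ((d : ℝ) + 1) * S n := by
    intro n
    have htel : ∑ k ∈ Finset.range n,
        ((((k + 1) : ℕ) : ℝ) ^ (d + 1) - ((k : ℕ) : ℝ) ^ (d + 1))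
          = ((n : ℕ) : ℝ) ^ (d + 1) - ((0 : ℕ) : ℝ) ^ (d + 1) :=
      Finset.sum_range_sub (fun k => ((k : ℕ) : ℝ) ^ (d + 1)) n
    have h0 : ((0 : ℕ) : ℝ) ^ (d + 1) = 0 := by
      simp
    rw [h0, sub_zero] at htel
    rw [← htel, hSdef, Finset.mul_sum]
    apply Finset.sum_le_sum
    intro k _
    have hk := (key (k : ℝ) (Nat.cast_nonneg k)).2
    push_cast
    linarith
  have upperB : ∀ n : ℕ, ((d : ℝ) + 1) * S n ≤ ((n : ℝ) + 1) ^ (d + 1) := by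
    intro n
    have htel : ∑ k ∈ Finset.range n,
        (((((k + 1) : ℕ) : ℝ) + 1) ^ (d + 1) - (((k : ℕ) : ℝ) + 1) ^ (d + 1))
          = (((n : ℕ) : ℝ) + 1) ^ (d + 1) - (((0 : ℕ) : ℝ) + 1) ^ (d + 1) :=
      Finset.sum_range_sub (fun k => (((k : ℕ) : ℝ) + 1) ^ (d + 1)) n
    have hone : (((0 : ℕ) : ℝ) + 1) ^ (d + 1) = 1 := by norm_num
    rw [hone] at htel
    have hterm : ∀ k ∈ Finset.range n, ((d : ℝ) + 1) * ((k : ℝ) + 1) ^ d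
        ≤ ((((k + 1) : ℕ) : ℝ) + 1) ^ (d + 1) - (((k : ℕ) : ℝ) + 1) ^ (d + 1) := by
      intro k _
      have hk := (key ((k : ℝ) + 1) (by positivity)).1
      push_cast
      push_cast at hk
      linarith
    calc ((d : ℝ) + 1) * S n = ∑ k ∈ Finset.range n, ((d : ℝ) + 1) * ((k : ℝ) + 1) ^ d := by
          rw [hSdef, Finset.mul_sum]
    _ ≤ ∑ k ∈ Finset.range n,
          (((((k + 1) : ℕ) : ℝ) + 1) ^ (d + 1) - (((k : ℕ) : ℝ) + 1) ^ (d + 1)) :=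
        Finset.sum_le_sum hterm
    _ = ((n : ℝ) + 1) ^ (d + 1) - 1 := htel
    _ ≤ ((n : ℝ) + 1) ^ (d + 1) := by linarith
  -- squeeze
  have hup : Tendsto (fun n : ℕ => 1 / ((d : ℝ) + 1) * (1 + 1 / (n : ℝ)) ^ (d + 1)) atTop
      (nhds (1 / ((d : ℝ) + 1) * (1 + 0) ^ (d + 1))) := by
    apply Tendsto.const_mul
    exact (Tendsto.const_add _ tendsto_one_div_atTop_nhds_zero_nat).pow _
  rw [show (1 / ((d : ℝ) + 1) * ((1 : ℝ) + 0) ^ (d + 1)) = 1 / ((d : ℝ) + 1) by norm_num] at hup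
  have hlo : Tendsto (fun _ : ℕ => 1 / ((d : ℝ) + 1)) atTop (nhds (1 / ((d : ℝ) + 1))) :=
    tendsto_const_nhds
  have hdc : (1 : ℝ) / (d + 1) = 1 / ((d : ℝ) + 1) := by norm_num
  rw [hdc]
  apply tendsto_of_tendsto_of_tendsto_of_le_of_le' hlo hup
  · filter_upwards [eventually_ge_atTop 1] with n hn
    have hn0 : (0 : ℝ) < n := by exact_mod_cast hn
    rw [div_le_div_iff₀ hd1 (by positivity : (0:ℝ) < (n : ℝ) ^ (d + 1))]
    calc 1 * (n : ℝ) ^ (d + 1) = (n : ℝ) ^ (d + 1) := one_mul _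
    _ ≤ ((d : ℝ) + 1) * S n := lowerB n
    _ = S n * ((d : ℝ) + 1) := mul_comm _ _
  · filter_upwards [eventually_ge_atTop 1] with n hn
    have hn0 : (0 : ℝ) < n := by exact_mod_cast hn
    have hrw : (1 : ℝ) + 1 / n = ((n : ℝ) + 1) / n := by field_simp
    have h1 : S n ≤ ((n : ℝ) + 1) ^ (d + 1) / ((d : ℝ) + 1) := by
      rw [le_div_iff₀ hd1]
      calc S n * ((d : ℝ) + 1) = ((d : ℝ) + 1) * S n := mul_comm _ _
      _ ≤ ((n : ℝ) + 1) ^ (d + 1) := upperB n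
    rw [div_le_iff₀ (show (0:ℝ) < (n : ℝ) ^ (d + 1) by positivity), hrw, div_pow]
    have hcancel : 1 / ((d : ℝ) + 1) * ((((n : ℝ) + 1) ^ (d + 1)) / ((n : ℝ) ^ (d + 1)))
        * ((n : ℝ) ^ (d + 1)) = ((n : ℝ) + 1) ^ (d + 1) / ((d : ℝ) + 1) := by
      field_simp
    rw [hcancel]
    exact h1

end Stmt5Aux

open Stmt5Aux

open Filter in
theorem stmt_5 (d : ℕ) (hd : 1 ≤ d) (γ : Fin d → ℝ) (hγ : ∀ i, 0 < γ i) :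
    Tendsto (fun n : ℕ => hratio d γ n) atTop (nhds ((d : ℝ) / (d + 1))) := by
  obtain ⟨C, hC, hN⟩ := Nlim hd hγ
  have hCne : C ≠ 0 := hC.ne'
  have hd1 : (0 : ℝ) < (d : ℝ) + 1 := by positivity
  set g : ℕ → ℝ := fun n => (Ncnt d γ n : ℝ) / (n : ℝ) ^ d with hgdef
  have hshift : Tendsto (fun n : ℕ => g (n + 1)) atTop (nhds C) :=
    hN.comp (tendsto_add_atTop_nat 1)
  have hpow : Tendsto (fun n : ℕ => ((1 : ℝ) + 1 / (n : ℝ)) ^ d) atTop (nhds 1) := by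
    have := (Tendsto.const_add (1 : ℝ) tendsto_one_div_atTop_nhds_zero_nat).pow d
    simpa using this
  -- Step A : N(n+1)/n^d → C
  have t1 : Tendsto (fun n : ℕ => (Ncnt d γ ((n : ℝ) + 1) : ℝ) / (n : ℝ) ^ d) atTop
      (nhds C) := by
    have hmul : Tendsto (fun n : ℕ => g (n + 1) * ((1 : ℝ) + 1 / (n : ℝ)) ^ d) atTop
        (nhds (C * 1)) := hshift.mul hpow
    rw [mul_one] at hmul
    apply hmul.congr'
    filter_upwards [eventually_ge_atTop 1] with n hn
    have hn0 : (0 : ℝ) < n := by exact_mod_cast hn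
    have hcast : ((n + 1 : ℕ) : ℝ) = (n : ℝ) + 1 := by push_cast; ring
    rw [hgdef]
    simp only
    rw [hcast, show (1 : ℝ) + 1 / (n : ℝ) = ((n : ℝ) + 1) / n by field_simp, div_pow]
    rw [div_mul_div_comm, div_eq_div_iff (by positivity) (by positivity)]
    ring
  -- Step B : (Σ_{k<n} N(k+1)) / n^(d+1) → C/(d+1)
  set S : ℕ → ℝ := fun n => ∑ k ∈ Finset.range n, ((k : ℝ) + 1) ^ d with hSdef
  set u : ℕ → ℝ := fun k => |g (k + 1) - C| with hudef
  have hu0 : Tendsto u atTop (nhds 0) := by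
    have := (hshift.sub_const C).abs
    simpa using this
  have hcesaro := hu0.cesaro
  have he : ∀ k : ℕ, (Ncnt d γ ((k : ℝ) + 1) : ℝ)
      = C * ((k : ℝ) + 1) ^ d + (g (k + 1) - C) * ((k : ℝ) + 1) ^ d := by
    intro k
    have hcast : ((k + 1 : ℕ) : ℝ) = (k : ℝ) + 1 := by push_cast; ring
    have hk0 : (0 : ℝ) < ((k : ℝ) + 1) ^ d := by positivity
    rw [hgdef]
    simp only
    rw [hcast]
    field_simp
    ring
  have hXsplit : ∀ n : ℕ, (∑ k ∈ Finset.range n, (Ncnt d γ ((k : ℝ) + 1) : ℝ))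
      = C * S n + ∑ k ∈ Finset.range n, (g (k + 1) - C) * ((k : ℝ) + 1) ^ d := by
    intro n
    rw [hSdef, Finset.mul_sum, ← Finset.sum_add_distrib]
    exact Finset.sum_congr rfl fun k _ => he k
  have hE : Tendsto (fun n : ℕ =>
      (∑ k ∈ Finset.range n, (g (k + 1) - C) * ((k : ℝ) + 1) ^ d) / (n : ℝ) ^ (d + 1))
      atTop (nhds 0) := by
    have hbnd : ∀ᶠ n : ℕ in atTop,
        ‖(∑ k ∈ Finset.range n, (g (k + 1) - C) * ((k : ℝ) + 1) ^ d) / (n : ℝ) ^ (d + 1)‖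
          ≤ (n : ℝ)⁻¹ • ∑ k ∈ Finset.range n, u k := by
      filter_upwards [eventually_ge_atTop 1] with n hn
      have hn0 : (0 : ℝ) < n := by exact_mod_cast hn
      rw [Real.norm_eq_abs, abs_div, abs_of_pos (by positivity : (0:ℝ) < (n:ℝ) ^ (d+1))]
      rw [div_le_iff₀ (by positivity : (0:ℝ) < (n:ℝ) ^ (d+1))]
      have habs : |∑ k ∈ Finset.range n, (g (k + 1) - C) * ((k : ℝ) + 1) ^ d|
          ≤ ∑ k ∈ Finset.range n, u k * (n : ℝ) ^ d := by
        calc |∑ k ∈ Finset.range n, (g (k + 1) - C) * ((k : ℝ) + 1) ^ d|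
            ≤ ∑ k ∈ Finset.range n, |(g (k + 1) - C) * ((k : ℝ) + 1) ^ d| :=
              Finset.abs_sum_le_sum_abs _ _
        _ ≤ ∑ k ∈ Finset.range n, u k * (n : ℝ) ^ d := by
            apply Finset.sum_le_sum
            intro k hk
            rw [Finset.mem_range] at hk
            rw [abs_mul, abs_of_pos (by positivity : (0:ℝ) < ((k:ℝ)+1) ^ d), hudef]
            apply mul_le_mul_of_nonneg_left _ (abs_nonneg _)
            apply pow_le_pow_left₀ (by positivity)
            have : (k : ℝ) + 1 ≤ n := by
              have : (k + 1 : ℕ) ≤ n := hk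
              exact_mod_cast this
            exact this
      calc |∑ k ∈ Finset.range n, (g (k + 1) - C) * ((k : ℝ) + 1) ^ d|
          ≤ ∑ k ∈ Finset.range n, u k * (n : ℝ) ^ d := habs
      _ = (∑ k ∈ Finset.range n, u k) * (n : ℝ) ^ d := by rw [← Finset.sum_mul]
      _ = ((n : ℝ)⁻¹ • ∑ k ∈ Finset.range n, u k) * (n : ℝ) ^ (d + 1) := by
          rw [smul_eq_mul, pow_succ]
          field_simp
    exact squeeze_zero_norm' hbnd (by simpa using hcesaro)
  have t2 : Tendsto (fun n : ℕ =>
      (∑ k ∈ Finset.range n, (Ncnt d γ ((k : ℝ) + 1) : ℝ)) / (n : ℝ) ^ (d + 1)) atTop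
      (nhds (C / ((d : ℝ) + 1))) := by
    have hcomb : Tendsto (fun n : ℕ => C * (S n / (n : ℝ) ^ (d + 1))
        + (∑ k ∈ Finset.range n, (g (k + 1) - C) * ((k : ℝ) + 1) ^ d) / (n : ℝ) ^ (d + 1))
        atTop (nhds (C * (1 / ((d : ℝ) + 1)) + 0)) := by
      apply Tendsto.add _ hE
      apply Tendsto.const_mul
      have := sum_pow_tendsto d
      have hdc : (1 : ℝ) / ((d : ℝ) + 1) = 1 / ((d : ℕ) + 1 : ℝ) := by push_cast; ring
      rw [hdc]
      exact this
    have heq : (C * (1 / ((d : ℝ) + 1)) + 0) = C / ((d : ℝ) + 1) := by ring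
    rw [heq] at hcomb
    apply hcomb.congr
    intro n
    rw [hXsplit n, add_div, mul_div_assoc]
  -- Step C : (Σ_{k<n} N(k+1)) / (n * N(n+1)) → 1/(d+1)
  have t3 : Tendsto (fun n : ℕ =>
      (∑ k ∈ Finset.range n, (Ncnt d γ ((k : ℝ) + 1) : ℝ))
        / ((n : ℝ) * (Ncnt d γ ((n : ℝ) + 1) : ℝ))) atTop (nhds (1 / ((d : ℝ) + 1))) := by
    have hdiv := t2.div t1 hCne
    have hlim : C / ((d : ℝ) + 1) / C = 1 / ((d : ℝ) + 1) := by
      rw [div_div, mul_comm, ← div_div, div_self hCne]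
    rw [hlim] at hdiv
    apply hdiv.congr'
    filter_upwards [eventually_ge_atTop 1] with n hn
    have hn0 : (0 : ℝ) < n := by exact_mod_cast hn
    have hnd : (0 : ℝ) < (n : ℝ) ^ d := by positivity
    simp only [Pi.div_apply]
    rw [div_div_div_comm, pow_succ, mul_comm ((n:ℝ) ^ d) (n:ℝ), mul_div_assoc,
      div_self hnd.ne', mul_one, div_div, mul_comm]
  -- Step D : conclusion
  have habel : ∀ n : ℕ, (∑ j ∈ Finset.range (n + 1), (j : ℝ) * hcount d γ j)
      = (n : ℝ) * (Ncnt d γ ((n : ℝ) + 1) : ℝ)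
        - ∑ k ∈ Finset.range n, (Ncnt d γ ((k : ℝ) + 1) : ℝ) := by
    intro n
    have := congrArg (Nat.cast : ℕ → ℝ) (abel_identity hγ n)
    push_cast at this
    linarith
  have hfinal : Tendsto (fun n : ℕ => 1 - (∑ k ∈ Finset.range n, (Ncnt d γ ((k : ℝ) + 1) : ℝ))
      / ((n : ℝ) * (Ncnt d γ ((n : ℝ) + 1) : ℝ))) atTop
      (nhds (1 - 1 / ((d : ℝ) + 1))) := (tendsto_const_nhds).sub t3
  have hgoal : (1 : ℝ) - 1 / ((d : ℝ) + 1) = (d : ℝ) / (d + 1) := by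
    field_simp
    ring
  rw [← hgoal]
  apply hfinal.congr'
  filter_upwards [eventually_ge_atTop 1] with n hn
  have hn0 : (0 : ℝ) < n := by exact_mod_cast hn
  have hBsum : (∑ j ∈ Finset.range (n + 1), (hcount d γ j : ℝ))
      = (Ncnt d γ ((n : ℝ) + 1) : ℝ) := by exact_mod_cast congrArg (Nat.cast : ℕ → ℝ) (hsum hγ n)
  have hY : (0 : ℝ) < (Ncnt d γ ((n : ℝ) + 1) : ℝ) := by
    have := Npos (d := d) (γ := γ) hγ (t := (n : ℝ) + 1) (by positivity)
    exact_mod_cast Nat.lt_of_lt_of_le Nat.zero_lt_one this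
  have hnY : (0 : ℝ) < (n : ℝ) * (Ncnt d γ ((n : ℝ) + 1) : ℝ) := by positivity
  rw [hratio, hBsum, habel n, sub_div, div_self hnY.ne']
end

section
/- Let d ≥ 1 and let γ = (γ_1,…,γ_d) be a vector of positive real numbers. Then lim_{n→∞} mean(Δ_n(γ)·γ)/max(Δ_n(γ)·γ) = d/(d+1). -/
/-- `Δ_n(γ) = {m ∈ ℕ^d | m·γ < n+1}`. -/
def Delta (d : ℕ) (γ : Fin d → ℝ) (n : ℕ) : Set (Fin d → ℕ) :=
  {m | weight d γ m < n + 1}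

/-- The mean weight of a (finite) subset of `ℕ^d`. -/
noncomputable def meanWeight (d : ℕ) (γ : Fin d → ℝ) (B : Set (Fin d → ℕ)) : ℝ :=
  (B.ncard : ℝ)⁻¹ * ∑ᶠ b ∈ B, weight d γ b

/-- The maximal weight of an element of a subset of `ℕ^d`. -/
noncomputable def maxWeight (d : ℕ) (γ : Fin d → ℝ) (B : Set (Fin d → ℕ)) : ℝ :=
  sSup (weight d γ '' B)

open MeasureTheory Filter
open scoped Pointwise ENNReal NNReal

namespace Stmt7

variable {d : ℕ} {γ : Fin d → ℝ} {t : ℝ}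

lemma weight_nonneg (hγ : ∀ i, 0 < γ i) (m : Fin d → ℕ) : 0 ≤ weight d γ m :=
  Finset.sum_nonneg fun i _ => mul_nonneg (Nat.cast_nonneg _) (hγ i).le

lemma single_le_weight (hγ : ∀ i, 0 < γ i) (m : Fin d → ℕ) (i : Fin d) :
    (m i : ℝ) * γ i ≤ weight d γ m :=
  Finset.single_le_sum (f := fun j => (m j : ℝ) * γ j)
    (fun j _ => mul_nonneg (Nat.cast_nonneg _) (hγ j).le) (Finset.mem_univ i)

lemma finite_lt (hγ : ∀ i, 0 < γ i) (t : ℝ) :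
    {m : Fin d → ℕ | weight d γ m < t}.Finite := by
  apply Set.Finite.subset (Set.Finite.pi (fun i : Fin d => Set.finite_Iic ⌊t / γ i⌋₊))
  intro m hm
  simp only [Set.mem_pi, Set.mem_univ, Set.mem_Iic, forall_true_left]
  intro i
  refine Nat.le_floor ?_
  rw [le_div_iff₀ (hγ i)]
  exact (single_le_weight hγ m i).trans hm.le

/-- Unit cube based at a lattice point. -/
def cube (m : Fin d → ℕ) : Set (Fin d → ℝ) :=
  Set.univ.pi fun i => Set.Ico (m i : ℝ) (m i + 1)

lemma mem_cube {m : Fin d → ℕ} {x : Fin d → ℝ} :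
    x ∈ cube m ↔ ∀ i, (m i : ℝ) ≤ x i ∧ x i < m i + 1 := by
  simp [cube, Set.mem_pi]

lemma floor_of_mem_cube {m : Fin d → ℕ} {x : Fin d → ℝ} (hx : x ∈ cube m) (i : Fin d) :
    ⌊x i⌋₊ = m i := by
  obtain ⟨h1, h2⟩ := mem_cube.1 hx i
  rw [Nat.floor_eq_iff (le_trans (Nat.cast_nonneg _) h1)]
  exact ⟨h1, h2⟩

lemma cube_disjoint : Pairwise (Function.onFun Disjoint (cube (d := d))) := by
  intro m m' hmm
  rw [Function.onFun, Set.disjoint_left]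
  intro x hx hx'
  exact hmm (funext fun i => (floor_of_mem_cube hx i).symm.trans (floor_of_mem_cube hx' i))

lemma cube_measurable (m : Fin d → ℕ) : MeasurableSet (cube m) :=
  MeasurableSet.univ_pi fun i => measurableSet_Ico

lemma volume_cube (m : Fin d → ℕ) : volume (cube m) = 1 := by
  rw [cube, volume_pi_pi]
  simp [Real.volume_Ico]

lemma volume_biUnion_cube {A : Set (Fin d → ℕ)} (hA : A.Finite) :
    volume (⋃ m ∈ A, cube m) = A.ncard := by
  rw [Set.ncard_eq_toFinset_card _ hA]
  have : (⋃ m ∈ A, cube m) = ⋃ m ∈ hA.toFinset, cube m := by simp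
  rw [this, measure_biUnion_finset (fun x _ y _ hxy => cube_disjoint hxy)
    (fun b _ => cube_measurable b)]
  simp [volume_cube]

variable {d : ℕ} {γ : Fin d → ℝ} {t : ℝ}

/-- The open corner simplex of size `t`. -/
def S (d : ℕ) (γ : Fin d → ℝ) (t : ℝ) : Set (Fin d → ℝ) :=
  {x | (∀ i, 0 ≤ x i) ∧ ∑ i, x i * γ i < t}

lemma S_smul (ht : 0 < t) : S d γ t = t • S d γ 1 := by
  ext x
  rw [Set.mem_smul_set_iff_inv_smul_mem₀ ht.ne']
  simp only [S, Set.mem_setOf_eq, Pi.smul_apply, smul_eq_mul]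
  have key : ∑ i, t⁻¹ * x i * γ i = t⁻¹ * ∑ i, x i * γ i := by
    rw [Finset.mul_sum]
    exact Finset.sum_congr rfl fun i _ => (mul_assoc _ _ _)
  constructor
  · rintro ⟨h1, h2⟩
    refine ⟨fun i => mul_nonneg (inv_nonneg.2 ht.le) (h1 i), ?_⟩
    rw [key, inv_mul_lt_iff₀ ht, mul_one]
    exact h2
  · rintro ⟨h1, h2⟩
    rw [key, inv_mul_lt_iff₀ ht, mul_one] at h2
    refine ⟨fun i => ?_, h2⟩
    have h3 : 0 ≤ t * (t⁻¹ * x i) := mul_nonneg ht.le (h1 i)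
    rwa [← mul_assoc, mul_inv_cancel₀ ht.ne', one_mul] at h3
  
lemma volume_S_smul (ht : 0 < t) :
    volume (S d γ t) = ENNReal.ofReal (t ^ d) * volume (S d γ 1) := by
  rw [S_smul ht, Measure.addHaar_smul, Module.finrank_fin_fun, abs_of_nonneg (pow_nonneg ht.le d)]

lemma volume_S_one_pos (hγ : ∀ i, 0 < γ i) : 0 < volume (S d γ 1) := by
  have hG : 0 < ∑ i, γ i + 1 := by
    have : 0 ≤ ∑ i, γ i := Finset.sum_nonneg fun i _ => (hγ i).le
    linarith
  set ε : ℝ := (∑ i, γ i + 1)⁻¹ with hε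
  have hε0 : 0 < ε := inv_pos.2 hG
  have hsub : (Set.univ.pi fun _ : Fin d => Set.Ico (0:ℝ) ε) ⊆ S d γ 1 := by
    intro x hx
    simp only [Set.mem_pi, Set.mem_univ, Set.mem_Ico, forall_true_left] at hx
    refine ⟨fun i => (hx i).1, ?_⟩
    calc ∑ i, x i * γ i ≤ ∑ i, ε * γ i := by
          refine Finset.sum_le_sum fun i _ => ?_
          exact mul_le_mul_of_nonneg_right (hx i).2.le (hγ i).le
      _ = ε * ∑ i, γ i := by rw [Finset.mul_sum]
      _ < ε * (∑ i, γ i + 1) := by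
          exact mul_lt_mul_of_pos_left (lt_add_one _) hε0
      _ = 1 := inv_mul_cancel₀ hG.ne'
  calc (0:ℝ≥0∞) < ENNReal.ofReal (ε ^ d) := ENNReal.ofReal_pos.2 (by positivity)
    _ = volume (Set.univ.pi fun _ : Fin d => Set.Ico (0:ℝ) ε) := by
        rw [volume_pi_pi]; simp [Real.volume_Ico, ENNReal.ofReal_pow hε0.le]
    _ ≤ volume (S d γ 1) := measure_mono hsub

lemma volume_S_one_lt_top (hγ : ∀ i, 0 < γ i) : volume (S d γ 1) < ⊤ := by
  have hsub : S d γ 1 ⊆ Set.univ.pi fun i : Fin d => Set.Ico (0:ℝ) ((γ i)⁻¹ + 1) := by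
    intro x hx
    simp only [Set.mem_pi, Set.mem_univ, Set.mem_Ico, forall_true_left]
    intro i
    refine ⟨hx.1 i, ?_⟩
    have h1 : x i * γ i ≤ ∑ j, x j * γ j :=
      Finset.single_le_sum (f := fun j => x j * γ j)
        (fun j _ => mul_nonneg (hx.1 j) (hγ j).le) (Finset.mem_univ i)
    have h2 : x i * γ i < 1 := lt_of_le_of_lt h1 hx.2
    have : x i < (γ i)⁻¹ := by
      nlinarith [hγ i, inv_mul_cancel₀ (hγ i).ne', h2]
    linarith
  refine lt_of_le_of_lt (measure_mono hsub) ?_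
  rw [volume_pi_pi]
  exact ENNReal.prod_lt_top fun i _ => by simp [Real.volume_Ico]


end Stmt7

namespace Stmt7
variable {d : ℕ} {γ : Fin d → ℝ} {t : ℝ}

/-- The lattice point counting function. -/
noncomputable def F (d : ℕ) (γ : Fin d → ℝ) (t : ℝ) : ℕ :=
  {m : Fin d → ℕ | weight d γ m < t}.ncard

lemma S_subset_biUnion (hγ : ∀ i, 0 < γ i) :
    S d γ t ⊆ ⋃ m ∈ {m : Fin d → ℕ | weight d γ m < t}, cube m := by
  intro x hx
  have hm : weight d γ (fun i => ⌊x i⌋₊) < t := by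
    refine lt_of_le_of_lt ?_ hx.2
    refine Finset.sum_le_sum fun i _ => ?_
    exact mul_le_mul_of_nonneg_right (Nat.floor_le (hx.1 i)) (hγ i).le
  refine Set.mem_biUnion hm ?_
  rw [mem_cube]
  exact fun i => ⟨Nat.floor_le (hx.1 i), Nat.lt_floor_add_one (x i)⟩

lemma biUnion_subset_S (hγ : ∀ i, 0 < γ i) :
    (⋃ m ∈ {m : Fin d → ℕ | weight d γ m < t}, cube m) ⊆ S d γ (t + ∑ i, γ i) := by
  intro x hx
  obtain ⟨m, hm, hxm⟩ := Set.mem_iUnion₂.1 hx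
  rw [mem_cube] at hxm
  refine ⟨fun i => le_trans (Nat.cast_nonneg _) (hxm i).1, ?_⟩
  calc ∑ i, x i * γ i ≤ ∑ i, ((m i : ℝ) + 1) * γ i := by
        refine Finset.sum_le_sum fun i _ => ?_
        exact mul_le_mul_of_nonneg_right (hxm i).2.le (hγ i).le
    _ = weight d γ m + ∑ i, γ i := by
        rw [weight, ← Finset.sum_add_distrib]
        exact Finset.sum_congr rfl fun i _ => by ring
    _ < t + ∑ i, γ i := by
        have hm' : weight d γ m < t := hm
        linarith

/-- Two-sided volume bound for the counting function. -/
lemma F_bounds (hγ : ∀ i, 0 < γ i) (ht : 0 < t) :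
    ENNReal.ofReal (t ^ d) * volume (S d γ 1) ≤ (F d γ t : ℝ≥0∞) ∧
    (F d γ t : ℝ≥0∞) ≤ ENNReal.ofReal ((t + ∑ i, γ i) ^ d) * volume (S d γ 1) := by
  have hG : 0 ≤ ∑ i, γ i := Finset.sum_nonneg fun i _ => (hγ i).le
  have hfin := finite_lt hγ (γ := γ) t
  have hvol := volume_biUnion_cube hfin
  rw [F]
  constructor
  · rw [← volume_S_smul ht, ← hvol]
    exact measure_mono (S_subset_biUnion hγ)
  · rw [← volume_S_smul (by linarith : (0:ℝ) < t + ∑ i, γ i), ← hvol]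
    exact measure_mono (biUnion_subset_S hγ)

end Stmt7

namespace Stmt7
variable {d : ℕ} {γ : Fin d → ℝ} {t : ℝ}

lemma card_toFinset_F (hγ : ∀ i, 0 < γ i) (t : ℝ) :
    (finite_lt hγ t).toFinset.card = F d γ t :=
  (Set.ncard_eq_toFinset_card _ (finite_lt hγ t)).symm

lemma sum_floor_eq (hγ : ∀ i, 0 < γ i) (n : ℕ) :
    ((∑ b ∈ (finite_lt hγ ((n:ℝ)+1)).toFinset, ⌊weight d γ b⌋₊ : ℕ) : ℝ)
      = (n+1) * (F d γ ((n:ℝ)+1) : ℝ) - ∑ k ∈ Finset.range (n+1), (F d γ ((k:ℝ)+1) : ℝ) := by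
  set Dfin := (finite_lt hγ ((n:ℝ)+1)).toFinset with hD
  have hmem : ∀ b, b ∈ Dfin ↔ weight d γ b < (n:ℝ)+1 := by
    intro b; rw [hD, Set.Finite.mem_toFinset]; rfl
  have key : ∀ b ∈ Dfin, ⌊weight d γ b⌋₊
      = ((Finset.range (n+1)).filter (fun k : ℕ => ((k:ℝ)+1) ≤ weight d γ b)).card := by
    intro b hb
    have hb' : weight d γ b < (n:ℝ)+1 := (hmem b).1 hb
    have hw0 : 0 ≤ weight d γ b := weight_nonneg hγ b
    have hfl : ⌊weight d γ b⌋₊ < n + 1 := by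
      rw [Nat.floor_lt hw0]; push_cast; linarith
    have : (Finset.range (n+1)).filter (fun k : ℕ => ((k:ℝ)+1) ≤ weight d γ b)
        = Finset.range ⌊weight d γ b⌋₊ := by
      ext k
      simp only [Finset.mem_filter, Finset.mem_range]
      constructor
      · rintro ⟨-, h⟩
        have : (k+1 : ℕ) ≤ ⌊weight d γ b⌋₊ := Nat.le_floor (by push_cast; linarith)
        omega
      · intro h
        refine ⟨by omega, ?_⟩
        have : ((k+1 : ℕ) : ℝ) ≤ ⌊weight d γ b⌋₊ := by exact_mod_cast h
        calc ((k:ℝ)+1) = ((k+1 : ℕ) : ℝ) := by push_cast; ring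
          _ ≤ ⌊weight d γ b⌋₊ := this
          _ ≤ weight d γ b := Nat.floor_le hw0
    rw [this, Finset.card_range]
  have swap : ∑ b ∈ Dfin, ⌊weight d γ b⌋₊
      = ∑ k ∈ Finset.range (n+1), (Dfin.filter (fun b => ((k:ℝ)+1) ≤ weight d γ b)).card := by
    rw [Finset.sum_congr rfl key]
    simp only [Finset.card_filter]
    rw [Finset.sum_comm]
  have inner : ∀ k ∈ Finset.range (n+1),
      (Dfin.filter (fun b => ((k:ℝ)+1) ≤ weight d γ b)).card
        = F d γ ((n:ℝ)+1) - F d γ ((k:ℝ)+1) := by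
    intro k hk
    have hkn : (k:ℝ) + 1 ≤ (n:ℝ) + 1 := by
      have hk' : (k:ℝ) ≤ n := by exact_mod_cast Nat.lt_succ_iff.1 (Finset.mem_range.1 hk)
      linarith
    have hsub : Dfin.filter (fun b => weight d γ b < (k:ℝ)+1)
        = (finite_lt hγ ((k:ℝ)+1)).toFinset := by
      ext b
      simp only [Finset.mem_filter, Set.Finite.mem_toFinset, hmem b]
      constructor
      · rintro ⟨-, h⟩; exact h
      · intro h; exact ⟨lt_of_lt_of_le h hkn, h⟩
    have hcard := Finset.card_filter_add_card_filter_not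
      (s := Dfin) (p := fun b => weight d γ b < (k:ℝ)+1)
    have : Dfin.filter (fun b => ¬ weight d γ b < (k:ℝ)+1)
        = Dfin.filter (fun b => ((k:ℝ)+1) ≤ weight d γ b) := by
      apply Finset.filter_congr; intro b _; simp [not_lt]
    rw [this] at hcard
    have hDcard : Dfin.card = F d γ ((n:ℝ)+1) := by rw [hD]; exact card_toFinset_F hγ _
    rw [hsub, card_toFinset_F hγ, hDcard] at hcard
    omega
  rw [swap, Finset.sum_congr rfl inner]
  have hle : ∀ k ∈ Finset.range (n+1), F d γ ((k:ℝ)+1) ≤ F d γ ((n:ℝ)+1) := by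
    intro k hk
    have hkn : (k:ℝ) + 1 ≤ (n:ℝ) + 1 := by
      have hk' : (k:ℝ) ≤ n := by exact_mod_cast Nat.lt_succ_iff.1 (Finset.mem_range.1 hk)
      linarith
    rw [← card_toFinset_F hγ, ← card_toFinset_F hγ]
    apply Finset.card_le_card
    intro b hb
    rw [Set.Finite.mem_toFinset] at *
    exact lt_of_lt_of_le hb hkn
  push_cast [Nat.cast_sum]
  rw [Finset.sum_congr rfl (fun k hk => Nat.cast_sub (hle k hk))]
  rw [Finset.sum_sub_distrib]
  simp [Finset.sum_const, Finset.card_range]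
  try ring

end Stmt7

namespace Stmt7

lemma telescope_bounds (d : ℕ) {a : ℝ} (ha : 0 ≤ a) :
    (d+1 : ℝ) * a^d ≤ (a+1)^(d+1) - a^(d+1) ∧
    (a+1)^(d+1) - a^(d+1) ≤ (d+1 : ℝ) * (a+1)^d := by
  have hg := geom_sum₂_mul (a+1) a (d+1)
  rw [add_sub_cancel_left, mul_one] at hg
  have ha1 : (0:ℝ) ≤ a + 1 := by linarith
  constructor
  · rw [← hg]
    calc (d+1 : ℝ) * a^d = ∑ _i ∈ Finset.range (d+1), a^d := by
          rw [Finset.sum_const, Finset.card_range]; push_cast; ring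
      _ ≤ ∑ i ∈ Finset.range (d+1), (a+1)^i * a^(d+1-1-i) := by
          refine Finset.sum_le_sum fun i hi => ?_
          have hi' : i ≤ d := Nat.lt_succ_iff.1 (Finset.mem_range.1 hi)
          calc a^d = a^i * a^(d-i) := by rw [← pow_add]; congr 1; omega
            _ ≤ (a+1)^i * a^(d-i) := by
                have := pow_le_pow_left₀ ha (by linarith : a ≤ a+1) i
                exact mul_le_mul_of_nonneg_right this (pow_nonneg ha _)
            _ = (a+1)^i * a^(d+1-1-i) := by congr 2
  · rw [← hg]
    calc ∑ i ∈ Finset.range (d+1), (a+1)^i * a^(d+1-1-i)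
        ≤ ∑ _i ∈ Finset.range (d+1), (a+1)^d := by
          refine Finset.sum_le_sum fun i hi => ?_
          have hi' : i ≤ d := Nat.lt_succ_iff.1 (Finset.mem_range.1 hi)
          calc (a+1)^i * a^(d+1-1-i) ≤ (a+1)^i * (a+1)^(d+1-1-i) := by
                have := pow_le_pow_left₀ ha (by linarith : a ≤ a+1) (d+1-1-i)
                exact mul_le_mul_of_nonneg_left this (pow_nonneg ha1 _)
            _ = (a+1)^d := by rw [← pow_add]; congr 1; omega
      _ = (d+1 : ℝ) * (a+1)^d := by
          rw [Finset.sum_const, Finset.card_range]; push_cast; ring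

lemma mul_sum_range_pow_le (d n : ℕ) :
    (d+1 : ℝ) * ∑ k ∈ Finset.range n, ((k:ℝ))^d ≤ (n:ℝ)^(d+1) := by
  induction n with
  | zero => simp
  | succ n ih =>
    rw [Finset.sum_range_succ, mul_add]
    have h := (telescope_bounds d (Nat.cast_nonneg n : (0:ℝ) ≤ n)).1
    push_cast
    push_cast at ih
    linarith

lemma le_mul_sum_range_pow (d n : ℕ) :
    (n:ℝ)^(d+1) ≤ (d+1 : ℝ) * ∑ k ∈ Finset.range n, ((k:ℝ)+1)^d := by
  induction n with
  | zero => simp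
  | succ n ih =>
    rw [Finset.sum_range_succ, mul_add]
    have h := (telescope_bounds d (Nat.cast_nonneg n : (0:ℝ) ≤ n)).2
    push_cast
    push_cast at ih
    linarith

open Filter in
lemma tendsto_ratio_pow (a : ℝ) (p : ℕ) :
    Tendsto (fun n : ℕ => (((n:ℝ)+1+a)/((n:ℝ)+1))^p) atTop (nhds 1) := by
  have hT : Tendsto (fun n : ℕ => ((n:ℝ)+1)) atTop atTop :=
    tendsto_atTop_add_const_right _ 1 tendsto_natCast_atTop_atTop
  have h0 : Tendsto (fun n : ℕ => a/((n:ℝ)+1)) atTop (nhds 0) :=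
    Tendsto.div_atTop tendsto_const_nhds hT
  have h1 : Tendsto (fun n : ℕ => 1 + a/((n:ℝ)+1)) atTop (nhds 1) := by
    have := (tendsto_const_nhds (x := (1:ℝ)) (f := (atTop : Filter ℕ))).add h0
    simpa using this
  have h2 : Tendsto (fun n : ℕ => (1 + a/((n:ℝ)+1))^p) atTop (nhds 1) := by
    simpa using h1.pow p
  refine h2.congr fun n => ?_
  congr 1
  have hn : ((n:ℝ)+1) ≠ 0 := by positivity
  field_simp

end Stmt7

namespace Stmt7
variable {d : ℕ} {γ : Fin d → ℝ}

lemma delta_eq (n : ℕ) : Delta d γ n = {m : Fin d → ℕ | weight d γ m < (n:ℝ)+1} := rfl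

lemma ncard_delta (n : ℕ) : (Delta d γ n).ncard = F d γ ((n:ℝ)+1) := rfl

lemma zero_mem_delta (n : ℕ) : (fun _ => 0 : Fin d → ℕ) ∈ Delta d γ n := by
  show weight d γ _ < (n:ℝ)+1
  simp [weight]
  positivity

lemma bddAbove_weights (hγ : ∀ i, 0 < γ i) (n : ℕ) :
    ∀ y ∈ weight d γ '' Delta d γ n, y ≤ (n:ℝ)+1 := by
  rintro y ⟨m, hm, rfl⟩
  exact le_of_lt hm

lemma maxWeight_le (hγ : ∀ i, 0 < γ i) (n : ℕ) :
    maxWeight d γ (Delta d γ n) ≤ (n:ℝ)+1 := by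
  refine csSup_le ⟨_, Set.mem_image_of_mem _ (zero_mem_delta n)⟩ (bddAbove_weights hγ n)

lemma le_maxWeight (hd : 1 ≤ d) (hγ : ∀ i, 0 < γ i) (n : ℕ) :
    (n:ℝ)+1 - γ ⟨0, hd⟩ ≤ maxWeight d γ (Delta d γ n) := by
  set i0 : Fin d := ⟨0, hd⟩
  set c := γ i0 with hc
  have hc0 : 0 < c := hγ i0
  set t : ℝ := (n:ℝ)+1 with ht
  have ht0 : 0 < t := by positivity
  have hceil : 1 ≤ ⌈t/c⌉₊ := Nat.one_le_ceil_iff.2 (by positivity)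
  set k : ℕ := ⌈t/c⌉₊ - 1 with hk
  have hkc : (k:ℝ) = (⌈t/c⌉₊ : ℝ) - 1 := by
    rw [hk, Nat.cast_sub hceil, Nat.cast_one]
  set m0 : Fin d → ℕ := fun i => if i = i0 then k else 0 with hm0
  have hw : weight d γ m0 = k * c := by
    rw [weight, Finset.sum_eq_single_of_mem i0 (Finset.mem_univ _)]
    · simp [hm0, hc]
    · intro j _ hj
      simp [hm0, hj]
  have hkt : (k:ℝ) * c < t := by
    have h1 : (⌈t/c⌉₊ : ℝ) < t/c + 1 := Nat.ceil_lt_add_one (by positivity)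
    rw [hkc]
    have : ((⌈t/c⌉₊ : ℝ) - 1) < t / c := by linarith
    calc ((⌈t/c⌉₊ : ℝ) - 1) * c < (t/c) * c := by
          exact mul_lt_mul_of_pos_right this hc0
      _ = t := by field_simp
  have hmem : m0 ∈ Delta d γ n := by
    show weight d γ m0 < (n:ℝ)+1
    rw [hw]; exact hkt
  have hlow : t - c ≤ (k:ℝ) * c := by
    have h2 : t/c ≤ (⌈t/c⌉₊ : ℝ) := Nat.le_ceil _
    rw [hkc]
    have : t/c - 1 ≤ (⌈t/c⌉₊ : ℝ) - 1 := by linarith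
    calc t - c = (t/c - 1) * c := by field_simp
      _ ≤ ((⌈t/c⌉₊ : ℝ) - 1) * c := mul_le_mul_of_nonneg_right this hc0.le
  calc t - c ≤ (k:ℝ) * c := hlow
    _ = weight d γ m0 := hw.symm
    _ ≤ maxWeight d γ (Delta d γ n) := by
        refine le_csSup ⟨(n:ℝ)+1, ?_⟩ (Set.mem_image_of_mem _ hmem)
        rintro y hy
        exact bddAbove_weights hγ n y hy

lemma sum_weight_bounds (hγ : ∀ i, 0 < γ i) (n : ℕ) :
    ((n:ℝ)+1) * (F d γ ((n:ℝ)+1) : ℝ) - (∑ k ∈ Finset.range (n+1), (F d γ ((k:ℝ)+1) : ℝ))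
      ≤ ∑ b ∈ (finite_lt hγ ((n:ℝ)+1)).toFinset, weight d γ b ∧
    ∑ b ∈ (finite_lt hγ ((n:ℝ)+1)).toFinset, weight d γ b
      ≤ ((n:ℝ)+1) * (F d γ ((n:ℝ)+1) : ℝ) - (∑ k ∈ Finset.range (n+1), (F d γ ((k:ℝ)+1) : ℝ))
        + (F d γ ((n:ℝ)+1) : ℝ) := by
  have hfloor := sum_floor_eq hγ n
  set Dfin := (finite_lt hγ ((n:ℝ)+1)).toFinset with hD
  have hcast : ((∑ b ∈ Dfin, ⌊weight d γ b⌋₊ : ℕ) : ℝ) = ∑ b ∈ Dfin, (⌊weight d γ b⌋₊ : ℝ) := by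
    push_cast; rfl
  rw [hcast] at hfloor
  have hcard : (Dfin.card : ℝ) = (F d γ ((n:ℝ)+1) : ℝ) := by
    rw [hD, card_toFinset_F hγ]
  constructor
  · rw [← hfloor]
    refine Finset.sum_le_sum fun b _ => Nat.floor_le (weight_nonneg hγ b)
  · have : ∑ b ∈ Dfin, weight d γ b ≤ ∑ b ∈ Dfin, ((⌊weight d γ b⌋₊ : ℝ) + 1) := by
      refine Finset.sum_le_sum fun b _ => (Nat.lt_floor_add_one _).le
    rw [Finset.sum_add_distrib, Finset.sum_const, nsmul_eq_mul, mul_one, hcard] at this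
    linarith [hfloor]

end Stmt7

namespace Stmt7
variable {d : ℕ} {γ : Fin d → ℝ}

noncomputable def V (d : ℕ) (γ : Fin d → ℝ) : ℝ := (volume (S d γ 1)).toReal

lemma V_pos (hγ : ∀ i, 0 < γ i) : 0 < V d γ :=
  ENNReal.toReal_pos (volume_S_one_pos hγ).ne' (volume_S_one_lt_top hγ).ne

lemma F_bounds_real (hγ : ∀ i, 0 < γ i) {t : ℝ} (ht : 0 < t) :
    V d γ * t^d ≤ (F d γ t : ℝ) ∧ (F d γ t : ℝ) ≤ V d γ * (t + ∑ i, γ i)^d := by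
  obtain ⟨h1, h2⟩ := F_bounds hγ ht
  have hvt := (volume_S_one_lt_top hγ).ne
  have hG : 0 ≤ ∑ i, γ i := Finset.sum_nonneg fun i _ => (hγ i).le
  constructor
  · have h := ENNReal.toReal_mono (by simp) h1
    rw [ENNReal.toReal_mul, ENNReal.toReal_ofReal (by positivity)] at h
    show (volume (S d γ 1)).toReal * t ^ d ≤ (F d γ t : ℝ)
    exact le_trans (le_of_eq (mul_comm _ _)) h
  · have hfin : ENNReal.ofReal ((t + ∑ i, γ i)^d) * volume (S d γ 1) ≠ ⊤ :=
      ENNReal.mul_ne_top (by simp) hvt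
    have h := ENNReal.toReal_mono hfin h2
    rw [ENNReal.toReal_mul, ENNReal.toReal_ofReal (by positivity)] at h
    show (F d γ t : ℝ) ≤ (volume (S d γ 1)).toReal * (t + ∑ i, γ i) ^ d
    exact h.trans (le_of_eq (mul_comm _ _))

open Filter in
lemma squeeze {f g h : ℕ → ℝ} {l : ℝ} (hg : Tendsto g atTop (nhds l))
    (hh : Tendsto h atTop (nhds l)) (h1 : ∀ n, g n ≤ f n) (h2 : ∀ n, f n ≤ h n) :
    Tendsto f atTop (nhds l) :=
  tendsto_of_tendsto_of_tendsto_of_le_of_le hg hh h1 h2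

end Stmt7


open Stmt7

open Filter in
theorem stmt_7 (d : ℕ) (hd : 1 ≤ d) (γ : Fin d → ℝ) (hγ : ∀ i, 0 < γ i) :
    Tendsto (fun n : ℕ => meanWeight d γ (Delta d γ n) / maxWeight d γ (Delta d γ n))
      atTop (nhds ((d : ℝ) / (d + 1))) := by
  classical
  have hG0 : 0 ≤ ∑ i, γ i := Finset.sum_nonneg fun i _ => (hγ i).le
  have hV : 0 < V d γ := V_pos hγ
  set v := V d γ with hv
  have hd1 : (0:ℝ) < (d:ℝ) + 1 := by positivity
  -- counting asymptotics
  have haN : Tendsto (fun n : ℕ => (F d γ ((n:ℝ)+1) : ℝ) / ((n:ℝ)+1)^d) atTop (nhds v) := by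
    refine squeeze (g := fun _ => v)
      (h := fun n => v * ((((n:ℝ)+1) + (∑ i, γ i))/((n:ℝ)+1))^d) tendsto_const_nhds ?_ ?_ ?_
    · have h := (tendsto_ratio_pow (∑ i, γ i) d).const_mul v
      rw [mul_one] at h
      exact h.congr fun n => by ring_nf
    · intro n
      have hb := (F_bounds_real hγ (by positivity : (0:ℝ) < (n:ℝ)+1)).1
      rw [le_div_iff₀ (by positivity)]
      exact hb
    · intro n
      have hb := (F_bounds_real hγ (by positivity : (0:ℝ) < (n:ℝ)+1)).2
      rw [div_le_iff₀ (by positivity), mul_assoc, div_pow,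
        div_mul_cancel₀ _ (by positivity : (((n:ℝ)+1))^d ≠ 0)]
      exact hb
  -- bounds and limit for the partial sums A n of the counting function
  set c : ℕ := ⌈∑ i, γ i⌉₊ with hc
  have hGc : (∑ i, γ i) ≤ (c:ℝ) := Nat.le_ceil _
  have hAlow : ∀ n : ℕ, v * ((n:ℝ)+1)^(d+1)/((d:ℝ)+1) ≤
      ∑ k ∈ Finset.range (n+1), (F d γ ((k:ℝ)+1) : ℝ) := by
    intro n
    have h1 : ∀ k ∈ Finset.range (n+1), v * ((k:ℝ)+1)^d ≤ (F d γ ((k:ℝ)+1) : ℝ) :=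
      fun k _ => (F_bounds_real hγ (by positivity)).1
    calc v * ((n:ℝ)+1)^(d+1)/((d:ℝ)+1)
        ≤ v * ∑ k ∈ Finset.range (n+1), ((k:ℝ)+1)^d := by
          rw [div_le_iff₀ hd1]
          have := le_mul_sum_range_pow d (n+1)
          push_cast at this
          calc v * ((n:ℝ)+1)^(d+1) ≤ v * (((d:ℝ)+1) * ∑ k ∈ Finset.range (n+1), ((k:ℝ)+1)^d) :=
                mul_le_mul_of_nonneg_left this hV.le
            _ = v * (∑ k ∈ Finset.range (n+1), ((k:ℝ)+1)^d) * ((d:ℝ)+1) := by ring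
      _ = ∑ k ∈ Finset.range (n+1), v * ((k:ℝ)+1)^d := by rw [Finset.mul_sum]
      _ ≤ _ := Finset.sum_le_sum h1
  have hAup : ∀ n : ℕ, (∑ k ∈ Finset.range (n+1), (F d γ ((k:ℝ)+1) : ℝ)) ≤
      v * ((n:ℝ)+1+(1+c))^(d+1)/((d:ℝ)+1) := by
    intro n
    have h1 : ∀ k ∈ Finset.range (n+1), (F d γ ((k:ℝ)+1) : ℝ) ≤ v * (((c+1+k : ℕ)):ℝ)^d := by
      intro k _
      refine le_trans (F_bounds_real hγ (by positivity)).2 ?_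
      refine mul_le_mul_of_nonneg_left ?_ hV.le
      refine pow_le_pow_left₀ (by positivity) ?_ d
      push_cast; linarith
    have h2 : (∑ k ∈ Finset.range (n+1), (((c+1+k : ℕ)):ℝ)^d)
        ≤ ∑ j ∈ Finset.range (n+2+c), ((j:ℕ):ℝ)^d := by
      have hrw : ∑ k ∈ Finset.range (n+1), (((c+1+k : ℕ)):ℝ)^d
          = ∑ j ∈ Finset.Ico (c+1) (c+1+(n+1)), ((j:ℕ):ℝ)^d := by
        rw [Finset.sum_Ico_eq_sum_range]
        simp
      rw [hrw]
      refine Finset.sum_le_sum_of_subset_of_nonneg ?_ (fun j _ _ => by positivity)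
      intro j hj
      rw [Finset.mem_Ico] at hj
      rw [Finset.mem_range]
      omega
    have h3 := mul_sum_range_pow_le d (n+2+c)
    calc (∑ k ∈ Finset.range (n+1), (F d γ ((k:ℝ)+1) : ℝ))
        ≤ ∑ k ∈ Finset.range (n+1), v * (((c+1+k : ℕ)):ℝ)^d := Finset.sum_le_sum h1
      _ = v * ∑ k ∈ Finset.range (n+1), (((c+1+k : ℕ)):ℝ)^d := by rw [Finset.mul_sum]
      _ ≤ v * ∑ j ∈ Finset.range (n+2+c), ((j:ℕ):ℝ)^d := mul_le_mul_of_nonneg_left h2 hV.le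
      _ ≤ v * ((n:ℝ)+1+(1+c))^(d+1)/((d:ℝ)+1) := by
          rw [le_div_iff₀ hd1]
          have heq : ((n+2+c : ℕ) : ℝ) = (n:ℝ)+1+(1+c) := by push_cast; ring
          rw [← heq]
          calc v * (∑ j ∈ Finset.range (n+2+c), ((j:ℕ):ℝ)^d) * ((d:ℝ)+1)
              = v * (((d:ℝ)+1) * ∑ j ∈ Finset.range (n+2+c), ((j:ℕ):ℝ)^d) := by ring
            _ ≤ v * ((n+2+c : ℕ):ℝ)^(d+1) := mul_le_mul_of_nonneg_left h3 hV.le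
  have hA : Tendsto (fun n : ℕ => (∑ k ∈ Finset.range (n+1), (F d γ ((k:ℝ)+1) : ℝ))
      / ((n:ℝ)+1)^(d+1)) atTop (nhds (v/((d:ℝ)+1))) := by
    refine squeeze (g := fun _ => v/((d:ℝ)+1))
      (h := fun n => v/((d:ℝ)+1) * ((((n:ℝ)+1) + (1+(c:ℝ)))/((n:ℝ)+1))^(d+1))
      tendsto_const_nhds ?_ ?_ ?_
    · have h := (tendsto_ratio_pow (1+(c:ℝ)) (d+1)).const_mul (v/((d:ℝ)+1))
      rw [mul_one] at h
      exact h.congr fun n => by ring_nf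
    · intro n
      rw [le_div_iff₀ (by positivity)]
      have := hAlow n
      rw [div_le_iff₀ hd1] at this
      calc v/((d:ℝ)+1) * ((n:ℝ)+1)^(d+1) = v * ((n:ℝ)+1)^(d+1)/((d:ℝ)+1) := by ring
        _ ≤ _ := hAlow n
    · intro n
      rw [div_le_iff₀ (by positivity)]
      calc (∑ k ∈ Finset.range (n+1), (F d γ ((k:ℝ)+1) : ℝ))
          ≤ v * ((n:ℝ)+1+(1+c))^(d+1)/((d:ℝ)+1) := hAup n
        _ = v/((d:ℝ)+1) * ((((n:ℝ)+1) + (1+(c:ℝ)))/((n:ℝ)+1))^(d+1) * ((n:ℝ)+1)^(d+1) := by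
            rw [div_pow]
            field_simp
  -- limit of the normalized weight sum
  have hTinv : Tendsto (fun n : ℕ => (((n:ℝ)+1))⁻¹) atTop (nhds 0) := by
    have hT : Tendsto (fun n : ℕ => ((n:ℝ)+1)) atTop atTop :=
      tendsto_atTop_add_const_right _ 1 tendsto_natCast_atTop_atTop
    exact hT.inv_tendsto_atTop
  have hS : Tendsto (fun n : ℕ =>
      (∑ b ∈ (finite_lt hγ ((n:ℝ)+1)).toFinset, weight d γ b) / ((n:ℝ)+1)^(d+1))
      atTop (nhds (v - v/((d:ℝ)+1))) := by
    refine squeeze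
      (g := fun n => (F d γ ((n:ℝ)+1) : ℝ) / ((n:ℝ)+1)^d
        - (∑ k ∈ Finset.range (n+1), (F d γ ((k:ℝ)+1) : ℝ)) / ((n:ℝ)+1)^(d+1))
      (h := fun n => (F d γ ((n:ℝ)+1) : ℝ) / ((n:ℝ)+1)^d
        - (∑ k ∈ Finset.range (n+1), (F d γ ((k:ℝ)+1) : ℝ)) / ((n:ℝ)+1)^(d+1)
        + ((F d γ ((n:ℝ)+1) : ℝ) / ((n:ℝ)+1)^d) * (((n:ℝ)+1))⁻¹)
      (haN.sub hA) ?_ ?_ ?_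
    · have h := (haN.sub hA).add (haN.mul hTinv)
      rw [mul_zero, add_zero] at h
      exact h
    · intro n
      have hb := (sum_weight_bounds hγ n).1
      have hTn : (0:ℝ) < ((n:ℝ)+1)^(d+1) := by positivity
      have hTp : ((n:ℝ)+1) ≠ 0 := by positivity
      have hid : (F d γ ((n:ℝ)+1) : ℝ) / ((n:ℝ)+1)^d
          - (∑ k ∈ Finset.range (n+1), (F d γ ((k:ℝ)+1) : ℝ)) / ((n:ℝ)+1)^(d+1)
          = (((n:ℝ)+1) * (F d γ ((n:ℝ)+1) : ℝ)
              - (∑ k ∈ Finset.range (n+1), (F d γ ((k:ℝ)+1) : ℝ))) / ((n:ℝ)+1)^(d+1) := by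
        rw [pow_succ]
        field_simp
      rw [hid]
      exact div_le_div_of_nonneg_right hb hTn.le
    · intro n
      have hb := (sum_weight_bounds hγ n).2
      have hTn : (0:ℝ) < ((n:ℝ)+1)^(d+1) := by positivity
      have hTp : ((n:ℝ)+1) ≠ 0 := by positivity
      have hid : (F d γ ((n:ℝ)+1) : ℝ) / ((n:ℝ)+1)^d
          - (∑ k ∈ Finset.range (n+1), (F d γ ((k:ℝ)+1) : ℝ)) / ((n:ℝ)+1)^(d+1)
          + ((F d γ ((n:ℝ)+1) : ℝ) / ((n:ℝ)+1)^d) * (((n:ℝ)+1))⁻¹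
          = (((n:ℝ)+1) * (F d γ ((n:ℝ)+1) : ℝ)
              - (∑ k ∈ Finset.range (n+1), (F d γ ((k:ℝ)+1) : ℝ))
              + (F d γ ((n:ℝ)+1) : ℝ)) / ((n:ℝ)+1)^(d+1) := by
        rw [pow_succ]
        field_simp
      rw [hid]
      exact div_le_div_of_nonneg_right hb hTn.le
  -- limit of the normalized maximum
  have hM : Tendsto (fun n : ℕ => maxWeight d γ (Delta d γ n) / ((n:ℝ)+1)) atTop (nhds 1) := by
    refine squeeze (g := fun n => (((n:ℝ)+1) + (-(γ ⟨0, hd⟩)))/((n:ℝ)+1))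
      (h := fun _ => 1) ?_ tendsto_const_nhds ?_ ?_
    · have h := tendsto_ratio_pow (-(γ ⟨0, hd⟩)) 1
      simpa using h
    · intro n
      have := le_maxWeight hd hγ n
      have hTp : (0:ℝ) < (n:ℝ)+1 := by positivity
      rw [div_le_div_iff₀ hTp hTp]
      nlinarith [this, hTp]
    · intro n
      have := maxWeight_le hγ n
      have hTp : (0:ℝ) < (n:ℝ)+1 := by positivity
      rw [div_le_one hTp]
      exact this
  -- final assembly
  have hlim : Tendsto (fun n : ℕ =>
      ((∑ b ∈ (finite_lt hγ ((n:ℝ)+1)).toFinset, weight d γ b) / ((n:ℝ)+1)^(d+1))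
      / (((F d γ ((n:ℝ)+1) : ℝ) / ((n:ℝ)+1)^d) * (maxWeight d γ (Delta d γ n) / ((n:ℝ)+1))))
      atTop (nhds ((d:ℝ)/((d:ℝ)+1))) := by
    have hne : v * 1 ≠ 0 := by simp [hV.ne']
    have h := hS.div (haN.mul hM) hne
    have hval : (v - v/((d:ℝ)+1)) / (v * 1) = (d:ℝ)/((d:ℝ)+1) := by
      field_simp
      ring
    rwa [hval] at h
  refine hlim.congr fun n => ?_
  have hTp : ((n:ℝ)+1) ≠ 0 := by positivity
  have hFne : (F d γ ((n:ℝ)+1) : ℝ) ≠ 0 := by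
    have h := (F_bounds_real hγ (by positivity : (0:ℝ) < (n:ℝ)+1)).1
    have h2 : 0 < V d γ * ((n:ℝ)+1)^d :=
      mul_pos (V_pos hγ) (pow_pos (by positivity) d)
    exact ne_of_gt (lt_of_lt_of_le h2 h)
  have hmean : meanWeight d γ (Delta d γ n)
      = ((F d γ ((n:ℝ)+1) : ℝ))⁻¹ * ∑ b ∈ (finite_lt hγ ((n:ℝ)+1)).toFinset, weight d γ b := by
    rw [meanWeight, ncard_delta]
    congr 1
    exact finsum_mem_eq_finite_toFinset_sum _ (finite_lt hγ ((n:ℝ)+1))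
  rw [hmean]
  by_cases hM0 : maxWeight d γ (Delta d γ n) = 0
  · rw [hM0]
    simp
  · rw [pow_succ]
    field_simp
end

section
/- Let d ≥ 1 and let γ = (γ_1,…,γ_d) be a vector of positive integers (each γ_i ≥ 1), and for j ∈ ℕ let h_j := #{m ∈ ℕ^d | m·γ = j} (the Hilbert function of ℂ[X_1,…,X_d] graded by deg X_i = γ_i). Then for every n > 0 with Σ_{j=0}^n (n-j)·h_j ≠ 0, the quantity (Σ_{j=0}^n j·h_j)/(Σ_{j=0}^n (n-j)·h_j) = (n·Σ_{j=0}^n h_j)/(Σ_{j=0}^n (n-j)·h_j) − 1 is at most d, and it converges to d as n → ∞. -/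
/-- `h_j = #{m ∈ ℕ^d | m·γ = j}`, the Hilbert function of `ℂ[X_1,…,X_d]` with the
grading `deg X_i = γ_i`. -/
noncomputable def hilb (d : ℕ) (γ : Fin d → ℕ) (j : ℕ) : ℕ :=
  Set.ncard {m : Fin d → ℕ | ∑ i, m i * γ i = j}

/-- The quotient `(Σ_{j=0}^n j·h_j) / (Σ_{j=0}^n (n-j)·h_j)`. -/
noncomputable def hilbQuot (d : ℕ) (γ : Fin d → ℕ) (n : ℕ) : ℝ :=
  (∑ j ∈ Finset.range (n + 1), (j : ℝ) * hilb d γ j) /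
    (∑ j ∈ Finset.range (n + 1), ((n - j : ℕ) : ℝ) * hilb d γ j)

open Finset

variable {d : ℕ} (γ : Fin d → ℕ)

def deg (m : Fin d → ℕ) : ℕ := ∑ i, m i * γ i

noncomputable def A (n : ℕ) : Finset (Fin d → ℕ) :=
  (Fintype.piFinset fun _ : Fin d => Finset.range (n+1)).filter fun m => deg γ m ≤ n

lemma single_le_deg (m : Fin d → ℕ) (i : Fin d) : m i * γ i ≤ deg γ m :=
  Finset.single_le_sum (f := fun j => m j * γ j) (fun j _ => Nat.zero_le _) (Finset.mem_univ i)

lemma mem_A (hγ : ∀ i, 0 < γ i) {n : ℕ} {m : Fin d → ℕ} : m ∈ A γ n ↔ deg γ m ≤ n := by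
  constructor
  · exact fun h => (Finset.mem_filter.mp h).2
  · intro h
    refine Finset.mem_filter.mpr ⟨Fintype.mem_piFinset.mpr fun i => Finset.mem_range.mpr ?_, h⟩
    have h1 := single_le_deg γ m i
    have h2 : m i * 1 ≤ m i * γ i := Nat.mul_le_mul_left _ (hγ i)
    omega

lemma deg_update (m : Fin d → ℕ) (i : Fin d) (c : ℕ) :
    deg γ (Function.update m i c) + m i * γ i = deg γ m + c * γ i := by
  have key : ∀ f : Fin d → ℕ, deg γ f = f i * γ i + ∑ j ∈ Finset.univ.erase i, f j * γ j := by
    intro f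
    rw [deg, ← Finset.add_sum_erase _ _ (Finset.mem_univ i)]
  rw [key (Function.update m i c), key m]
  have he : ∑ j ∈ Finset.univ.erase i, Function.update m i c j * γ j
      = ∑ j ∈ Finset.univ.erase i, m j * γ j := by
    refine Finset.sum_congr rfl fun j hj => ?_
    rw [Function.update_of_ne (Finset.ne_of_mem_erase hj)]
  rw [he, Function.update_self]
  ring


lemma hilb_eq_card (hγ : ∀ i, 0 < γ i) {n j : ℕ} (hj : j ≤ n) :
    hilb d γ j = ((A γ n).filter fun m => deg γ m = j).card := by
  rw [← Set.ncard_coe_finset, hilb]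
  congr 1
  ext m
  simp only [Finset.coe_filter, Set.mem_setOf_eq, mem_A γ hγ]
  show deg γ m = j ↔ _
  constructor
  · intro h; exact ⟨h ▸ hj, h⟩
  · exact fun h => h.2

lemma sum_hilb_eq (hγ : ∀ i, 0 < γ i) (n : ℕ) (c : ℕ → ℕ) :
    ∑ j ∈ Finset.range (n+1), c j * hilb d γ j = ∑ m ∈ A γ n, c (deg γ m) := by
  have h1 : ∀ j ∈ Finset.range (n+1), c j * hilb d γ j
      = ∑ m ∈ (A γ n).filter (fun m => deg γ m = j), c (deg γ m) := by
    intro j hj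
    have hj' : j ≤ n := by simpa [Nat.lt_succ_iff] using hj
    rw [hilb_eq_card γ hγ hj',
      Finset.sum_congr rfl (fun m hm => by rw [(Finset.mem_filter.mp hm).2]),
      Finset.sum_const, smul_eq_mul, mul_comm]
  rw [Finset.sum_congr rfl h1]
  exact Finset.sum_fiberwise_of_maps_to (fun m hm => Finset.mem_range.mpr
    (Nat.lt_succ_of_le ((mem_A γ hγ).mp hm))) _

lemma keyA (hγ : ∀ i, 0 < γ i) (n : ℕ) (i : Fin d) :
    ∑ m ∈ A γ n, m i * γ i ≤ ∑ m ∈ A γ n, (n - deg γ m) := by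
  classical
  have hcard : ∀ c : (Fin d → ℕ) → ℕ,
      ∑ m ∈ A γ n, c m = ((A γ n).sigma fun m => Finset.range (c m)).card := by
    intro c; rw [Finset.card_sigma]; simp
  rw [hcard (fun m => m i * γ i), hcard (fun m => n - deg γ m)]
  apply Finset.card_le_card_of_injOn
    (fun p => ⟨Function.update p.1 i (p.1 i - (p.2 / γ i + 1)),
       (n - deg γ p.1) + p.2 % γ i⟩)
  · rintro ⟨m, v⟩ hp
    simp only [Finset.mem_coe, Finset.mem_sigma, Finset.mem_range] at hp
    obtain ⟨hm, hv⟩ := hp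
    dsimp only
    simp only [Finset.mem_coe, Finset.mem_sigma, Finset.mem_range, mem_A γ hγ]
    obtain ⟨q, hq⟩ : ∃ q, v / γ i = q := ⟨_, rfl⟩
    obtain ⟨r, hr'⟩ : ∃ r, v % γ i = r := ⟨_, rfl⟩
    rw [hq, hr']
    have hr : r < γ i := hr' ▸ Nat.mod_lt _ (hγ i)
    have hdeg := (mem_A γ hγ).mp hm
    have ht' : q + 1 ≤ m i := by
      have h2 : v / γ i < m i := (Nat.div_lt_iff_lt_mul (hγ i)).mpr hv
      omega
    have hg : γ i ≤ (q + 1) * γ i := Nat.le_mul_of_pos_left _ (Nat.succ_pos q)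
    have hmul : (m i - (q + 1)) * γ i + (q + 1) * γ i = m i * γ i := by
      rw [← Nat.add_mul]; congr 1; omega
    have hupd := deg_update γ m i (m i - (q + 1))
    have hXD := single_le_deg γ m i
    omega
  · rintro ⟨m₁, v₁⟩ h₁ ⟨m₂, v₂⟩ h₂ heq
    simp only [Finset.coe_sigma, Set.mem_sigma_iff, Finset.mem_coe, Finset.mem_range] at h₁ h₂
    obtain ⟨hm₁, hv₁⟩ := h₁
    obtain ⟨hm₂, hv₂⟩ := h₂
    obtain ⟨ha, hu'⟩ := Sigma.ext_iff.mp heq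
    dsimp only at ha hu'
    have hu := eq_of_heq hu'
    clear heq hu'
    obtain ⟨q₁, hq₁⟩ : ∃ q, v₁ / γ i = q := ⟨_, rfl⟩
    obtain ⟨r₁, hr₁'⟩ : ∃ r, v₁ % γ i = r := ⟨_, rfl⟩
    obtain ⟨q₂, hq₂⟩ : ∃ q, v₂ / γ i = q := ⟨_, rfl⟩
    obtain ⟨r₂, hr₂'⟩ : ∃ r, v₂ % γ i = r := ⟨_, rfl⟩
    rw [hq₁, hq₂] at ha
    rw [hr₁', hr₂'] at hu
    have hr₁ : r₁ < γ i := hr₁' ▸ Nat.mod_lt _ (hγ i)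
    have hr₂ : r₂ < γ i := hr₂' ▸ Nat.mod_lt _ (hγ i)
    have hvqr₁ : (γ i * q₁ + r₁ : ℕ) = v₁ := by
      rw [← hq₁, ← hr₁']; exact Nat.div_add_mod v₁ (γ i)
    have hvqr₂ : (γ i * q₂ + r₂ : ℕ) = v₂ := by
      rw [← hq₂, ← hr₂']; exact Nat.div_add_mod v₂ (γ i)
    have hdeg₁ := (mem_A γ hγ).mp hm₁
    have hdeg₂ := (mem_A γ hγ).mp hm₂
    have ht₁ : q₁ + 1 ≤ m₁ i := by
      have h2 : v₁ / γ i < m₁ i := (Nat.div_lt_iff_lt_mul (hγ i)).mpr hv₁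
      omega
    have ht₂ : q₂ + 1 ≤ m₂ i := by
      have h2 : v₂ / γ i < m₂ i := (Nat.div_lt_iff_lt_mul (hγ i)).mpr hv₂
      omega
    have hg₁ : γ i ≤ (q₁ + 1) * γ i := Nat.le_mul_of_pos_left _ (Nat.succ_pos q₁)
    have hg₂ : γ i ≤ (q₂ + 1) * γ i := Nat.le_mul_of_pos_left _ (Nat.succ_pos q₂)
    have hmul₁ : (m₁ i - (q₁ + 1)) * γ i + (q₁ + 1) * γ i = m₁ i * γ i := by
      rw [← Nat.add_mul]; congr 1; omega
    have hmul₂ : (m₂ i - (q₂ + 1)) * γ i + (q₂ + 1) * γ i = m₂ i * γ i := by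
      rw [← Nat.add_mul]; congr 1; omega
    have hupd₁ := deg_update γ m₁ i (m₁ i - (q₁ + 1))
    have hupd₂ := deg_update γ m₂ i (m₂ i - (q₂ + 1))
    have hXD₁ := single_le_deg γ m₁ i
    have hXD₂ := single_le_deg γ m₂ i
    have hE : deg γ (Function.update m₁ i (m₁ i - (q₁ + 1)))
        = deg γ (Function.update m₂ i (m₂ i - (q₂ + 1))) := congrArg (deg γ) ha
    have hkey : r₁ + (q₂ + 1) * γ i = r₂ + (q₁ + 1) * γ i := by omega
    have hb12 : r₁ = r₂ := by
      have h := congrArg (· % γ i) hkey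
      simpa [Nat.add_mul_mod_self_right, Nat.mod_eq_of_lt hr₁, Nat.mod_eq_of_lt hr₂] using h
    have ht12 : q₂ + 1 = q₁ + 1 := Nat.eq_of_mul_eq_mul_right (hγ i) (by omega)
    have hq12 : q₁ = q₂ := by omega
    subst hq12
    subst hb12
    have hv12 : v₁ = v₂ := by omega
    have hii : m₁ i - (q₁ + 1) = m₂ i - (q₁ + 1) := by
      have h := congrFun ha i
      rwa [Function.update_self, Function.update_self] at h
    have hm12 : m₁ = m₂ := by
      funext j
      by_cases hji : j = i
      · subst hji; omega
      · have h := congrFun ha j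
        rwa [Function.update_of_ne hji, Function.update_of_ne hji] at h
    rw [Sigma.mk.inj_iff]
    exact ⟨hm12, heq_of_eq hv12⟩

lemma keyB (hγ : ∀ i, 0 < γ i) (n : ℕ) (i : Fin d) :
    ∑ m ∈ A γ n, (n + 1 - deg γ m) ≤ ∑ m ∈ A γ n, (m i + 1) * γ i := by
  classical
  have hcard : ∀ c : (Fin d → ℕ) → ℕ,
      ∑ m ∈ A γ n, c m = ((A γ n).sigma fun m => Finset.range (c m)).card := by
    intro c; rw [Finset.card_sigma]; simp
  rw [hcard (fun m => n + 1 - deg γ m), hcard (fun m => (m i + 1) * γ i)]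
  apply Finset.card_le_card_of_injOn
    (fun p => ⟨Function.update p.1 i (p.1 i + (n - deg γ p.1 - p.2) / γ i),
       n - deg γ p.1 - p.2⟩)
  · rintro ⟨m, u⟩ hp
    simp only [Finset.mem_coe, Finset.mem_sigma, Finset.mem_range] at hp
    obtain ⟨hm, hu⟩ := hp
    dsimp only
    simp only [Finset.mem_coe, Finset.mem_sigma, Finset.mem_range, mem_A γ hγ, Function.update_self]
    obtain ⟨q, hq⟩ : ∃ q, (n - deg γ m - u) / γ i = q := ⟨_, rfl⟩
    obtain ⟨r, hr'⟩ : ∃ r, (n - deg γ m - u) % γ i = r := ⟨_, rfl⟩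
    rw [hq]
    have hr : r < γ i := hr' ▸ Nat.mod_lt _ (hγ i)
    have hD : γ i * q + r = n - deg γ m - u := by
      rw [← hq, ← hr']; exact Nat.div_add_mod _ (γ i)
    have hdeg := (mem_A γ hγ).mp hm
    have hupd := deg_update γ m i (m i + q)
    have hmul : (m i + q) * γ i = m i * γ i + q * γ i := by rw [Nat.add_mul]
    have hmul2 : (m i + q + 1) * γ i = m i * γ i + q * γ i + γ i := by ring
    have hcomm : γ i * q = q * γ i := Nat.mul_comm _ _
    have hXD := single_le_deg γ m i
    omega
  · rintro ⟨m₁, u₁⟩ h₁ ⟨m₂, u₂⟩ h₂ heq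
    simp only [Finset.coe_sigma, Set.mem_sigma_iff, Finset.mem_coe, Finset.mem_range] at h₁ h₂
    obtain ⟨hm₁, hu₁⟩ := h₁
    obtain ⟨hm₂, hu₂⟩ := h₂
    obtain ⟨ha, hu'⟩ := Sigma.ext_iff.mp heq
    dsimp only at ha hu'
    have hu := eq_of_heq hu'
    clear heq hu'
    obtain ⟨q₁, hq₁⟩ : ∃ q, (n - deg γ m₁ - u₁) / γ i = q := ⟨_, rfl⟩
    obtain ⟨q₂, hq₂⟩ : ∃ q, (n - deg γ m₂ - u₂) / γ i = q := ⟨_, rfl⟩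
    rw [hq₁, hq₂] at ha
    have hq12 : q₁ = q₂ := by rw [← hq₁, ← hq₂, hu]
    subst hq12
    have hm12 : m₁ = m₂ := by
      funext j
      by_cases hji : j = i
      · subst hji
        have h := congrFun ha j
        rw [Function.update_self, Function.update_self] at h
        omega
      · have h := congrFun ha j
        rwa [Function.update_of_ne hji, Function.update_of_ne hji] at h
    subst hm12
    have hdeg := (mem_A γ hγ).mp hm₁
    have hu12 : u₁ = u₂ := by omega
    rw [hu12]

lemma ineqA (hγ : ∀ i, 0 < γ i) (n : ℕ) :
    n * (A γ n).card ≤ (d + 1) * ∑ m ∈ A γ n, (n - deg γ m) := by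
  have h1 : n * (A γ n).card = ∑ m ∈ A γ n, n := by
    rw [Finset.sum_const, smul_eq_mul, mul_comm]
  have h2 : ∀ m ∈ A γ n, n = deg γ m + (n - deg γ m) := fun m hm => by
    have := (mem_A γ hγ).mp hm; omega
  rw [h1, Finset.sum_congr rfl h2, Finset.sum_add_distrib]
  have h3 : ∑ m ∈ A γ n, deg γ m = ∑ i : Fin d, ∑ m ∈ A γ n, m i * γ i := by
    simp only [deg]
    exact Finset.sum_comm
  have h4 : ∑ i : Fin d, ∑ m ∈ A γ n, m i * γ i
      ≤ ∑ i : Fin d, ∑ m ∈ A γ n, (n - deg γ m) :=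
    Finset.sum_le_sum fun i _ => keyA γ hγ n i
  rw [h3]
  have h5 : ∑ i : Fin d, ∑ m ∈ A γ n, (n - deg γ m) = d * ∑ m ∈ A γ n, (n - deg γ m) := by
    rw [Finset.sum_const, Finset.card_univ, Fintype.card_fin, smul_eq_mul]
  calc ∑ i : Fin d, ∑ m ∈ A γ n, m i * γ i + ∑ m ∈ A γ n, (n - deg γ m)
      ≤ d * ∑ m ∈ A γ n, (n - deg γ m) + ∑ m ∈ A γ n, (n - deg γ m) := by
        rw [← h5]; exact Nat.add_le_add_right h4 _
    _ = (d + 1) * ∑ m ∈ A γ n, (n - deg γ m) := by ring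

lemma ineqB (hγ : ∀ i, 0 < γ i) (n : ℕ) :
    (d + 1) * (∑ m ∈ A γ n, (n - deg γ m) + (A γ n).card)
      ≤ (n + 1 + ∑ i, γ i) * (A γ n).card := by
  have hq : ∑ m ∈ A γ n, (n - deg γ m) + (A γ n).card = ∑ m ∈ A γ n, (n + 1 - deg γ m) := by
    have h2 : ∀ m ∈ A γ n, n + 1 - deg γ m = (n - deg γ m) + 1 := fun m hm => by
      have := (mem_A γ hγ).mp hm; omega
    rw [Finset.sum_congr rfl h2, Finset.sum_add_distrib, Finset.sum_const,
      smul_eq_mul, mul_one]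
  rw [hq]
  have hsplit : (d + 1) * ∑ m ∈ A γ n, (n + 1 - deg γ m)
      = (∑ i : Fin d, ∑ m ∈ A γ n, (n + 1 - deg γ m)) + ∑ m ∈ A γ n, (n + 1 - deg γ m) := by
    rw [Finset.sum_const, Finset.card_univ, Fintype.card_fin, smul_eq_mul]
    ring
  rw [hsplit]
  have h4 : ∑ i : Fin d, ∑ m ∈ A γ n, (n + 1 - deg γ m)
      ≤ ∑ i : Fin d, ∑ m ∈ A γ n, (m i + 1) * γ i :=
    Finset.sum_le_sum fun i _ => keyB γ hγ n i
  have h5 : (∑ i : Fin d, ∑ m ∈ A γ n, (m i + 1) * γ i) + ∑ m ∈ A γ n, (n + 1 - deg γ m)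
      = (n + 1 + ∑ i, γ i) * (A γ n).card := by
    rw [Finset.sum_comm (s := Finset.univ) (t := A γ n)]
    rw [← Finset.sum_add_distrib]
    have hterm : ∀ m ∈ A γ n,
        (∑ i : Fin d, (m i + 1) * γ i) + (n + 1 - deg γ m) = n + 1 + ∑ i, γ i := by
      intro m hm
      have hdeg := (mem_A γ hγ).mp hm
      have hsum : ∑ i : Fin d, (m i + 1) * γ i = deg γ m + ∑ i, γ i :=
        calc ∑ i : Fin d, (m i + 1) * γ i = ∑ i : Fin d, (m i * γ i + γ i) :=
              Finset.sum_congr rfl fun i _ => by ring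
          _ = deg γ m + ∑ i, γ i := Finset.sum_add_distrib
      clear * - hdeg hsum
      omega
    rw [Finset.sum_congr rfl hterm, Finset.sum_const, smul_eq_mul, mul_comm]
  calc (∑ i : Fin d, ∑ m ∈ A γ n, (n + 1 - deg γ m)) + ∑ m ∈ A γ n, (n + 1 - deg γ m)
      ≤ (∑ i : Fin d, ∑ m ∈ A γ n, (m i + 1) * γ i) + ∑ m ∈ A γ n, (n + 1 - deg γ m) :=
        Nat.add_le_add_right h4 _
    _ = _ := h5

lemma T_ge (hγ : ∀ i, 0 < γ i) (n : ℕ) : n ≤ ∑ m ∈ A γ n, (n - deg γ m) := by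
  have h0 : (fun _ => 0 : Fin d → ℕ) ∈ A γ n := (mem_A γ hγ).mpr (by simp [deg])
  have := Finset.single_le_sum (f := fun m => n - deg γ m) (fun m _ => Nat.zero_le _) h0
  simpa [deg] using this


open Filter in
theorem stmt_12 (d : ℕ) (hd : 1 ≤ d) (γ : Fin d → ℕ) (hγ : ∀ i, 0 < γ i) :
    (∀ n : ℕ, 0 < n →
      (∑ j ∈ Finset.range (n + 1), ((n - j : ℕ) : ℝ) * hilb d γ j) ≠ 0 →
        hilbQuot d γ n =
            (n * ∑ j ∈ Finset.range (n + 1), (hilb d γ j : ℝ)) /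
              (∑ j ∈ Finset.range (n + 1), ((n - j : ℕ) : ℝ) * hilb d γ j) - 1 ∧
          hilbQuot d γ n ≤ d) ∧
      Tendsto (fun n : ℕ => hilbQuot d γ n) atTop (nhds (d : ℝ)) := by
  classical
  set P : ℕ → ℕ := fun n => (A γ n).card with hP
  set T : ℕ → ℕ := fun n => ∑ m ∈ A γ n, (n - deg γ m) with hT
  have hPsum : ∀ n : ℕ, ∑ j ∈ Finset.range (n+1), (hilb d γ j : ℝ) = (P n : ℝ) := by
    intro n
    have h := sum_hilb_eq γ hγ n (fun _ => 1)
    simp only [one_mul] at h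
    rw [Finset.sum_const, smul_eq_mul, mul_one] at h
    calc ∑ j ∈ Finset.range (n+1), (hilb d γ j : ℝ)
        = ((∑ j ∈ Finset.range (n+1), hilb d γ j : ℕ) : ℝ) := by push_cast; ring
      _ = (P n : ℝ) := by rw [h]
  have hTsum : ∀ n : ℕ,
      ∑ j ∈ Finset.range (n+1), ((n - j : ℕ) : ℝ) * hilb d γ j = (T n : ℝ) := by
    intro n
    have h := sum_hilb_eq γ hγ n (fun j => n - j)
    calc ∑ j ∈ Finset.range (n+1), ((n - j : ℕ) : ℝ) * hilb d γ j
        = ((∑ j ∈ Finset.range (n+1), (n - j) * hilb d γ j : ℕ) : ℝ) := by push_cast; ring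
      _ = (T n : ℝ) := by rw [h]
  have hNum : ∀ n : ℕ,
      ∑ j ∈ Finset.range (n+1), (j : ℝ) * hilb d γ j = n * (P n : ℝ) - (T n : ℝ) := by
    intro n
    have hcongr : ∀ j ∈ Finset.range (n+1), (j:ℝ) * hilb d γ j
        = (n:ℝ) * hilb d γ j - ((n-j:ℕ):ℝ) * hilb d γ j := by
      intro j hj
      have hj' : j ≤ n := Nat.lt_succ_iff.mp (Finset.mem_range.mp hj)
      have hc : ((n - j : ℕ) : ℝ) = (n:ℝ) - (j:ℝ) := by
        push_cast [hj']; ring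
      rw [hc]; ring
    rw [Finset.sum_congr rfl hcongr, Finset.sum_sub_distrib, ← Finset.mul_sum,
      hPsum n, hTsum n]
  have hTn : ∀ n : ℕ, n ≤ T n := fun n => T_ge γ hγ n
  have hTpos : ∀ n : ℕ, 1 ≤ n → (0:ℝ) < T n := by
    intro n hn
    have h1 : (1:ℕ) ≤ T n := le_trans hn (hTn n)
    exact_mod_cast Nat.lt_of_lt_of_le Nat.zero_lt_one h1
  constructor
  · intro n hn hT0
    rw [hTsum n] at hT0
    have hTpos' : (0:ℝ) < T n := lt_of_le_of_ne (Nat.cast_nonneg _) (Ne.symm hT0)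
    have heq : hilbQuot d γ n = (n * (P n : ℝ)) / (T n : ℝ) - 1 := by
      simp only [hilbQuot]
      rw [hNum n, hTsum n, sub_div, div_self hT0]
    constructor
    · rw [heq, hPsum n, hTsum n]
    · rw [heq, sub_le_iff_le_add, div_le_iff₀ hTpos']
      exact_mod_cast ineqA γ hγ n
  · set C : ℕ := 1 + ∑ i, γ i with hC
    have hBr : ∀ n : ℕ, ((d:ℝ)+1) * T n ≤ ((n:ℝ) + C) * P n := by
      intro n
      have hB := ineqB γ hγ n
      have h1 : (d+1) * T n ≤ (n + 1 + ∑ i, γ i) * P n :=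
        le_trans (Nat.mul_le_mul_left _ (Nat.le_add_right _ _)) hB
      calc ((d:ℝ)+1) * T n = (((d+1) * T n : ℕ) : ℝ) := by push_cast; ring
        _ ≤ (((n + 1 + ∑ i, γ i) * P n : ℕ) : ℝ) := by exact_mod_cast h1
        _ = ((n:ℝ) + C) * P n := by rw [hC]; push_cast; ring
    have hAr : ∀ n : ℕ, (n:ℝ) * P n ≤ ((d:ℝ)+1) * T n := fun n => by
      exact_mod_cast ineqA γ hγ n
    have key : Tendsto (fun n : ℕ => (n:ℝ) * P n / T n) atTop (nhds ((d:ℝ)+1)) := by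
      apply tendsto_of_tendsto_of_tendsto_of_le_of_le'
        (g := fun n : ℕ => ((d:ℝ)+1) * ((n:ℝ) / ((n:ℝ) + C)))
        (h := fun _ : ℕ => (d:ℝ)+1)
      · have h1 : Tendsto (fun n : ℕ => (n:ℝ)/((n:ℝ) + C)) atTop (nhds 1) :=
          tendsto_natCast_div_add_atTop (C:ℝ)
        have h2 := h1.const_mul ((d:ℝ)+1)
        simpa using h2
      · exact tendsto_const_nhds
      · filter_upwards [eventually_ge_atTop 1] with n hn
        have hTp := hTpos n hn
        have hn1 : (1:ℝ) ≤ (n:ℝ) := by exact_mod_cast hn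
        have hC0 : (0:ℝ) ≤ (C:ℝ) := Nat.cast_nonneg _
        have hnC : (0:ℝ) < (n:ℝ) + C := by linarith
        rw [show ((d:ℝ)+1) * ((n:ℝ)/((n:ℝ)+C)) = (((d:ℝ)+1) * n)/((n:ℝ)+C) from by ring,
          div_le_div_iff₀ hnC hTp]
        have h5 := mul_le_mul_of_nonneg_left (hBr n) (Nat.cast_nonneg n : (0:ℝ) ≤ n)
        nlinarith [h5]
      · filter_upwards [eventually_ge_atTop 1] with n hn
        have hTp := hTpos n hn
        rw [div_le_iff₀ hTp]
        exact hAr n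
    have heq' : (fun n : ℕ => (n:ℝ) * P n / T n - 1) =ᶠ[atTop] fun n => hilbQuot d γ n := by
      filter_upwards [eventually_ge_atTop 1] with n hn
      have hTp := hTpos n hn
      simp only [hilbQuot]
      rw [hNum n, hTsum n, sub_div, div_self (ne_of_gt hTp)]
    have h6 : Tendsto (fun n : ℕ => (n:ℝ) * P n / T n - 1) atTop (nhds ((d:ℝ)+1-1)) :=
      key.sub_const 1
    rw [show ((d:ℝ)+1-1) = (d:ℝ) from by ring] at h6
    exact h6.congr' heq'
end

section
/- Let d ≥ 1, let γ_1,…,γ_d be positive integers, and grade the polynomial ring ℂ[X_1,…,X_d] by deg X_i = γ_i. Let I ⊆ ℂ[X_1,…,X_d] be an ideal that is homogeneous with respect to this weighted grading and such that the quotient ℂ[X_1,…,X_d]/I is a finite-dimensional ℂ-vector space (I is Artinian). Let h_n denote the Hilbert function of ℂ[X_1,…,X_d]/I, i.e., h_n = dim_ℂ of the degree-n graded piece of the quotient. If h_m ≠ 0 and h_n = 0 for all n > m, then Σ_{j=0}^m j·h_j ≤ (d/(d+1))·m·Σ_{j=0}^m h_j. -/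
open MvPolynomial

namespace ZhaiAux

variable {d : ℕ} {γ : Fin d → ℕ}

lemma W_eq (a : Fin d →₀ ℕ) : Finsupp.weight γ a = ∑ i, a i * γ i := by
  rw [Finsupp.weight_apply, Finsupp.sum_fintype]
  · simp [mul_comm]
  · intro i; simp

lemma coord_le_W (hγ : ∀ i, 0 < γ i) (i : Fin d) (a : Fin d →₀ ℕ) :
    a i ≤ Finsupp.weight γ a := by
  calc a i ≤ a i * γ i := Nat.le_mul_of_pos_right _ (hγ i)
  _ ≤ ∑ j, a j * γ j := Finset.single_le_sum (f := fun j => a j * γ j)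
      (fun j _ => Nat.zero_le _) (Finset.mem_univ i)
  _ = _ := (W_eq a).symm

lemma W_update (a : Fin d →₀ ℕ) (i : Fin d) (k : ℕ) :
    Finsupp.weight γ (a.update i k) + a i * γ i = Finsupp.weight γ a + k * γ i := by
  classical
  rw [W_eq, W_eq]
  have key : ∀ b : Fin d →₀ ℕ, (∑ j ∈ Finset.univ.erase i, b j * γ j) + b i * γ i
      = ∑ j, b j * γ j := fun b => Finset.sum_erase_add _ _ (Finset.mem_univ i)
  rw [← key (a.update i k), ← key a]
  have e1 : ∑ j ∈ Finset.univ.erase i, (a.update i k) j * γ j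
      = ∑ j ∈ Finset.univ.erase i, a j * γ j := by
    refine Finset.sum_congr rfl fun j hj => ?_
    rw [Finsupp.coe_update, Function.update_of_ne (Finset.ne_of_mem_erase hj)]
  have e2 : (a.update i k) i = k := by simp [Finsupp.coe_update]
  rw [e1, e2]; ring

lemma update_le_update (a : Fin d →₀ ℕ) (i : Fin d) {x y : ℕ} (hxy : x ≤ y) :
    a.update i x ≤ a.update i y := by
  classical
  rw [Finsupp.le_def]
  intro j
  simp only [Finsupp.coe_update, Function.update_apply]
  split_ifs <;> simp [hxy]

/-- Zhai's combinatorial lemma: for a finite downward-closed set of exponents all of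
weight at most `m`, the total weight is at most `d/(d+1) · m · card`. -/
theorem comb (hγ : ∀ i, 0 < γ i) (m : ℕ) (F : Finset (Fin d →₀ ℕ))
    (hdown : ∀ a ∈ F, ∀ b : Fin d →₀ ℕ, b ≤ a → b ∈ F)
    (hbound : ∀ a ∈ F, Finsupp.weight γ a ≤ m) :
    (d + 1) * ∑ a ∈ F, Finsupp.weight γ a ≤ d * (m * F.card) := by
  classical
  have key : ∀ i : Fin d, (∑ a ∈ F, a i * γ i) + ∑ a ∈ F, Finsupp.weight γ a
      ≤ m * F.card := by
    intro i
    set fs : (Fin d →₀ ℕ) → Finset ℕ :=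
      fun a => (Finset.range (m + 1)).filter (fun k => a.update i k ∈ F) with hfs
    set U : (Fin d →₀ ℕ) → ℕ :=
      fun a => if h : (fs a).Nonempty then (fs a).max' h else 0 with hUdef
    have hmemfs : ∀ a ∈ F, a i ∈ fs a := by
      intro a ha
      rw [hfs]
      refine Finset.mem_filter.2 ⟨Finset.mem_range.2 ?_, by rw [Finsupp.update_self]; exact ha⟩
      exact Nat.lt_succ_of_le ((coord_le_W hγ i a).trans (hbound a ha))
    have hne : ∀ a ∈ F, (fs a).Nonempty := fun a ha => ⟨a i, hmemfs a ha⟩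
    have hU1 : ∀ a ∈ F, a i ≤ U a := by
      intro a ha
      rw [hUdef]; simp only [dif_pos (hne a ha)]
      exact Finset.le_max' _ _ (hmemfs a ha)
    have hU2 : ∀ a ∈ F, a.update i (U a) ∈ F := by
      intro a ha
      rw [hUdef]; simp only [dif_pos (hne a ha)]
      exact (Finset.mem_filter.1 ((fs a).max'_mem (hne a ha))).2
    have hU3 : ∀ (a : Fin d →₀ ℕ) (k : ℕ), U (a.update i k) = U a := by
      intro a k
      have : fs (a.update i k) = fs a := by
        rw [hfs]
        refine Finset.filter_congr fun k' _ => ?_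
        rw [Finsupp.update_idem]
      rw [hUdef]; simp only [this]
    set φ : (Fin d →₀ ℕ) → (Fin d →₀ ℕ) := fun a => a.update i (U a - a i) with hφ
    have hφmem : ∀ a ∈ F, φ a ∈ F := by
      intro a ha
      exact hdown _ (hU2 a ha) _ (update_le_update a i (Nat.sub_le _ _))
    have hφi : ∀ a : Fin d →₀ ℕ, (φ a) i = U a - a i := by
      intro a; rw [hφ]; simp [Finsupp.coe_update]
    have hφφ : ∀ a ∈ F, φ (φ a) = a := by
      intro a ha
      rw [hφ]
      simp only [Finsupp.update_idem, hU3, hφi]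
      rw [show (a.update i (U a - a i)) i = U a - a i by simp [Finsupp.coe_update],
        Nat.sub_sub_self (hU1 a ha), Finsupp.update_self]
    have hφbd : ∀ a ∈ F, (φ a) i * γ i + Finsupp.weight γ a ≤ m := by
      intro a ha
      have h2 : Finsupp.weight γ (a.update i (U a)) ≤ m := hbound _ (hU2 a ha)
      have h3 := W_update (γ := γ) a i (U a)
      have h4 := hU1 a ha
      rw [hφi, Nat.sub_mul]
      have h5 : a i * γ i ≤ U a * γ i := Nat.mul_le_mul_right _ h4
      omega
    have hre : ∑ a ∈ F, a i * γ i = ∑ a ∈ F, (φ a) i * γ i := by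
      refine Finset.sum_nbij' φ φ hφmem hφmem hφφ hφφ fun a ha => ?_
      rw [hφφ a ha]
    rw [hre, ← Finset.sum_add_distrib]
    calc ∑ a ∈ F, ((φ a) i * γ i + Finsupp.weight γ a) ≤ ∑ _a ∈ F, m :=
          Finset.sum_le_sum hφbd
      _ = m * F.card := by rw [Finset.sum_const, smul_eq_mul, mul_comm]
  have tot := Finset.sum_le_sum (fun i (_ : i ∈ Finset.univ) => key i)
  rw [Finset.sum_const, Finset.card_univ, Fintype.card_fin, smul_eq_mul] at tot
  rw [Finset.sum_add_distrib, Finset.sum_const, Finset.card_univ, Fintype.card_fin,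
    smul_eq_mul, Finset.sum_comm] at tot
  have e : ∑ a ∈ F, ∑ i, a i * γ i = ∑ a ∈ F, Finsupp.weight γ a :=
    Finset.sum_congr rfl fun a _ => (W_eq a).symm
  rw [e] at tot
  have goal2 : d * ∑ a ∈ F, Finsupp.weight γ a + 1 * ∑ a ∈ F, Finsupp.weight γ a
      ≤ d * (m * F.card) := by
    rw [one_mul]; omega
  rw [add_mul]; exact goal2

variable (γ) (I : Ideal (MvPolynomial (Fin d) ℂ))

/-- The submodule of "reducers" of the monomial `X^a`: the ideal `I` together with all
monomials of the same weighted degree that are lexicographically smaller. -/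
noncomputable def SM (a : Fin d →₀ ℕ) : Submodule ℂ (MvPolynomial (Fin d) ℂ) :=
  (Submodule.restrictScalars ℂ I) ⊔ Submodule.span ℂ
    {q | ∃ b : Fin d →₀ ℕ, Finsupp.weight γ b = Finsupp.weight γ a ∧
      toLex b < toLex a ∧ q = monomial b 1}

/-- The set of standard monomial exponents. -/
def Bset : Set (Fin d →₀ ℕ) := {a | monomial a 1 ∉ SM γ I a}

lemma SM_mul {a : Fin d →₀ ℕ} (c : Fin d →₀ ℕ)
    (hmem : monomial a 1 ∈ SM γ I a) : monomial (a + c) 1 ∈ SM γ I (a + c) := by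
  classical
  set L := LinearMap.mulLeft ℂ (monomial c (1 : ℂ)) with hL
  have h2 : monomial (a + c) (1 : ℂ) = L (monomial a 1) := by
    rw [hL, LinearMap.mulLeft_apply, monomial_mul, one_mul, add_comm]
  have h3 : L (monomial a 1) ∈ Submodule.map L (SM γ I a) :=
    Submodule.mem_map_of_mem hmem
  have h4 : Submodule.map L (SM γ I a) ≤ SM γ I (a + c) := by
    rw [SM, Submodule.map_sup, Submodule.map_span]
    apply sup_le
    · rintro x ⟨y, hy, rfl⟩
      apply Submodule.mem_sup_left
      simp only [Submodule.restrictScalars_mem] at hy ⊢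
      exact Ideal.mul_mem_left _ _ hy
    · apply le_trans (Submodule.span_mono ?_) (le_sup_right : _ ≤ SM γ I (a + c))
      rintro x ⟨q, ⟨b, hwb, hlt, rfl⟩, rfl⟩
      refine ⟨b + c, ?_, ?_, ?_⟩
      · rw [map_add, map_add, hwb]
      · have := add_lt_add_right hlt (toLex c)
        rw [← toLex_add, ← toLex_add] at this
        rwa [add_comm c b, add_comm c a] at this
      · rw [hL, LinearMap.mulLeft_apply, monomial_mul, one_mul, add_comm]
  rw [h2]
  exact h4 h3

theorem finrank_eq_card {α M : Type*} [AddCommGroup M] [Module ℂ M] [FiniteDimensional ℂ M]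
    (Q : Submodule ℂ M) (T : Finset α) (f : α → M)
    (hspan : Q ≤ Submodule.span ℂ (f '' (T : Set α)))
    (hsub : ∀ a ∈ T, f a ∈ Q)
    (hind : LinearIndependent ℂ (fun a : {x // x ∈ T} => f (a : α))) :
    Module.finrank ℂ Q = T.card := by
  classical
  have hub : Module.finrank ℂ Q ≤ T.card := by
    have h1 : Q ≤ Submodule.span ℂ ((T.image f : Finset M) : Set M) := by
      rw [Finset.coe_image]; exact hspan
    calc Module.finrank ℂ Q
        ≤ Module.finrank ℂ (Submodule.span ℂ ((T.image f : Finset M) : Set M)) :=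
          Submodule.finrank_mono h1
      _ ≤ (T.image f).card := finrank_span_finset_le_card _
      _ ≤ T.card := Finset.card_image_le
  have hlb : T.card ≤ Module.finrank ℂ Q := by
    have h2 : Submodule.span ℂ (Set.range fun a : {x // x ∈ T} => f (a : α)) ≤ Q := by
      rw [Submodule.span_le]
      rintro q ⟨a, rfl⟩
      exact hsub _ a.2
    calc T.card = Fintype.card {x // x ∈ T} := (Fintype.card_coe _).symm
      _ = Module.finrank ℂ (Submodule.span ℂ
            (Set.range fun a : {x // x ∈ T} => f (a : α))) := (finrank_span_eq_card hind).symm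
      _ ≤ Module.finrank ℂ Q := Submodule.finrank_mono h2
  omega

end ZhaiAux

set_option maxHeartbeats 1000000 in
set_option synthInstance.maxHeartbeats 200000 in
open ZhaiAux in
/-- The Hilbert function of the quotient of a weighted-graded polynomial ring by a
weighted-homogeneous Artinian ideal satisfies Macaulay–Zhai's inequality. -/
theorem stmt_13 (d : ℕ) (hd : 1 ≤ d) (γ : Fin d → ℕ) (hγ : ∀ i, 0 < γ i)
    (I : Ideal (MvPolynomial (Fin d) ℂ))
    (hhom : ∀ p ∈ I, ∀ n : ℕ, weightedHomogeneousComponent γ n p ∈ I)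
    (hart : FiniteDimensional ℂ (MvPolynomial (Fin d) ℂ ⧸ I))
    (h : ℕ → ℕ)
    (hdef : ∀ n : ℕ, h n = Module.finrank ℂ
      ((weightedHomogeneousSubmodule ℂ γ n).map (Ideal.Quotient.mkₐ ℂ I).toLinearMap))
    (m : ℕ) (hm : h m ≠ 0) (hvanish : ∀ n, m < n → h n = 0) :
    (∑ j ∈ Finset.range (m + 1), (j : ℝ) * h j) ≤
      (d / (d + 1)) * m * ∑ j ∈ Finset.range (m + 1), (h j : ℝ) := by
  classical
  set π := (Ideal.Quotient.mkₐ ℂ I).toLinearMap with hπ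
  have hker : ∀ p : MvPolynomial (Fin d) ℂ, π p = 0 ↔ p ∈ I := by
    intro p
    exact Ideal.Quotient.eq_zero_iff_mem
  clear_value π
  -- high degree monomials lie in I
  have hhigh : ∀ a : Fin d →₀ ℕ, m < Finsupp.weight γ a → monomial a (1 : ℂ) ∈ I := by
    intro a hma
    have h0 : h (Finsupp.weight γ a) = 0 := hvanish _ hma
    rw [hdef] at h0
    have hbot : (weightedHomogeneousSubmodule ℂ γ (Finsupp.weight γ a)).map π = ⊥ :=
      Submodule.finrank_eq_zero.mp h0
    have hmem : π (monomial a 1) ∈ (weightedHomogeneousSubmodule ℂ γ (Finsupp.weight γ a)).map π :=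
      Submodule.mem_map_of_mem
        ((mem_weightedHomogeneousSubmodule _ _ _ _).2
          (isWeightedHomogeneous_monomial _ _ _ rfl))
    rw [hbot, Submodule.mem_bot] at hmem
    exact (hker _).1 hmem
  -- standard exponents have weight at most m
  have hWle : ∀ a ∈ Bset γ I, Finsupp.weight γ a ≤ m := by
    intro a ha
    by_contra hgt
    exact ha (Submodule.mem_sup_left (by
      simpa [Submodule.restrictScalars_mem] using hhigh a (Nat.lt_of_not_le hgt)))
  -- the set of standard exponents is finite
  have hBfin : (Bset γ I).Finite := by
    apply Set.Finite.subset (Finset.Iic (Finsupp.equivFunOnFinite.symm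
      (fun _ : Fin d => m))).finite_toSet
    intro a ha
    simp only [Finset.coe_Iic, Set.mem_Iic]
    rw [Finsupp.le_def]
    intro i
    have h1 : a i ≤ Finsupp.weight γ a := coord_le_W hγ i a
    have h2 := hWle a ha
    simpa using h1.trans h2
  set BF := hBfin.toFinset with hBF
  set T : ℕ → Finset (Fin d →₀ ℕ) := fun n => BF.filter (fun a => Finsupp.weight γ a = n)
    with hT
  -- BF is downward closed
  have hdown : ∀ a ∈ BF, ∀ b : Fin d →₀ ℕ, b ≤ a → b ∈ BF := by
    intro a ha b hba
    obtain ⟨c, rfl⟩ := le_iff_exists_add.mp hba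
    rw [hBF, Set.Finite.mem_toFinset] at ha ⊢
    simp only [ZhaiAux.Bset, Set.mem_setOf_eq] at ha ⊢
    intro hmem
    exact ha (SM_mul γ I c hmem)
  have wf : WellFounded ((· < ·) : Lex (Fin d →₀ ℕ) → Lex (Fin d →₀ ℕ) → Prop) :=
    IsWellFounded.wf
  have hTB : ∀ n, ∀ a ∈ T n, a ∈ Bset γ I := by
    intro n a ha
    exact hBfin.mem_toFinset.mp (Finset.mem_filter.mp ha).1
  have hTw : ∀ n, ∀ a ∈ T n, Finsupp.weight γ a = n := fun n a ha =>
    (Finset.mem_filter.mp ha).2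
  have hmemT : ∀ n, ∀ a ∈ Bset γ I, Finsupp.weight γ a = n → a ∈ T n := by
    intro n a ha hw
    exact Finset.mem_filter.mpr ⟨hBfin.mem_toFinset.mpr ha, hw⟩
  have span_core : ∀ n, ∀ a : Fin d →₀ ℕ, Finsupp.weight γ a = n →
      π (monomial a 1) ∈ Submodule.span ℂ
        ((fun b => π (monomial b 1)) '' (T n : Set (Fin d →₀ ℕ))) := by
    intro n a
    refine wf.induction (C := fun x : Lex (Fin d →₀ ℕ) =>
      Finsupp.weight γ (ofLex x) = n →
        π (monomial (ofLex x) 1) ∈ Submodule.span ℂ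
          ((fun b => π (monomial b 1)) '' (T n : Set (Fin d →₀ ℕ)))) (toLex a) ?_
    intro x IH hx
    by_cases hB : monomial (ofLex x) (1 : ℂ) ∈ SM γ I (ofLex x)
    · have h3 : π (monomial (ofLex x) 1) ∈ Submodule.map π (SM γ I (ofLex x)) :=
        Submodule.mem_map_of_mem hB
      rw [ZhaiAux.SM, Submodule.map_sup, Submodule.map_span] at h3
      have h1 : Submodule.map π (Submodule.restrictScalars ℂ I) = ⊥ := by
        rw [Submodule.eq_bot_iff]
        rintro y ⟨p, hp, rfl⟩
        exact (hker p).2 hp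
      rw [h1, bot_sup_eq] at h3
      refine Submodule.span_le.2 ?_ h3
      rintro q ⟨q', ⟨b, hwb, hlt, rfl⟩, rfl⟩
      exact IH (toLex b) hlt (by rw [ofLex_toLex]; exact hwb.trans hx)
    · exact Submodule.subset_span ⟨ofLex x, hmemT n _ hB hx, rfl⟩
  have hQle : ∀ n, Submodule.map π (weightedHomogeneousSubmodule ℂ γ n) ≤
      Submodule.span ℂ ((fun b => π (monomial b 1)) '' (T n : Set (Fin d →₀ ℕ))) := by
    intro n
    rintro q ⟨p, hp, rfl⟩
    have hrepr : p = ∑ b ∈ p.support, monomial b (coeff b p) :=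
      (support_sum_monomial_coeff p).symm
    rw [hrepr, map_sum]
    apply Submodule.sum_mem
    intro b hb
    have hw : Finsupp.weight γ b = n := hp (mem_support_iff.1 hb)
    have e : monomial b (coeff b p) = (coeff b p) • monomial b (1 : ℂ) := by
      rw [smul_monomial, smul_eq_mul, mul_one]
    rw [e, map_smul]
    exact Submodule.smul_mem _ _ (span_core n b hw)
  have hindep : ∀ n, LinearIndependent ℂ
      (fun a : {x // x ∈ T n} => π (monomial (a : Fin d →₀ ℕ) 1)) := by
    intro n
    rw [linearIndependent_iff']
    intro s g hsum j hj
    by_contra hg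
    have hne : (s.filter fun i => g i ≠ 0).Nonempty := ⟨j, Finset.mem_filter.mpr ⟨hj, hg⟩⟩
    obtain ⟨i0, hi0, hmax⟩ := Finset.exists_max_image (s.filter fun i => g i ≠ 0)
      (fun i => toLex (i : Fin d →₀ ℕ)) hne
    have hg0 : g i0 ≠ 0 := (Finset.mem_filter.mp hi0).2
    have hq : (∑ i ∈ s, g i • monomial ((i : Fin d →₀ ℕ)) (1 : ℂ)) ∈ I := by
      apply (hker _).1
      rw [map_sum]
      simp_rw [map_smul]
      exact hsum
    have heq : ∑ i ∈ s.filter (fun i => g i ≠ 0), g i • monomial ((i : Fin d →₀ ℕ)) (1 : ℂ)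
        = ∑ i ∈ s, g i • monomial ((i : Fin d →₀ ℕ)) (1 : ℂ) :=
      Finset.sum_filter_of_ne (fun x _ hne' hgx => hne' (by rw [hgx, zero_smul]))
    rw [← heq] at hq
    have hrepr : monomial ((i0 : Fin d →₀ ℕ)) (1 : ℂ) =
        (g i0)⁻¹ • (∑ i ∈ s.filter (fun i => g i ≠ 0),
            g i • monomial ((i : Fin d →₀ ℕ)) (1 : ℂ))
          - ∑ i ∈ (s.filter (fun i => g i ≠ 0)).erase i0,
              ((g i0)⁻¹ * g i) • monomial ((i : Fin d →₀ ℕ)) (1 : ℂ) := by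
      rw [Finset.smul_sum]
      simp_rw [smul_smul]
      rw [← Finset.add_sum_erase _ _ hi0, inv_mul_cancel₀ hg0, one_smul, add_sub_cancel_right]
    have hSM : monomial ((i0 : Fin d →₀ ℕ)) (1 : ℂ) ∈ SM γ I (i0 : Fin d →₀ ℕ) := by
      rw [hrepr]
      refine Submodule.sub_mem _ (Submodule.mem_sup_left (Submodule.smul_mem _ _ ?_)) ?_
      · simpa [Submodule.restrictScalars_mem] using hq
      · refine Submodule.sum_mem _ fun i hi => Submodule.mem_sup_right
          (Submodule.smul_mem _ _ (Submodule.subset_span ⟨(i : Fin d →₀ ℕ), ?_, ?_, rfl⟩))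
        · rw [hTw n _ i.2, hTw n _ i0.2]
        · refine lt_of_le_of_ne (hmax i (Finset.mem_of_mem_erase hi)) fun hE => ?_
          exact (Finset.ne_of_mem_erase hi) (Subtype.ext (toLex.injective hE))
    exact (hTB n _ i0.2) hSM
  have hcard : ∀ n ≤ m, h n = (T n).card := by
    intro n hn
    rw [hdef]
    refine ZhaiAux.finrank_eq_card _ _ _ (hQle n) ?_ (hindep n)
    intro a ha
    exact Submodule.mem_map_of_mem ((mem_weightedHomogeneousSubmodule _ _ _ _).2
      (isWeightedHomogeneous_monomial _ _ _ (hTw n _ ha)))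
  -- rewrite the two sums
  have hsum1 : ∑ j ∈ Finset.range (m + 1), j * h j = ∑ a ∈ BF, Finsupp.weight γ a := by
    have maps : ∀ a ∈ BF, Finsupp.weight γ a ∈ Finset.range (m + 1) := fun a ha =>
      Finset.mem_range.2 (Nat.lt_succ_of_le (hWle a (hBfin.mem_toFinset.mp ha)))
    rw [← Finset.sum_fiberwise_of_maps_to maps (fun a => Finsupp.weight γ a)]
    refine Finset.sum_congr rfl fun j hj => ?_
    rw [hcard j (Nat.lt_succ_iff.mp (Finset.mem_range.mp hj))]
    rw [Finset.card_eq_sum_ones, Finset.mul_sum]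
    refine Finset.sum_congr rfl fun a ha => ?_
    rw [(Finset.mem_filter.mp ha).2, mul_one]
  have hsum0 : ∑ j ∈ Finset.range (m + 1), h j = BF.card := by
    have maps : ∀ a ∈ BF, Finsupp.weight γ a ∈ Finset.range (m + 1) := fun a ha =>
      Finset.mem_range.2 (Nat.lt_succ_of_le (hWle a (hBfin.mem_toFinset.mp ha)))
    rw [Finset.card_eq_sum_ones, ← Finset.sum_fiberwise_of_maps_to maps (fun _ => 1)]
    refine Finset.sum_congr rfl fun j hj => ?_
    rw [hcard j (Nat.lt_succ_iff.mp (Finset.mem_range.mp hj)), Finset.card_eq_sum_ones]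
  have hcomb := comb hγ m BF hdown (fun a ha => hWle a (hBfin.mem_toFinset.mp ha))
  rw [← hsum1, ← hsum0] at hcomb
  -- pass to the reals
  have hd1 : (0 : ℝ) < (d : ℝ) + 1 := by positivity
  have hcast : ((d : ℝ) + 1) * (∑ j ∈ Finset.range (m + 1), (j : ℝ) * h j)
      ≤ (d : ℝ) * (m * ∑ j ∈ Finset.range (m + 1), (h j : ℝ)) := by
    have := hcomb
    have e1 : ((d + 1) * ∑ j ∈ Finset.range (m + 1), j * h j : ℕ)
        ≤ ((d * (m * ∑ j ∈ Finset.range (m + 1), h j) : ℕ)) := this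
    calc ((d : ℝ) + 1) * (∑ j ∈ Finset.range (m + 1), (j : ℝ) * h j)
        = (((d + 1) * ∑ j ∈ Finset.range (m + 1), j * h j : ℕ) : ℝ) := by push_cast; ring
      _ ≤ (((d * (m * ∑ j ∈ Finset.range (m + 1), h j) : ℕ)) : ℝ) := Nat.cast_le.2 e1
      _ = (d : ℝ) * (m * ∑ j ∈ Finset.range (m + 1), (h j : ℝ)) := by push_cast; ring
  rw [div_mul_eq_mul_div, div_mul_eq_mul_div, le_div_iff₀ hd1]
  nlinarith [hcast]
end

section
/- Let S be a numerical semigroup with minimal generators g_0 < g_1 < … < g_d, conductor c, genus Ω := #(ℕ \ S), n_0 := ⌈c/g_0⌉, ρ := n_0·g_0 − c, and Apéry set A := {s ∈ S | s − g_0 ∉ S}. For i ∈ ℕ set A_i := {a ∈ A | ⌊(a+ρ)/g_0⌋ = i}. If S is A-graded, i.e., (A_i + A_j) ∩ A ⊆ A_{i+j} for all i, j ∈ ℕ, then Wilf's inequality holds: Ω/c ≤ d/(d+1), i.e., (d+1)·Ω ≤ d·c. -/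
open Classical in
noncomputable def idxSet (d : ℕ) (g : Fin (d + 1) → ℕ) (S : Set ℕ) (a : ℕ) : Finset (Fin d) :=
  Finset.univ.filter fun i => ∃ t ∈ S, a = g i.succ + t ∧ t < a

noncomputable def greedy (d : ℕ) (g : Fin (d + 1) → ℕ) (S : Set ℕ) (a : ℕ) : Fin d → ℕ :=
  if h : (idxSet d g S a).Nonempty then
    greedy d g S (a - g ((idxSet d g S a).max' h).succ) + Pi.single ((idxSet d g S a).max' h) 1
  else 0
termination_by a
decreasing_by
  have key : ∀ i ∈ idxSet d g S a, a - g i.succ < a := by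
    intro i hi
    simp only [idxSet, Finset.mem_filter] at hi
    obtain ⟨-, t, ht, hat, hta⟩ := hi
    omega
  exact key _ (Finset.max'_mem _ h)

theorem stmt_16 (d : ℕ) (hd : 1 ≤ d)
    -- `g 0 < g 1 < … < g d` is the minimal system of generators of `S`
    (g : Fin (d + 1) → ℕ) (hmono : StrictMono g) (hgpos : 0 < g 0)
    (S : Set ℕ) (hS : S = (AddSubmonoid.closure (Set.range g) : AddSubmonoid ℕ))
    (hmin : ∀ i, g i ∉ (AddSubmonoid.closure (Set.range g \ {g i}) : AddSubmonoid ℕ))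
    (hfin : (Set.univ \ S).Finite)
    -- `c` is the conductor, `Ω` the genus
    (c : ℕ) (hc : c = sInf {m : ℕ | ∀ n : ℕ, m ≤ n → n ∈ S})
    (Ω : ℕ) (hΩ : Ω = (Set.univ \ S).ncard)
    -- `n₀ = ⌈c/g₀⌉` and `ρ = n₀·g₀ - c`
    (n0 : ℕ) (hn0 : n0 = c ⌈/⌉ g 0)
    (ρ : ℕ) (hρ : ρ = n0 * g 0 - c)
    -- `A` is the Apéry set of `S` w.r.t. the multiplicity `g₀`, and `Ai i = {a ∈ A | ⌊(a+ρ)/g₀⌋ = i}`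
    (A : Set ℕ) (hA : A = {s ∈ S | ∀ t ∈ S, s ≠ t + g 0})
    (Ai : ℕ → Set ℕ) (hAi : ∀ i, Ai i = {a ∈ A | (a + ρ) / g 0 = i})
    -- `S` is `A`-graded
    (hgraded : ∀ i j : ℕ, ∀ a ∈ Ai i, ∀ b ∈ Ai j, a + b ∈ A → a + b ∈ Ai (i + j)) :
    (d + 1) * Ω ≤ d * c := by
  classical
  set m : ℕ := g 0 with hmdef
  -- ## basic membership facts about S
  have hmemS : ∀ x : ℕ, x ∈ S ↔ x ∈ AddSubmonoid.closure (Set.range g) := by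
    intro x; rw [hS]; rfl
  have hadd : ∀ {x y : ℕ}, x ∈ S → y ∈ S → x + y ∈ S := by
    intro x y hx hy
    rw [hmemS] at *
    exact add_mem hx hy
  have h0S : (0 : ℕ) ∈ S := by rw [hmemS]; exact zero_mem _
  have hgS : ∀ i, g i ∈ S := by
    intro i; rw [hmemS]; exact AddSubmonoid.subset_closure (Set.mem_range_self i)
  have hm1 : 1 ≤ m := hgpos
  -- decomposition of nonzero elements of S
  have hdecomp : ∀ x ∈ S, x ≠ 0 → ∃ i, ∃ t ∈ S, x = g i + t := by
    intro x hx hx0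
    rw [hmemS] at hx
    have H : ∀ y : ℕ, y ∈ AddSubmonoid.closure (Set.range g) →
        (y = 0 ∨ ∃ i, ∃ t ∈ S, y = g i + t) := by
      intro y hy
      induction hy using AddSubmonoid.closure_induction with
      | mem z hz =>
        obtain ⟨i, rfl⟩ := hz
        exact Or.inr ⟨i, 0, h0S, by ring⟩
      | zero => exact Or.inl rfl
      | add u v hu hv ihu ihv =>
        rcases ihu with h0 | ⟨i, t, ht, rfl⟩
        · subst h0; simpa using ihv
        · exact Or.inr ⟨i, t + v, hadd ht ((hmemS v).mpr hv), by ring⟩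
    rcases H x hx with h | h
    · exact absurd h hx0
    · exact h
  -- elements of the closure lie in the closure of the generators below them
  have hclos_le : ∀ x ∈ S, x ∈ AddSubmonoid.closure (Set.range g ∩ Set.Iic x) := by
    intro x hx
    rw [hmemS] at hx
    induction hx using AddSubmonoid.closure_induction with
    | mem z hz => exact AddSubmonoid.subset_closure ⟨hz, le_refl z⟩
    | zero => exact zero_mem _
    | add u v hu hv ihu ihv =>
      have h1 : AddSubmonoid.closure (Set.range g ∩ Set.Iic u) ≤
          AddSubmonoid.closure (Set.range g ∩ Set.Iic (u + v)) :=
        AddSubmonoid.closure_mono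
          (Set.inter_subset_inter_right _ (Set.Iic_subset_Iic.mpr (Nat.le_add_right u v)))
      have h2 : AddSubmonoid.closure (Set.range g ∩ Set.Iic v) ≤
          AddSubmonoid.closure (Set.range g ∩ Set.Iic (u + v)) :=
        AddSubmonoid.closure_mono
          (Set.inter_subset_inter_right _ (Set.Iic_subset_Iic.mpr (Nat.le_add_left v u)))
      exact add_mem (h1 ihu) (h2 ihv)
  -- conductor facts
  have hc_all : ∀ n, c ≤ n → n ∈ S := by
    have hne : {k : ℕ | ∀ n : ℕ, k ≤ n → n ∈ S}.Nonempty := by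
      obtain ⟨N, hN⟩ := hfin.bddAbove
      refine ⟨N + 1, fun n hn => ?_⟩
      by_contra hns
      have : n ∈ Set.univ \ S := ⟨trivial, hns⟩
      have := hN this
      omega
    have := Nat.sInf_mem hne
    rw [← hc] at this
    exact this
  -- ## A facts
  have hmemA : ∀ x : ℕ, x ∈ A ↔ x ∈ S ∧ ∀ t ∈ S, x ≠ t + m := by
    intro x; rw [hA]; exact Iff.rfl
  have hAS : ∀ a ∈ A, a ∈ S := fun a ha => ((hmemA a).mp ha).1
  have hAnot : ∀ a ∈ A, ∀ t ∈ S, a ≠ t + m := fun a ha => ((hmemA a).mp ha).2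
  have hAintro : ∀ x ∈ S, (∀ t ∈ S, x ≠ t + m) → x ∈ A := by
    intro x hx h; exact (hmemA x).mpr ⟨hx, h⟩
  have hAbound : ∀ a ∈ A, a < c + m := by
    intro a ha
    by_contra hb
    push_neg at hb
    have h1 : a - m ∈ S := hc_all _ (by omega)
    exact hAnot a ha _ h1 (by omega)
  have hAfin : A.Finite :=
    Set.Finite.subset (Set.finite_Iio (c + m)) (fun a ha => hAbound a ha)
  set Af : Finset ℕ := hAfin.toFinset with hAfdef
  have hmemAf : ∀ a : ℕ, a ∈ Af ↔ a ∈ A := fun a => Set.Finite.mem_toFinset _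
  have h0A : (0 : ℕ) ∈ A := hAintro 0 h0S (fun t ht => by omega)
  -- multiples of m
  have hstep : ∀ (n : ℕ) {x : ℕ}, x ∈ S → x + n * m ∈ S := by
    intro n
    induction n with
    | zero => intro x hx; simpa using hx
    | succ k ih =>
      intro x hx
      have : x + k * m + m ∈ S := hadd (ih hx) (hgS 0)
      have he : x + (k + 1) * m = x + k * m + m := by ring
      rw [he]; exact this
  -- minimality of Apéry elements in their residue class
  have hresid_min : ∀ a ∈ A, ∀ s ∈ S, s % m = a % m → a ≤ s := by
    intro a ha s hs hmod
    by_contra hlt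
    push_neg at hlt
    have hmeq : s ≡ a [MOD m] := hmod
    have hdvd : m ∣ a - s := (Nat.modEq_iff_dvd' (le_of_lt hlt)).mp hmeq
    obtain ⟨k, hk⟩ := hdvd
    have hk1 : 1 ≤ k := by
      rcases Nat.eq_zero_or_pos k with h | h
      · subst h; omega
      · exact h
    have h1 : s + (k - 1) * m ∈ S := hstep (k - 1) hs
    refine hAnot a ha _ h1 ?_
    have : (k - 1) * m + m = k * m := by
      have : k - 1 + 1 = k := by omega
      calc (k - 1) * m + m = (k - 1 + 1) * m := by ring
        _ = k * m := by rw [this]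
    have hmk : m * k = k * m := by ring
    omega
  -- existence of Apéry element in each residue class
  have hexists_apery : ∀ r, r < m → ∃ a ∈ A, a % m = r := by
    intro r hr
    set T : Set ℕ := {s | s ∈ S ∧ s % m = r} with hT
    have hTne : T.Nonempty := by
      refine ⟨r + c * m, ⟨hc_all _ (by
        have : c ≤ c * m := Nat.le_mul_of_pos_right c hgpos
        omega), ?_⟩⟩
      rw [Nat.add_mul_mod_self_right]
      exact Nat.mod_eq_of_lt hr
    have hmem := Nat.sInf_mem hTne
    refine ⟨sInf T, ?_, hmem.2⟩
    refine hAintro _ hmem.1 ?_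
    intro t ht heq
    have htT : t ∈ T := by
      refine ⟨ht, ?_⟩
      have : (t + m) % m = t % m := Nat.add_mod_right t m
      rw [← hmem.2, heq, this]
    have := Nat.sInf_le htT
    omega
  -- residues give a bijection with range m
  have hinjOn : Set.InjOn (· % m) ↑Af := by
    intro a ha b hb hab
    simp only [Finset.mem_coe, hmemAf] at ha hb
    exact le_antisymm (hresid_min a ha b (hAS b hb) hab.symm)
      (hresid_min b hb a (hAS a ha) hab)
  have himage : Af.image (· % m) = Finset.range m := by
    ext r
    simp only [Finset.mem_image, Finset.mem_range, hmemAf]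
    constructor
    · rintro ⟨a, ha, rfl⟩; exact Nat.mod_lt a hgpos
    · intro hr
      obtain ⟨a, ha, har⟩ := hexists_apery r hr
      exact ⟨a, ha, har⟩
  have hcard : Af.card = m := by
    rw [← Finset.card_image_of_injOn hinjOn, himage, Finset.card_range]
  have hsum_resid : ∀ f : ℕ → ℕ, ∑ a ∈ Af, f (a % m) = ∑ r ∈ Finset.range m, f r := by
    intro f
    rw [← himage, Finset.sum_image]
    intro x hx y hy hxy
    exact hinjOn (Finset.mem_coe.mpr hx) (Finset.mem_coe.mpr hy) hxy
  -- ## arithmetic on q = n0, ρ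
  have hqm : n0 * m = c + ρ ∧ ρ < m := by
    have h1 : n0 = (c + m - 1) / m := by rw [hn0, Nat.ceilDiv_eq_add_pred_div]
    have h2 := Nat.div_add_mod (c + m - 1) m
    have h3 : (c + m - 1) % m < m := Nat.mod_lt _ hgpos
    have h4 : m * ((c + m - 1) / m) = (c + m - 1) / m * m := by ring
    have h5 : n0 * m = (c + m - 1) / m * m := by rw [h1]
    have hρ' : ρ = n0 * m - c := hρ
    omega
  obtain ⟨hqmeq, hρm⟩ := hqm
  -- ## gaps and Ω
  set gapsF : Finset ℕ := (Finset.range c).filter (· ∉ S) with hgapsdef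
  have hΩcard : Ω = gapsF.card := by
    rw [hΩ]
    have : Set.univ \ S = ↑gapsF := by
      ext n
      simp only [Set.mem_diff, Set.mem_univ, true_and, Finset.mem_coe, hgapsdef,
        Finset.mem_filter, Finset.mem_range]
      constructor
      · intro hn
        refine ⟨?_, hn⟩
        by_contra hcn
        exact hn (hc_all n (by omega))
      · intro hn; exact hn.2
    rw [this, Set.ncard_coe_finset]
  -- each a ∈ A with a = x + k*m, k ≥ 1 gives a gap x
  have hgapA : ∀ (k x : ℕ), x + k * m ∈ A → 1 ≤ k → x ∉ S := by
    intro k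
    induction k with
    | zero => intro x _ h; omega
    | succ k ih =>
      intro x ha _
      rcases Nat.eq_zero_or_pos k with hk0 | hk1
      · subst hk0
        intro hx
        exact hAnot _ ha x hx (by ring)
      · have ha' : (x + m) + k * m ∈ A := by
          have : (x + m) + k * m = x + (k + 1) * m := by ring
          rw [this]; exact ha
        have hxm : x + m ∉ S := ih (x + m) ha' hk1
        intro hx
        exact hxm (hadd hx (hgS 0))
  have hgap_sum : gapsF.card = ∑ a ∈ Af, a / m := by
    have hbij : (Af.sigma fun a => Finset.Icc 1 (a / m)).card = gapsF.card := by
      refine Finset.card_bij (fun p _ => p.1 - p.2 * m) ?_ ?_ ?_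
      · rintro ⟨a, k⟩ hp
        simp only [Finset.mem_sigma, hmemAf, Finset.mem_Icc] at hp
        obtain ⟨ha, hk1, hk2⟩ := hp
        have hkm : k * m ≤ a := (Nat.le_div_iff_mul_le hgpos).mp hk2
        have haeq : (a - k * m) + k * m = a := by omega
        have hxS : a - k * m ∉ S := hgapA k (a - k * m) (by rw [haeq]; exact ha) hk1
        simp only [hgapsdef, Finset.mem_filter, Finset.mem_range]
        refine ⟨?_, hxS⟩
        by_contra hcx
        exact hxS (hc_all _ (by omega))
      · rintro ⟨a, k⟩ hp ⟨b, l⟩ hq heq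
        dsimp only at heq
        simp only [Finset.mem_sigma, hmemAf, Finset.mem_Icc] at hp hq
        obtain ⟨ha, hk1, hk2⟩ := hp
        obtain ⟨hb, hl1, hl2⟩ := hq
        have hkm : k * m ≤ a := (Nat.le_div_iff_mul_le hgpos).mp hk2
        have hlm : l * m ≤ b := (Nat.le_div_iff_mul_le hgpos).mp hl2
        have hare : a % m = (a - k * m) % m := by
          conv_lhs => rw [show a = (a - k * m) + k * m by omega]
          rw [Nat.add_mul_mod_self_right]
        have hbre : b % m = (b - l * m) % m := by
          conv_lhs => rw [show b = (b - l * m) + l * m by omega]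
          rw [Nat.add_mul_mod_self_right]
        have hab : a % m = b % m := by rw [hare, hbre, heq]
        have hab' : a = b := le_antisymm (hresid_min a ha b (hAS b hb) hab.symm)
          (hresid_min b hb a (hAS a ha) hab)
        subst hab'
        have : k = l := by
          have : k * m = l * m := by omega
          exact Nat.eq_of_mul_eq_mul_right hgpos this
        subst this
        rfl
      · intro x hx
        simp only [hgapsdef, Finset.mem_filter, Finset.mem_range] at hx
        obtain ⟨hxc, hxS⟩ := hx
        obtain ⟨a, ha, har⟩ := hexists_apery (x % m) (Nat.mod_lt x hgpos)
        have hxa : x < a := by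
          rcases Nat.lt_or_ge x a with h | h
          · exact h
          · exfalso
            have hmeq : a ≡ x [MOD m] := har
            have hdvd : m ∣ x - a := (Nat.modEq_iff_dvd' h).mp hmeq
            obtain ⟨j, hj⟩ := hdvd
            have : x = a + j * m := by
              have : m * j = j * m := by ring
              omega
            rw [this] at hxS
            exact hxS (hstep j (hAS a ha))
        have hmeq : x ≡ a [MOD m] := har.symm
        have hdvd : m ∣ a - x := (Nat.modEq_iff_dvd' (le_of_lt hxa)).mp hmeq
        obtain ⟨j, hj⟩ := hdvd
        have hjm : j * m = a - x := by
          have : m * j = j * m := by ring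
          omega
        have hj1 : 1 ≤ j := by
          rcases Nat.eq_zero_or_pos j with h | h
          · exfalso; subst h; omega
          · exact h
        have hjle : j ≤ a / m := (Nat.le_div_iff_mul_le hgpos).mpr (by omega)
        refine ⟨⟨a, j⟩, ?_, by dsimp only; omega⟩
        simp only [Finset.mem_sigma, hmemAf, Finset.mem_Icc]
        exact ⟨ha, hj1, hjle⟩
    rw [← hbij, Finset.card_sigma]
    apply Finset.sum_congr rfl
    intro a _
    simp [Nat.card_Icc]

  -- ## levels
  set lev : ℕ → ℕ := fun a => (a + ρ) / m with hlevdef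
  have hmemAi : ∀ (i : ℕ) (x : ℕ), x ∈ Ai i ↔ x ∈ A ∧ lev x = i := by
    intro i x
    rw [hAi i]
    exact Iff.rfl
  have hlev_add : ∀ {a b : ℕ}, a ∈ A → b ∈ A → a + b ∈ A → lev (a + b) = lev a + lev b := by
    intro a b ha hb hab
    have := hgraded (lev a) (lev b) a ((hmemAi _ a).mpr ⟨ha, rfl⟩) b
      ((hmemAi _ b).mpr ⟨hb, rfl⟩) hab
    exact ((hmemAi _ _).mp this).2
  have hlev_le : ∀ a ∈ A, lev a ≤ n0 := by
    intro a ha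
    have hb := hAbound a ha
    have h1 : (n0 + 1) * m = n0 * m + m := by ring
    have h2 : a + ρ < (n0 + 1) * m := by omega
    have h3 := (Nat.div_lt_iff_lt_mul hgpos).mpr h2
    simp only [hlevdef]
    omega
  have hlev0 : lev 0 = 0 := by
    simp only [hlevdef]
    simp [Nat.div_eq_of_lt hρm]
  -- sub-Apéry elements
  have hsubA : ∀ {u v : ℕ}, u ∈ S → v ∈ S → u + v ∈ A → v ∈ A := by
    intro u v hu hv huv
    refine hAintro v hv ?_
    intro t ht heq
    exact hAnot _ huv (u + t) (hadd hu ht) (by omega)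
  -- minimal generators are in A
  have hgenA : ∀ j : Fin d, g j.succ ∈ A := by
    intro j
    refine hAintro _ (hgS j.succ) ?_
    intro t ht heq
    apply hmin j.succ
    have htc : t ∈ AddSubmonoid.closure (Set.range g ∩ Set.Iic t) := hclos_le t ht
    have hsub : (Set.range g ∩ Set.Iic t) ⊆ Set.range g \ {g j.succ} := by
      rintro y ⟨hy1, hy2⟩
      refine ⟨hy1, fun hy3 => ?_⟩
      rw [Set.mem_singleton_iff] at hy3
      subst hy3
      simp only [Set.mem_Iic] at hy2
      omega
    have ht' : t ∈ AddSubmonoid.closure (Set.range g \ {g j.succ}) :=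
      AddSubmonoid.closure_mono hsub htc
    have hg0 : m ∈ AddSubmonoid.closure (Set.range g \ {g j.succ}) := by
      apply AddSubmonoid.subset_closure
      refine ⟨Set.mem_range_self 0, fun h0 => ?_⟩
      rw [Set.mem_singleton_iff] at h0
      have h1 : (0 : Fin (d + 1)) = j.succ := hmono.injective h0
      exact (Fin.succ_ne_zero j) h1.symm
    have hfin' : t + m ∈ AddSubmonoid.closure (Set.range g \ {g j.succ}) := add_mem ht' hg0
    rwa [← heq] at hfin'
  have hgenlev : ∀ j : Fin d, 1 ≤ lev (g j.succ) := by
    intro j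
    have h1 : m < g j.succ := hmono (Fin.succ_pos j)
    simp only [hlevdef]
    exact (Nat.one_le_div_iff hgpos).mpr (by omega)
  set L : Fin d → ℕ := fun j => lev (g j.succ) with hLdef
  -- greedy unfolding
  have hgr_eq0 : ∀ a : ℕ, greedy d g S a = if h : (idxSet d g S a).Nonempty then
      greedy d g S (a - g ((idxSet d g S a).max' h).succ) +
        Pi.single ((idxSet d g S a).max' h) 1
    else 0 := by
    intro a
    rw [greedy]
  set M : ℕ → Fin d → ℕ := greedy d g S with hMdef
  have hidx_mem : ∀ (a : ℕ) (i : Fin d),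
      i ∈ idxSet d g S a ↔ ∃ t ∈ S, a = g i.succ + t ∧ t < a := by
    intro a i
    simp [idxSet]
  have hM0 : M 0 = 0 := by
    rw [hgr_eq0 0, dif_neg]
    rintro ⟨i, hi⟩
    rw [hidx_mem 0 i] at hi
    obtain ⟨t, -, -, h⟩ := hi
    omega
  have hidx_ne : ∀ a ∈ A, a ≠ 0 → (idxSet d g S a).Nonempty := by
    intro a ha h0
    obtain ⟨i, t, ht, hit⟩ := hdecomp a (hAS a ha) h0
    have hi0 : i ≠ 0 := by
      intro h
      subst h
      exact hAnot a ha t ht (by omega)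
    obtain ⟨j, rfl⟩ := Fin.eq_succ_of_ne_zero hi0
    refine ⟨j, ?_⟩
    rw [hidx_mem]
    refine ⟨t, ht, hit, ?_⟩
    have : m < g j.succ := hmono (Fin.succ_pos j)
    omega
  have hsum_single : ∀ (x : Fin d → ℕ) (j : Fin d) (k : ℕ),
      (∑ i, (x + (Pi.single j k : Fin d → ℕ)) i * L i) = (∑ i, x i * L i) + k * L j := by
    intro x j k
    have h1 : ∀ i : Fin d, (x + (Pi.single j k : Fin d → ℕ)) i * L i
        = x i * L i + (if i = j then k * L i else 0) := by
      intro i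
      by_cases h : i = j
      · subst h; simp [Pi.single_apply, add_mul]
      · simp [Pi.single_apply, h, add_mul]
    simp only [h1, Finset.sum_add_distrib]
    congr 1
    rw [Finset.sum_ite_eq' Finset.univ j (fun i => k * L i)]
    simp
  -- level additivity along the greedy decomposition
  have hG2 : ∀ a, a ∈ A → lev a = ∑ i, M a i * L i := by
    intro a
    induction a using Nat.strong_induction_on with
    | _ a IH =>
      intro ha
      by_cases h0 : a = 0
      · subst h0
        rw [hM0]
        simpa using hlev0
      · have hne := hidx_ne a ha h0
        set i := (idxSet d g S a).max' hne with hidef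
        have hi := (hidx_mem a i).mp (Finset.max'_mem _ hne)
        obtain ⟨t, htS, hat, hta⟩ := hi
        have hbt : a - g i.succ = t := by omega
        have haA' : g i.succ + t ∈ A := by rw [← hat]; exact ha
        have htA : t ∈ A := hsubA (hgS i.succ) htS haA'
        have hlev_a : lev a = L i + lev t := by
          rw [hat]
          simp only [hLdef]
          exact hlev_add (hgenA i) htA haA'
        have hMa : M a = M t + Pi.single i 1 := by
          rw [hgr_eq0 a, dif_pos hne, ← hidef, hbt]
        rw [hMa, hlev_a, IH t hta htA, hsum_single (M t) i 1]
        omega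
  -- greedy decomposition can remove any used generator
  have hG3 : ∀ a, a ∈ A → ∀ j : Fin d, 1 ≤ M a j →
      (a - g j.succ) ∈ A ∧ g j.succ ≤ a ∧ M a = M (a - g j.succ) + Pi.single j 1 := by
    intro a
    induction a using Nat.strong_induction_on with
    | _ a IH =>
      intro ha j hj
      by_cases h0 : a = 0
      · exfalso
        subst h0
        rw [hM0] at hj
        simp at hj
      · have hne := hidx_ne a ha h0
        set i := (idxSet d g S a).max' hne with hidef
        have hi := (hidx_mem a i).mp (Finset.max'_mem _ hne)
        obtain ⟨t, htS, hat, hta⟩ := hi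
        have hbt : a - g i.succ = t := by omega
        have haA' : g i.succ + t ∈ A := by rw [← hat]; exact ha
        have htA : t ∈ A := hsubA (hgS i.succ) htS haA'
        have hMa : M a = M t + Pi.single i 1 := by
          rw [hgr_eq0 a, dif_pos hne, ← hidef, hbt]
        have hgi : m < g i.succ := hmono (Fin.succ_pos i)
        by_cases hji : j = i
        · subst hji
          refine ⟨by rw [hbt]; exact htA, by omega, by rw [hbt]; exact hMa⟩
        · have hMtj : 1 ≤ M t j := by
            have hcf := congrFun hMa j
            simp only [Pi.add_apply, Pi.single_apply, if_neg hji] at hcf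
            omega
          obtain ⟨ht'A, hle', hMt⟩ := IH t hta htA j hMtj
          have hgj : m < g j.succ := hmono (Fin.succ_pos j)
          have hat' : a - g j.succ = g i.succ + (t - g j.succ) := by omega
          have ht'S : t - g j.succ ∈ S := hAS _ ht'A
          have ha'S : a - g j.succ ∈ S := by rw [hat']; exact hadd (hgS i.succ) ht'S
          have ha'A : a - g j.succ ∈ A := by
            refine hAintro _ ha'S ?_
            intro u hu hequ
            refine hAnot a ha (u + g j.succ) (hadd hu (hgS j.succ)) ?_
            omega
          have hi_mem' : i ∈ idxSet d g S (a - g j.succ) := by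
            rw [hidx_mem]
            exact ⟨t - g j.succ, ht'S, hat', by omega⟩
          have hne' : (idxSet d g S (a - g j.succ)).Nonempty := ⟨i, hi_mem'⟩
          have hmax' : (idxSet d g S (a - g j.succ)).max' hne' = i := by
            apply le_antisymm
            · apply Finset.max'_le
              intro y hy
              rw [hidx_mem] at hy
              obtain ⟨u, huS, hequ, hltu⟩ := hy
              have hgy : m < g y.succ := hmono (Fin.succ_pos y)
              have hyA : y ∈ idxSet d g S a := by
                rw [hidx_mem]
                exact ⟨u + g j.succ, hadd huS (hgS j.succ), by omega, by omega⟩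
              rw [hidef]
              exact Finset.le_max' _ y hyA
            · exact Finset.le_max' _ i hi_mem'
          have hMa' : M (a - g j.succ) = M (t - g j.succ) + Pi.single i 1 := by
            rw [hgr_eq0 (a - g j.succ), dif_pos hne', hmax',
              show a - g j.succ - g i.succ = t - g j.succ by omega]
          refine ⟨ha'A, by omega, ?_⟩
          rw [hMa, hMt, hMa', add_right_comm]
  -- iterated removal
  have hG3k : ∀ (k : ℕ) (a : ℕ), a ∈ A → ∀ j : Fin d, k ≤ M a j →
      ∃ b, b ∈ A ∧ a = b + k * g j.succ ∧ M a = M b + Pi.single j k := by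
    intro k
    induction k with
    | zero =>
      intro a ha j hk
      exact ⟨a, ha, by simp, by simp⟩
    | succ k IHk =>
      intro a ha j hk
      obtain ⟨h1A, h1le, h1eq⟩ := hG3 a ha j (by omega)
      have hk' : k ≤ M (a - g j.succ) j := by
        have hcf := congrFun h1eq j
        simp [Pi.single_apply] at hcf
        omega
      obtain ⟨b, hbA, hbeq, hbM⟩ := IHk (a - g j.succ) h1A j hk'
      refine ⟨b, hbA, ?_, ?_⟩
      · have h2 : (k + 1) * g j.succ = k * g j.succ + g j.succ := by ring
        omega
      · rw [h1eq, hbM, add_assoc, ← Pi.single_add]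
    -- note: Pi.single j (k + 1) vs single k + single 1 order
  -- the key inequality, one generator at a time
  have hcore : ∀ j : Fin d, (∑ a ∈ Af, M a j * L j) ≤ ∑ a ∈ Af, (n0 - lev a) := by
    intro j
    have hLj : 1 ≤ L j := by simp only [hLdef]; exact hgenlev j
    have hkey : ∀ (a v : ℕ), a ∈ A → 1 ≤ v → v ≤ M a j * L j →
        ∃ b, b ∈ A ∧ a = b + ((v + L j - 1) / L j) * g j.succ ∧
          v ≤ ((v + L j - 1) / L j) * L j ∧
          lev a = lev b + ((v + L j - 1) / L j) * L j := by
      intro a v ha hv1 hv2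
      have h5 := Nat.div_add_mod (v + L j - 1) (L j)
      have h6 : (v + L j - 1) % L j < L j := Nat.mod_lt _ (by omega)
      set k := (v + L j - 1) / L j with hkdef
      have hk1 : 1 ≤ k := by
        rw [hkdef]
        exact (Nat.one_le_div_iff (by omega)).mpr (by omega)
      have hkle : k ≤ M a j := by
        have e1 : v + L j - 1 ≤ M a j * L j + (L j - 1) := by omega
        have e2 := Nat.div_le_div_right (c := L j) e1
        have e3 : (M a j * L j + (L j - 1)) / L j = M a j + (L j - 1) / L j := by
          rw [mul_comm]
          exact Nat.mul_add_div (by omega) _ _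
        have e4 : (L j - 1) / L j = 0 := Nat.div_eq_of_lt (by omega)
        omega
      have hvk : v ≤ k * L j := by
        have h7 : L j * k = k * L j := by ring
        omega
      obtain ⟨b, hbA, hbeq, hbM⟩ := hG3k k a ha j hkle
      refine ⟨b, hbA, hbeq, hvk, ?_⟩
      rw [hG2 a ha, hG2 b hbA, hbM, hsum_single (M b) j k]
    have h1 : (∑ a ∈ Af, M a j * L j) = (Af.sigma fun a => Finset.Icc 1 (M a j * L j)).card := by
      rw [Finset.card_sigma]
      exact Finset.sum_congr rfl (fun a _ => by simp [Nat.card_Icc])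
    have h2 : (∑ a ∈ Af, (n0 - lev a)) = (Af.sigma fun a => Finset.Icc 1 (n0 - lev a)).card := by
      rw [Finset.card_sigma]
      exact Finset.sum_congr rfl (fun a _ => by simp [Nat.card_Icc])
    rw [h1, h2]
    apply Finset.card_le_card_of_injOn
      (fun p => ⟨p.1 - ((p.2 + L j - 1) / L j) * g j.succ, p.2⟩)
    · rintro ⟨a, v⟩ hp
      simp only [Finset.mem_coe, Finset.mem_sigma, hmemAf, Finset.mem_Icc] at hp
      obtain ⟨ha, hv1, hv2⟩ := hp
      obtain ⟨b, hbA, hbeq, hvk, hlev⟩ := hkey a v ha hv1 hv2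
      have hble : a - ((v + L j - 1) / L j) * g j.succ = b := by omega
      simp only [Finset.mem_coe, Finset.mem_sigma, hmemAf, Finset.mem_Icc]
      rw [hble]
      have hlevle := hlev_le a ha
      exact ⟨hbA, hv1, by omega⟩
    · rintro ⟨a, v⟩ hp ⟨a2, v2⟩ hp2 heq
      dsimp only at heq
      simp only [Finset.mem_coe, Finset.mem_sigma, hmemAf, Finset.mem_Icc] at hp hp2
      obtain ⟨ha, hv1, hv2⟩ := hp
      obtain ⟨ha2, hv21, hv22⟩ := hp2
      have heq1 := congrArg (fun p : (_ : ℕ) × ℕ => p.1) heq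
      have heq2 := congrArg (fun p : (_ : ℕ) × ℕ => p.2) heq
      dsimp only at heq1 heq2
      subst heq2
      obtain ⟨b, hbA, hbeq, -, -⟩ := hkey a v ha hv1 hv2
      obtain ⟨b2, hb2A, hb2eq, -, -⟩ := hkey a2 v ha2 hv21 hv22
      have : a = a2 := by omega
      subst this
      rfl
  -- ## put everything together
  have hWsum : (∑ a ∈ Af, lev a) = ∑ a ∈ Af, ∑ i, M a i * L i :=
    Finset.sum_congr rfl (fun a ha => hG2 a ((hmemAf a).mp ha))
  have hW2 : (∑ a ∈ Af, lev a) ≤ d * ∑ a ∈ Af, (n0 - lev a) := by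
    rw [hWsum, Finset.sum_comm]
    calc (∑ i : Fin d, ∑ a ∈ Af, M a i * L i) ≤ ∑ _i : Fin d, ∑ a ∈ Af, (n0 - lev a) :=
        Finset.sum_le_sum (fun i _ => hcore i)
      _ = d * ∑ a ∈ Af, (n0 - lev a) := by
        rw [Finset.sum_const, Finset.card_univ, Fintype.card_fin, smul_eq_mul]
  have hRW : (∑ a ∈ Af, (n0 - lev a)) + (∑ a ∈ Af, lev a) = n0 * m := by
    rw [← Finset.sum_add_distrib]
    have h1 : ∀ a ∈ Af, (n0 - lev a) + lev a = n0 := by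
      intro a ha
      have := hlev_le a ((hmemAf a).mp ha)
      omega
    rw [Finset.sum_congr rfl h1, Finset.sum_const, smul_eq_mul, hcard]
    ring
  have hWΩ : (∑ a ∈ Af, lev a) = Ω + ρ := by
    have h1 : ∀ a ∈ Af, lev a = a / m + (a % m + ρ) / m := by
      intro a _
      simp only [hlevdef]
      have hdm := Nat.div_add_mod a m
      conv_lhs => rw [show a + ρ = m * (a / m) + (a % m + ρ) by omega]
      rw [Nat.mul_add_div hgpos]
    rw [Finset.sum_congr rfl h1, Finset.sum_add_distrib]
    have h2 : (∑ a ∈ Af, (a % m + ρ) / m) = ∑ r ∈ Finset.range m, (r + ρ) / m :=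
      hsum_resid (fun r => (r + ρ) / m)
    have h3 : (∑ r ∈ Finset.range m, (r + ρ) / m) = ρ := by
      have h4 : ∀ r ∈ Finset.range m, (r + ρ) / m = if m ≤ r + ρ then 1 else 0 := by
        intro r hr
        rw [Finset.mem_range] at hr
        by_cases h : m ≤ r + ρ
        · rw [if_pos h]
          exact Nat.div_eq_of_lt_le (by omega) (by omega)
        · rw [if_neg h]
          exact Nat.div_eq_of_lt (by omega)
      rw [Finset.sum_congr rfl h4, Finset.sum_boole]
      have h5 : (Finset.range m).filter (fun r => m ≤ r + ρ) = Finset.Ico (m - ρ) m := by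
        ext x
        simp only [Finset.mem_filter, Finset.mem_range, Finset.mem_Ico]
        omega
      rw [h5, Nat.card_Ico]
      simp only [Nat.cast_id]
      omega
    rw [h2, h3, hΩcard, hgap_sum]
  -- final arithmetic
  have hfinal : (d + 1) * (Ω + ρ) ≤ d * (n0 * m) := by
    have h1 : Ω + ρ ≤ d * ∑ a ∈ Af, (n0 - lev a) := by
      rw [← hWΩ]; exact hW2
    have h2 : (Ω + ρ) + (∑ a ∈ Af, (n0 - lev a)) = n0 * m := by
      rw [← hWΩ]; omega
    have h3 : (d + 1) * (Ω + ρ) = d * (Ω + ρ) + (Ω + ρ) := by ring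
    have h4 : d * (n0 * m) = d * ((Ω + ρ) + (∑ a ∈ Af, (n0 - lev a))) := by rw [h2]
    have h5 : d * ((Ω + ρ) + (∑ a ∈ Af, (n0 - lev a)))
        = d * (Ω + ρ) + d * (∑ a ∈ Af, (n0 - lev a)) := by ring
    omega
  have h6 : (d + 1) * (Ω + ρ) = (d + 1) * Ω + ((d + 1) * ρ) := by ring
  have h7 : d * (n0 * m) = d * c + d * ρ := by rw [hqmeq]; ring
  have h8 : (d + 1) * ρ = d * ρ + ρ := by ring
  omega
end
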